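/- arXiv:1209.4979 — 8 statements merged into one kernel-verified Lean document; each statement's English description precedes it below -/
import Mathlib

section
/- In the (A_n, C_k) lattice, if l = C_0 + Σ_{i=1}^n a_i C_i with integer coefficients satisfies ⟨l, l⟩ = −1, and α lies in the ℤ-span of C_1, …, C_n with ⟨α, α⟩ = −2, then |⟨l, α⟩| ≤ 1. -/
/-- The Gram matrix of the `(Aₙ, C_k)` lattice: basis `C₀, C₁, …, Cₙ` (index `i : Fin (n+1)`
corresponds to `Cᵢ`), with `⟨C₀,C₀⟩ = -1`, `⟨Cᵢ,Cᵢ⟩ = -2` for `1 ≤ i ≤ n`,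
`⟨Cᵢ,Cᵢ₊₁⟩ = 1` for `1 ≤ i ≤ n-1`, `⟨C₀,C_k⟩ = 1`, and all other off-diagonal entries `0`. -/
def gramA (n k : ℕ) (i j : Fin (n + 1)) : ℤ :=
  if i = j then (if (i : ℕ) = 0 then -1 else -2)
  else if (1 ≤ (i : ℕ) ∧ (j : ℕ) = (i : ℕ) + 1) ∨ (1 ≤ (j : ℕ) ∧ (i : ℕ) = (j : ℕ) + 1)
      ∨ ((i : ℕ) = 0 ∧ (j : ℕ) = k) ∨ ((j : ℕ) = 0 ∧ (i : ℕ) = k) then 1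
  else 0

/-- The symmetric bilinear form associated to a Gram matrix, on coordinate vectors. -/
def qform {m : ℕ} (g : Fin m → Fin m → ℤ) (x y : Fin m → ℤ) : ℤ :=
  ∑ i, ∑ j, x i * g i j * y j

/-- The class `l(a) = C₀ + ∑ aᵢ Cᵢ`, as a coordinate vector. -/
def lA (n : ℕ) (a : Fin n → ℤ) : Fin (n + 1) → ℤ := Fin.cons 1 a

/-- An element `α = ∑ bᵢ Cᵢ` of the ℤ-span of `C₁, …, Cₙ`, as a coordinate vector
(coefficient `0` on `C₀`). -/
def spanA (n : ℕ) (b : Fin n → ℤ) : Fin (n + 1) → ℤ := Fin.cons 0 b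

/-- Extension of a coefficient vector `a : Fin n → ℤ` (coefficients of `C₁,…,Cₙ`) to `ℕ`,
with `extC n a j = a_{j}` for `1 ≤ j ≤ n` and `0` otherwise. -/
def extC (n : ℕ) (a : Fin n → ℤ) : ℕ → ℤ :=
  fun j => if h : 1 ≤ j ∧ j ≤ n then a ⟨j - 1, by omega⟩ else 0

/-- The `Aₙ` Gram matrix entries as a function on `ℕ`. -/
def gA (i j : ℕ) : ℤ :=
  if i = j then -2 else if j = i + 1 ∨ i = j + 1 then 1 else 0

/-- Difference sequence. -/
def dC (n : ℕ) (a : Fin n → ℤ) (j : ℕ) : ℤ := extC n a (j + 1) - extC n a j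

lemma extC_zero (n : ℕ) (a : Fin n → ℤ) : extC n a 0 = 0 := by
  simp [extC]

lemma extC_succ (n : ℕ) (a : Fin n → ℤ) (i : Fin n) : extC n a ((i : ℕ) + 1) = a i := by
  have h : 1 ≤ (i : ℕ) + 1 ∧ (i : ℕ) + 1 ≤ n := ⟨by omega, i.isLt⟩
  rw [extC]
  rw [dif_pos h]
  exact congrArg a (Fin.ext (by simp))

lemma extC_top (n : ℕ) (a : Fin n → ℤ) : extC n a (n + 1) = 0 := by
  rw [extC, dif_neg (by omega)]

lemma sumA (X Y : ℕ → ℤ) (hX : X 0 = 0) (hY : Y 0 = 0) (m : ℕ) :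
    ∑ i ∈ Finset.range m, ∑ j ∈ Finset.range m, X (i+1) * gA (i+1) (j+1) * Y (j+1)
      = -(∑ j ∈ Finset.range m, (X (j+1) - X j) * (Y (j+1) - Y j)) - X m * Y m := by
  induction m with
  | zero => simp [hX]
  | succ m ih =>
    rw [Finset.sum_range_succ]
    have inner_split : ∀ i, ∑ j ∈ Finset.range (m+1), X (i+1) * gA (i+1) (j+1) * Y (j+1)
        = (∑ j ∈ Finset.range m, X (i+1) * gA (i+1) (j+1) * Y (j+1))
          + X (i+1) * gA (i+1) (m+1) * Y (m+1) := fun i => Finset.sum_range_succ _ m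
    rw [Finset.sum_congr rfl fun i _ => inner_split i, Finset.sum_add_distrib,
      inner_split m]
    have hdiag : gA (m+1) (m+1) = -2 := by
      rw [gA, if_pos rfl]
    have hcol : ∑ i ∈ Finset.range m, X (i+1) * gA (i+1) (m+1) * Y (m+1)
        = X m * Y (m+1) := by
      rcases Nat.eq_zero_or_pos m with hm | hm
      · subst hm; simp [hX]
      · rw [Finset.sum_eq_single (m - 1)]
        · rw [show gA (m-1+1) (m+1) = 1 by rw [gA, if_neg (by omega), if_pos (by omega)],
            show m - 1 + 1 = m from by omega]
          ring
        · intro j hj hne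
          simp only [Finset.mem_range] at hj
          rw [show gA (j+1) (m+1) = 0 by rw [gA, if_neg (by omega), if_neg (by omega)]]
          ring
        · intro h
          exact absurd (Finset.mem_range.mpr (by omega)) h
    have hrow : ∑ j ∈ Finset.range m, X (m+1) * gA (m+1) (j+1) * Y (j+1)
        = X (m+1) * Y m := by
      rcases Nat.eq_zero_or_pos m with hm | hm
      · subst hm; simp [hY]
      · rw [Finset.sum_eq_single (m - 1)]
        · rw [show gA (m+1) (m-1+1) = 1 by rw [gA, if_neg (by omega), if_pos (by omega)],
            show m - 1 + 1 = m from by omega]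
          ring
        · intro j hj hne
          simp only [Finset.mem_range] at hj
          rw [show gA (m+1) (j+1) = 0 by rw [gA, if_neg (by omega), if_neg (by omega)]]
          ring
        · intro h
          exact absurd (Finset.mem_range.mpr (by omega)) h
    rw [hcol, hrow, hdiag, ih, Finset.sum_range_succ]
    ring

lemma gram00 (n k : ℕ) : gramA n k 0 0 = -1 := by
  simp [gramA]

lemma gram0s (n k : ℕ) (j : Fin n) :
    gramA n k 0 j.succ = if (j : ℕ) + 1 = k then 1 else 0 := by
  have hj := Fin.is_lt ‹Fin n›
  simp only [gramA, Fin.ext_iff, Fin.val_succ, Fin.val_zero]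
  split_ifs <;> first | rfl | omega | simp_all | (exfalso; omega)

lemma grams0 (n k : ℕ) (i : Fin n) :
    gramA n k i.succ 0 = if (i : ℕ) + 1 = k then 1 else 0 := by
  have hj := Fin.is_lt ‹Fin n›
  simp only [gramA, Fin.ext_iff, Fin.val_succ, Fin.val_zero]
  split_ifs <;> first | rfl | omega | simp_all | (exfalso; omega)

lemma gramss (n k : ℕ) (i j : Fin n) :
    gramA n k i.succ j.succ = gA ((i : ℕ) + 1) ((j : ℕ) + 1) := by
  have hi := i.is_lt
  have hj := j.is_lt
  simp only [gramA, gA, Fin.ext_iff, Fin.val_succ]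
  split_ifs <;> first | rfl | omega | simp_all | (exfalso; omega)

lemma qform_eval (n k : ℕ) (hk1 : 1 ≤ k) (hkn : k ≤ n) (x0 y0 : ℤ) (a b : Fin n → ℤ) :
    qform (gramA n k) (Fin.cons x0 a) (Fin.cons y0 b)
      = -(x0 * y0) + x0 * extC n b k + extC n a k * y0
        - ∑ j ∈ Finset.range (n+1), dC n a j * dC n b j := by
  have e1 : ∑ j : Fin n, x0 * (if (j : ℕ) + 1 = k then 1 else 0) * b j
      = x0 * extC n b k := by
    have hpt : ∀ j : Fin n, x0 * (if (j : ℕ) + 1 = k then 1 else 0) * b j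
        = (fun m => if m = k - 1 then x0 * extC n b (m+1) else 0) ((j : ℕ)) := by
      intro j
      by_cases h : (j : ℕ) + 1 = k
      · simp only [if_pos h, if_pos (show (j:ℕ) = k - 1 by omega), extC_succ]; ring
      · simp only [if_neg h, if_neg (show ¬((j:ℕ) = k - 1) by omega)]; ring
    rw [Finset.sum_congr rfl fun j _ => hpt j,
      Fin.sum_univ_eq_sum_range (fun m => if m = k - 1 then x0 * extC n b (m+1) else 0) n,
      Finset.sum_ite_eq' (Finset.range n) (k-1),
      if_pos (Finset.mem_range.mpr (by omega)), show k - 1 + 1 = k from by omega]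
  have e2 : ∑ i : Fin n, a i * (if (i : ℕ) + 1 = k then 1 else 0) * y0
      = extC n a k * y0 := by
    have hpt : ∀ i : Fin n, a i * (if (i : ℕ) + 1 = k then 1 else 0) * y0
        = (fun m => if m = k - 1 then extC n a (m+1) * y0 else 0) ((i : ℕ)) := by
      intro i
      by_cases h : (i : ℕ) + 1 = k
      · simp only [if_pos h, if_pos (show (i:ℕ) = k - 1 by omega), extC_succ]; ring
      · simp only [if_neg h, if_neg (show ¬((i:ℕ) = k - 1) by omega)]; ring
    rw [Finset.sum_congr rfl fun i _ => hpt i,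
      Fin.sum_univ_eq_sum_range (fun m => if m = k - 1 then extC n a (m+1) * y0 else 0) n,
      Finset.sum_ite_eq' (Finset.range n) (k-1),
      if_pos (Finset.mem_range.mpr (by omega)), show k - 1 + 1 = k from by omega]
  have e3 : (∑ i : Fin n, ∑ j : Fin n, a i * gA ((i : ℕ) + 1) ((j : ℕ) + 1) * b j)
      = -(∑ j ∈ Finset.range (n+1), dC n a j * dC n b j) := by
    have hpt : ∀ i j : Fin n, a i * gA ((i : ℕ) + 1) ((j : ℕ) + 1) * b j
        = extC n a ((i : ℕ) + 1) * gA ((i : ℕ) + 1) ((j : ℕ) + 1) * extC n b ((j : ℕ) + 1) := by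
      intro i j; rw [extC_succ, extC_succ]
    have h2 : (∑ i : Fin n, ∑ j : Fin n, a i * gA ((i : ℕ) + 1) ((j : ℕ) + 1) * b j)
        = ∑ i ∈ Finset.range n, ∑ j ∈ Finset.range n,
            extC n a (i+1) * gA (i+1) (j+1) * extC n b (j+1) := by
      rw [Finset.sum_congr rfl fun i _ => Finset.sum_congr rfl fun j _ => hpt i j,
        Fin.sum_univ_eq_sum_range (fun p => ∑ j : Fin n,
          extC n a (p+1) * gA (p+1) ((j : ℕ)+1) * extC n b ((j : ℕ)+1))]
      exact Finset.sum_congr rfl fun i _ =>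
        Fin.sum_univ_eq_sum_range (fun q => extC n a (i+1) * gA (i+1) (q+1) * extC n b (q+1)) n
    rw [h2, sumA (extC n a) (extC n b) (extC_zero n a) (extC_zero n b) n]
    rw [show (∑ j ∈ Finset.range (n+1), dC n a j * dC n b j)
        = ∑ j ∈ Finset.range (n+1), (extC n a (j+1) - extC n a j) * (extC n b (j+1) - extC n b j)
        from rfl]
    rw [Finset.sum_range_succ, extC_top, extC_top]
    ring
  simp only [qform, Fin.sum_univ_succ, Fin.cons_zero, Fin.cons_succ, gram00, gram0s,
    grams0, gramss, Finset.sum_add_distrib]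
  rw [e1, e2, e3]
  ring

lemma tel (n : ℕ) (a : Fin n → ℤ) (m : ℕ) :
    ∑ j ∈ Finset.range m, dC n a j = extC n a m := by
  have : ∑ j ∈ Finset.range m, (extC n a (j+1) - extC n a j)
      = extC n a m - extC n a 0 := Finset.sum_range_sub (extC n a) m
  rw [extC_zero] at this
  simpa [dC] using this

lemma abs_le_sq (d : ℤ) : |d| ≤ d * d := by
  rcases eq_or_ne d 0 with h | h
  · simp [h]
  · have h1 : 1 ≤ |d| := Int.one_le_abs h
    calc |d| = |d| * 1 := by ring
    _ ≤ |d| * |d| := by nlinarith [abs_nonneg d]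
    _ = d * d := abs_mul_abs_self d

/-- in the `(Aₙ, C_k)` lattice, if `l = C₀ + ∑ aᵢ Cᵢ` satisfies `⟨l,l⟩ = -1`
and `α` lies in the ℤ-span of `C₁, …, Cₙ` with `⟨α,α⟩ = -2`, then `|⟨l,α⟩| ≤ 1`. -/
theorem stmt1 (n k : ℕ) (hn : 1 ≤ n) (hk1 : 1 ≤ k) (hkn : k ≤ n)
    (a b : Fin n → ℤ)
    (hl : qform (gramA n k) (lA n a) (lA n a) = -1)
    (hα : qform (gramA n k) (spanA n b) (spanA n b) = -2) :
    |qform (gramA n k) (lA n a) (spanA n b)| ≤ 1 := by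
  simp only [lA, spanA] at hl hα ⊢
  rw [qform_eval n k hk1 hkn 1 1 a a] at hl
  rw [qform_eval n k hk1 hkn 0 0 b b] at hα
  rw [qform_eval n k hk1 hkn 1 0 a b]
  -- notations
  have hSAA : ∑ j ∈ Finset.range (n+1), dC n a j * dC n a j = 2 * extC n a k := by
    linarith
  have hSBB : ∑ j ∈ Finset.range (n+1), dC n b j * dC n b j = 2 := by
    linarith
  have hcut : ∀ f : ℕ → ℤ, ∑ j ∈ Finset.range (n+1), (if j < k then f j else 0)
      = ∑ j ∈ Finset.range k, f j := by
    intro f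
    rw [← Finset.sum_subset (Finset.range_subset_range.mpr (show k ≤ n + 1 by omega))
        (fun j _ hj => if_neg (fun h => hj (Finset.mem_range.mpr h)))]
    exact Finset.sum_congr rfl fun j hj => if_pos (Finset.mem_range.mp hj)
  have htel0A : ∑ j ∈ Finset.range (n+1), dC n a j = 0 := by
    rw [tel, extC_top]
  have htel0B : ∑ j ∈ Finset.range (n+1), dC n b j = 0 := by
    rw [tel, extC_top]
  set T : ℕ → ℤ := fun j => dC n a j - (if j < k then 1 else 0) with hT
  have key0 : ∑ j ∈ Finset.range (n+1), T j * (T j + 1) = 0 := by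
    have expand : ∀ j, T j * (T j + 1)
        = dC n a j * dC n a j + dC n a j - (if j < k then 2 * dC n a j else 0) := by
      intro j
      by_cases h : j < k
      · simp only [hT, if_pos h]; ring
      · simp only [hT, if_neg h]; ring
    rw [Finset.sum_congr rfl fun j _ => expand j, Finset.sum_sub_distrib,
      Finset.sum_add_distrib, hcut (fun j => 2 * dC n a j), ← Finset.mul_sum,
      tel n a k]
    linarith
  have hTval : ∀ j ∈ Finset.range (n+1), T j = 0 ∨ T j = -1 := by
    have nn : ∀ j ∈ Finset.range (n+1), 0 ≤ T j * (T j + 1) := by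
      intro j _
      rcases le_or_gt 0 (T j) with h | h
      · exact mul_nonneg h (by linarith)
      · nlinarith
    intro j hj
    have h0 : T j * (T j + 1) = 0 :=
      (Finset.sum_eq_zero_iff_of_nonneg nn).mp key0 j hj
    rcases mul_eq_zero.mp h0 with h | h
    · left; exact h
    · right; omega
  have h2M : 2 * (extC n b k - ∑ j ∈ Finset.range (n+1), dC n a j * dC n b j)
      = -(∑ j ∈ Finset.range (n+1), (2 * T j + 1) * dC n b j) := by
    have expand : ∀ j, (2 * T j + 1) * dC n b j
        = 2 * (dC n a j * dC n b j) + dC n b j - (if j < k then 2 * dC n b j else 0) := by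
      intro j
      by_cases h : j < k
      · simp only [hT, if_pos h]; ring
      · simp only [hT, if_neg h]; ring
    rw [Finset.sum_congr rfl fun j _ => expand j, Finset.sum_sub_distrib,
      Finset.sum_add_distrib, hcut (fun j => 2 * dC n b j), ← Finset.mul_sum,
      ← Finset.mul_sum, tel n b k]
    linarith
  have habs : |∑ j ∈ Finset.range (n+1), (2 * T j + 1) * dC n b j| ≤ 2 := by
    calc |∑ j ∈ Finset.range (n+1), (2 * T j + 1) * dC n b j|
        ≤ ∑ j ∈ Finset.range (n+1), |(2 * T j + 1) * dC n b j| :=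
          Finset.abs_sum_le_sum_abs _ _
      _ ≤ ∑ j ∈ Finset.range (n+1), dC n b j * dC n b j := by
          apply Finset.sum_le_sum
          intro j hj
          rw [abs_mul]
          rcases hTval j hj with h | h <;>
            · rw [h]
              norm_num
              exact abs_le_sq _
      _ = 2 := hSBB
  have hfin : |2 * (extC n b k - ∑ j ∈ Finset.range (n+1), dC n a j * dC n b j)| ≤ 2 := by
    rw [h2M, abs_neg]; exact habs
  rw [abs_mul] at hfin
  norm_num at hfin
  have hgoal : -(1 * 0) + 1 * extC n b k + extC n a k * 0
      - ∑ j ∈ Finset.range (n+1), dC n a j * dC n b j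
      = extC n b k - ∑ j ∈ Finset.range (n+1), dC n a j * dC n b j := by ring
  rw [hgoal]
  rcases abs_le.mp hfin with ⟨h1, h2⟩
  rw [abs_le]
  constructor <;> linarith
end

section
/- Let M be a ℤ-module with a symmetric bilinear form b, let C_0, C_1, …, C_n ∈ M and 1 ≤ k ≤ n satisfy b(C_0, C_0) = −1, b(C_0, C_k) = 1, and b(C_0, C_i) = 0 for i ≠ k (1 ≤ i ≤ n). Suppose l = C_0 + Σ_{i=1}^n a_i C_i with all a_i nonnegative integers, a_k ≥ 1, b(l, l) = −1, and b(l, C_i) ≥ −1 for every 1 ≤ i ≤ n. Then there exists an index i with b(l, C_i) = −1. -/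
/-- Lemma 3.9 of the paper, as a pure lattice fact: let `M` be a ℤ-module with a
symmetric bilinear form `b`, let `C₀, C₁, …, Cₙ ∈ M` and `1 ≤ k ≤ n` with `b(C₀,C₀) = -1`,
`b(C₀,C_k) = 1` and `b(C₀,Cᵢ) = 0` for `i ≠ k` (`1 ≤ i ≤ n`).  If
`l = C₀ + ∑_{i=1}^n aᵢ Cᵢ` with all `aᵢ` nonnegative integers, `a_k ≥ 1`, `b(l,l) = -1`,
and `b(l,Cᵢ) ≥ -1` for every `1 ≤ i ≤ n`, then `b(l,Cᵢ) = -1` for some `i`. -/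
theorem stmt2 (M : Type*) [AddCommGroup M] [Module ℤ M]
    (b : M →ₗ[ℤ] M →ₗ[ℤ] ℤ) (hsymm : ∀ x y : M, b x y = b y x)
    (n k : ℕ) (hk1 : 1 ≤ k) (hkn : k ≤ n)
    (C₀ : M) (C : ℕ → M) (a : ℕ → ℤ)
    (hb00 : b C₀ C₀ = -1) (hb0k : b C₀ (C k) = 1)
    (hb0i : ∀ i, 1 ≤ i → i ≤ n → i ≠ k → b C₀ (C i) = 0)
    (ha : ∀ i, 1 ≤ i → i ≤ n → 0 ≤ a i) (hak : 1 ≤ a k)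
    (l : M) (hl : l = C₀ + ∑ i ∈ Finset.Icc 1 n, a i • C i)
    (hll : b l l = -1)
    (hlC : ∀ i, 1 ≤ i → i ≤ n → -1 ≤ b l (C i)) :
    ∃ i, 1 ≤ i ∧ i ≤ n ∧ b l (C i) = -1 := by
  by_contra h
  push_neg at h
  have hlC0 : b l C₀ = a k - 1 := by
    rw [hl]
    simp only [map_add, map_sum, map_smul, LinearMap.add_apply, LinearMap.sum_apply,
      LinearMap.smul_apply, smul_eq_mul, hb00]
    rw [Finset.sum_eq_single k]
    · rw [hsymm]; simp [hb0k]; ring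
    · intro i hi hik
      rw [Finset.mem_Icc] at hi
      rw [hsymm]; simp [hb0i i hi.1 hi.2 hik]
    · intro hk; exact absurd (Finset.mem_Icc.mpr ⟨hk1, hkn⟩) hk
  have hsum : b l l = b l C₀ + ∑ i ∈ Finset.Icc 1 n, a i * b l (C i) := by
    nth_rewrite 2 [hl]
    simp [smul_eq_mul]
  have hpos : 0 ≤ ∑ i ∈ Finset.Icc 1 n, a i * b l (C i) := by
    apply Finset.sum_nonneg
    intro i hi
    rw [Finset.mem_Icc] at hi
    have h1 := hlC i hi.1 hi.2
    have h2 := h i hi.1 hi.2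
    exact mul_nonneg (ha i hi.1 hi.2) (by omega)
  rw [hll, hlC0] at hsum
  linarith
end

section
/- In the (A_n, C_1) lattice, the set I = { a ∈ ℤ^n : a_i ≥ 0 for all i and ⟨l(a), l(a)⟩ = −1 } consists exactly of the n+1 tuples (1, …, 1, 0, …, 0) having m ones followed by n−m zeros for 0 ≤ m ≤ n; in particular |I| = n + 1. -/
/-- The set `I` of coefficient tuples `a ∈ ℤⁿ` with all `aᵢ ≥ 0` and `⟨l(a), l(a)⟩ = -1`. -/
def IA (n k : ℕ) : Set (Fin n → ℤ) :=
  {a | (∀ i, 0 ≤ a i) ∧ qform (gramA n k) (lA n a) (lA n a) = -1}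

def Gnat (i j : ℕ) : ℤ :=
  if i = j then (if i = 0 then -1 else -2)
  else if (1 ≤ i ∧ j = i + 1) ∨ (1 ≤ j ∧ i = j + 1)
      ∨ (i = 0 ∧ j = 1) ∨ (j = 0 ∧ i = 1) then 1
  else 0

lemma Gnat_far {i j : ℕ} (h : i + 2 ≤ j) : Gnat i j = 0 := by
  unfold Gnat; rw [if_neg (by omega), if_neg (by omega)]

lemma Gnat_far' {i j : ℕ} (h : j + 2 ≤ i) : Gnat i j = 0 := by
  unfold Gnat; rw [if_neg (by omega), if_neg (by omega)]

lemma Gnat_adj (N : ℕ) : Gnat N (N + 1) = 1 := by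
  unfold Gnat; rw [if_neg (by omega), if_pos (by omega)]

lemma Gnat_adj' (N : ℕ) : Gnat (N + 1) N = 1 := by
  unfold Gnat; rw [if_neg (by omega), if_pos (by omega)]

lemma Gnat_diag (N : ℕ) : Gnat (N + 1) (N + 1) = -2 := by
  unfold Gnat; rw [if_pos rfl, if_neg (by omega)]

lemma keysum (b : ℕ → ℤ) (N : ℕ) :
    ∑ i ∈ Finset.range (N + 1), ∑ j ∈ Finset.range (N + 1), b i * Gnat i j * b j
      = -(∑ i ∈ Finset.range N, (b i - b (i + 1)) ^ 2) - (b N) ^ 2 := by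
  induction N with
  | zero => simp [Gnat]; ring
  | succ N ih =>
      have hrow : ∑ i ∈ Finset.range (N + 1), b i * Gnat i (N + 1) * b (N + 1)
          = b N * b (N + 1) := by
        rw [Finset.sum_range_succ, Gnat_adj,
          Finset.sum_eq_zero (fun i hi => by
            rw [Gnat_far (by simp at hi; omega)]; ring)]
        ring
      have hcol : ∑ j ∈ Finset.range (N + 1), b (N + 1) * Gnat (N + 1) j * b j
          = b (N + 1) * b N := by
        rw [Finset.sum_range_succ, Gnat_adj',
          Finset.sum_eq_zero (fun j hj => by
            rw [Gnat_far' (by simp at hj; omega)]; ring)]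
        ring
      rw [Finset.sum_range_succ]
      have : ∀ i ∈ Finset.range (N+1), ∑ j ∈ Finset.range (N + 2), b i * Gnat i j * b j
          = (∑ j ∈ Finset.range (N + 1), b i * Gnat i j * b j) + b i * Gnat i (N+1) * b (N+1) :=
        fun i _ => Finset.sum_range_succ _ _
      rw [Finset.sum_congr rfl this, Finset.sum_add_distrib, hrow,
        Finset.sum_range_succ _ (N+1), hcol, ih, Gnat_diag,
        Finset.sum_range_succ (fun i => (b i - b (i + 1)) ^ 2) N]
      ring

/-- ℕ-extension of `lA n a` by zero. -/
def bvec (n : ℕ) (a : Fin n → ℤ) (i : ℕ) : ℤ :=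
  if h : i < n + 1 then lA n a ⟨i, h⟩ else 0

lemma bvec_zero (n : ℕ) (a : Fin n → ℤ) : bvec n a 0 = 1 := by
  simp [bvec, lA]

lemma bvec_succ (n : ℕ) (a : Fin n → ℤ) (i : Fin n) : bvec n a ((i : ℕ) + 1) = a i := by
  have h : (i : ℕ) + 1 < n + 1 := by omega
  show (if h : (i : ℕ) + 1 < n + 1 then lA n a ⟨(i : ℕ) + 1, h⟩ else 0) = a i
  rw [dif_pos h]
  have : (⟨(i : ℕ) + 1, h⟩ : Fin (n + 1)) = Fin.succ ⟨(i : ℕ), i.isLt⟩ := rfl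
  rw [this, lA, Fin.cons_succ, Fin.eta]

lemma bvec_big (n : ℕ) (a : Fin n → ℤ) {i : ℕ} (h : n + 1 ≤ i) : bvec n a i = 0 :=
  dif_neg (by omega)

lemma gram_eq (n : ℕ) (i j : Fin (n + 1)) : gramA n 1 i j = Gnat (i : ℕ) (j : ℕ) := by
  simp only [gramA, Gnat, Fin.ext_iff]

lemma qform_eq (n : ℕ) (a : Fin n → ℤ) :
    qform (gramA n 1) (lA n a) (lA n a)
      = -(∑ i ∈ Finset.range (n + 1), (bvec n a i - bvec n a (i + 1)) ^ 2) := by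
  have h1 : qform (gramA n 1) (lA n a) (lA n a)
      = ∑ i ∈ Finset.range (n + 1), ∑ j ∈ Finset.range (n + 1),
          bvec n a i * Gnat i j * bvec n a j := by
    rw [qform, ← Fin.sum_univ_eq_sum_range]
    refine Finset.sum_congr rfl fun i _ => ?_
    rw [← Fin.sum_univ_eq_sum_range]
    refine Finset.sum_congr rfl fun j _ => ?_
    have hb : ∀ k : Fin (n + 1), bvec n a (k : ℕ) = lA n a k := by
      intro k; rw [bvec, dif_pos k.isLt]
    rw [gram_eq, hb, hb]
  rw [h1, keysum, Finset.sum_range_succ, bvec_big n a (le_refl (n+1))]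
  ring

lemma mem_IA_iff (n : ℕ) (a : Fin n → ℤ) :
    a ∈ IA n 1 ↔ ∃ m ≤ n, a = fun i : Fin n => if (i : ℕ) < m then (1 : ℤ) else 0 := by
  constructor
  · rintro ⟨hpos, hq⟩
    set d : ℕ → ℤ := fun i => bvec n a i - bvec n a (i + 1) with hd
    have hq2 : ∑ i ∈ Finset.range (n + 1), (d i) ^ 2 = 1 := by
      have := qform_eq n a
      rw [hq] at this
      linarith [this]
    have hsum : ∑ i ∈ Finset.range (n + 1), d i = 1 := by
      rw [hd, Finset.sum_range_sub' (bvec n a), bvec_zero, bvec_big n a (le_refl (n + 1))]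
      ring
    have h0 : ∑ i ∈ Finset.range (n + 1), ((d i) ^ 2 - d i) = 0 := by
      rw [Finset.sum_sub_distrib, hq2, hsum]; ring
    have hnn : ∀ i ∈ Finset.range (n + 1), 0 ≤ (d i) ^ 2 - d i := by
      intro i _
      rcases le_or_gt (d i) 0 with h | h
      · nlinarith
      · nlinarith [Int.add_one_le_iff.mpr h]
    have hdeq := (Finset.sum_eq_zero_iff_of_nonneg hnn).mp h0
    have hd01 : ∀ i ∈ Finset.range (n + 1), d i = 0 ∨ d i = 1 := by
      intro i hi
      have h1 := hdeq i hi
      have h2 : d i * (d i - 1) = 0 := by nlinarith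
      rcases mul_eq_zero.mp h2 with h | h
      · exact Or.inl h
      · right; linarith
    obtain ⟨m, hmmem, hdm⟩ :=
      Finset.exists_ne_zero_of_sum_ne_zero (s := Finset.range (n + 1)) (f := d)
        (by rw [hsum]; norm_num)
    have hdm1 : d m = 1 := (hd01 m hmmem).resolve_left hdm
    have hmn : m ≤ n := by have := Finset.mem_range.mp hmmem; omega
    have herase : ∑ j ∈ (Finset.range (n + 1)).erase m, d j = 0 := by
      have := Finset.add_sum_erase (Finset.range (n + 1)) d hmmem
      rw [hsum, hdm1] at this; linarith
    have hothers : ∀ j ∈ Finset.range (n + 1), j ≠ m → d j = 0 := by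
      intro j hj hjm
      have hmem : j ∈ (Finset.range (n + 1)).erase m := Finset.mem_erase.mpr ⟨hjm, hj⟩
      refine (Finset.sum_eq_zero_iff_of_nonneg ?_).mp herase j hmem
      intro i hi
      rcases hd01 i (Finset.mem_of_mem_erase hi) with h | h <;> rw [h] <;> norm_num
    have hbform : ∀ i, i ≤ n + 1 → bvec n a i = if i ≤ m then 1 else 0 := by
      intro i
      induction i with
      | zero => intro _; rw [bvec_zero, if_pos (Nat.zero_le m)]
      | succ i ih =>
          intro hi
          have hbi := ih (by omega)
          have hdi : d i = if i = m then 1 else 0 := by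
            by_cases h : i = m
            · rw [if_pos h, h, hdm1]
            · rw [if_neg h]; exact hothers i (Finset.mem_range.mpr (by omega)) h
          have hstep : bvec n a (i + 1) = bvec n a i - d i := by rw [hd]; ring
          rw [hstep, hbi, hdi]
          split_ifs <;> omega
    refine ⟨m, hmn, ?_⟩
    funext i
    have h1 : a i = bvec n a ((i : ℕ) + 1) := (bvec_succ n a i).symm
    rw [h1, hbform ((i : ℕ) + 1) (by omega)]
    split_ifs <;> omega
  · rintro ⟨m, hm, rfl⟩
    constructor
    · intro i; dsimp only; split_ifs <;> norm_num
    · set a : Fin n → ℤ := fun i : Fin n => if (i : ℕ) < m then (1 : ℤ) else 0 with ha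
      have hbf : ∀ i, bvec n a i = if i ≤ m then 1 else 0 := by
        intro i
        match i with
        | 0 => rw [bvec_zero, if_pos (Nat.zero_le m)]
        | (j + 1) =>
            by_cases h : j + 1 < n + 1
            · have hj : j < n := by omega
              have := bvec_succ n a ⟨j, hj⟩
              rw [show ((⟨j, hj⟩ : Fin n) : ℕ) = j from rfl] at this
              rw [this, ha]
              dsimp only
              by_cases h' : j < m
              · rw [if_pos h', if_pos (by omega)]
              · rw [if_neg h', if_neg (by omega)]
            · rw [bvec_big n a (by omega), if_neg (by omega)]
      have hS : ∑ i ∈ Finset.range (n + 1), (bvec n a i - bvec n a (i + 1)) ^ 2 = 1 := by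
        have hterm : ∀ i ∈ Finset.range (n + 1),
            (bvec n a i - bvec n a (i + 1)) ^ 2 = if i = m then 1 else 0 := by
          intro i _
          rw [hbf, hbf]
          by_cases h : i = m
          · subst h; rw [if_pos rfl, if_pos le_rfl, if_neg (by omega)]; ring
          · rw [if_neg h]
            rcases Nat.lt_or_ge i m with h' | h'
            · rw [if_pos (by omega), if_pos (by omega)]; ring
            · rw [if_neg (by omega), if_neg (by omega)]; ring
        rw [Finset.sum_congr rfl hterm, Finset.sum_ite_eq' (Finset.range (n + 1)) m fun _ => (1 : ℤ),
          if_pos (Finset.mem_range.mpr (by omega))]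
      rw [qform_eq, hS]

/-- in the `(Aₙ, C₁)` lattice, the set `I` consists exactly of the `n+1` tuples
`(1,…,1,0,…,0)` having `m` ones followed by `n-m` zeros for `0 ≤ m ≤ n`; in particular
`|I| = n + 1`. -/
theorem stmt3 (n : ℕ) (hn : 1 ≤ n) :
    IA n 1 = {a : Fin n → ℤ | ∃ m ≤ n, a = fun i : Fin n => if (i : ℕ) < m then (1 : ℤ) else 0}
    ∧ (IA n 1).ncard = n + 1 := by
  have hset : IA n 1
      = {a : Fin n → ℤ | ∃ m ≤ n, a = fun i : Fin n => if (i : ℕ) < m then (1 : ℤ) else 0} := by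
    ext a; exact mem_IA_iff n a
  refine ⟨hset, ?_⟩
  have himg : {a : Fin n → ℤ | ∃ m ≤ n, a = fun i : Fin n => if (i : ℕ) < m then (1 : ℤ) else 0}
      = (fun m : ℕ => fun i : Fin n => if (i : ℕ) < m then (1 : ℤ) else 0) '' Set.Iic n := by
    ext a
    simp only [Set.mem_setOf_eq, Set.mem_image, Set.mem_Iic]
    constructor
    · rintro ⟨m, hm, rfl⟩; exact ⟨m, hm, rfl⟩
    · rintro ⟨m, hm, rfl⟩; exact ⟨m, hm, rfl⟩
  have hinj : Set.InjOn (fun m : ℕ => fun i : Fin n => if (i : ℕ) < m then (1 : ℤ) else 0)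
      (Set.Iic n) := by
    intro m1 h1 m2 h2 heq
    by_contra hne
    rw [Set.mem_Iic] at h1 h2
    rcases Nat.lt_or_ge m1 m2 with h | h
    · have := congrFun heq ⟨m1, by omega⟩
      simp only [Fin.val_mk] at this
      rw [if_neg (by omega), if_pos (by omega)] at this
      exact absurd this (by norm_num)
    · have hlt : m2 < m1 := by omega
      have := congrFun heq ⟨m2, by omega⟩
      simp only [Fin.val_mk] at this
      rw [if_pos (by omega), if_neg (by omega)] at this
      exact absurd this (by norm_num)
  rw [hset, himg, Set.ncard_image_of_injOn hinj, ← Finset.coe_Iic, Set.ncard_coe_finset,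
    Nat.card_Iic]
end

section
/- In the (A_n, C_k) lattice, the set I = { a ∈ ℤ^n : a_i ≥ 0 for all i and ⟨l(a), l(a)⟩ = −1 } has cardinality binomial(n+1, k). -/
open Finset

def s5gN (k i j : ℕ) : ℤ :=
  if i = j then (if i = 0 then -1 else -2)
  else if (1 ≤ i ∧ j = i + 1) ∨ (1 ≤ j ∧ i = j + 1) ∨ (i = 0 ∧ j = k) ∨ (j = 0 ∧ i = k) then 1
  else 0

def s5B (n : ℕ) (a : Fin n → ℤ) (j : ℕ) : ℤ :=
  if h : 1 ≤ j ∧ j ≤ n then a ⟨j - 1, by omega⟩ else 0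

def s5X (n : ℕ) (a : Fin n → ℤ) (i : ℕ) : ℤ := if i = 0 then 1 else s5B n a i

def s5d (n : ℕ) (a : Fin n → ℤ) (i : ℕ) : ℤ := s5B n a (i + 1) - s5B n a i

lemma s5X_eq (n : ℕ) (a : Fin n → ℤ) (i : Fin (n+1)) : lA n a i = s5X n a ↑i := by
  induction i using Fin.cases with
  | zero => simp [lA, s5X]
  | succ j =>
    have hj : (j : ℕ) < n := j.isLt
    simp only [lA, Fin.cons_succ, s5X, Fin.val_succ, Nat.succ_ne_zero, if_false, s5B]
    rw [dif_pos ⟨by omega, by omega⟩]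
    congr 1

lemma s5gram_eq (n k : ℕ) (i j : Fin (n+1)) : gramA n k i j = s5gN k ↑i ↑j := by
  simp only [gramA, s5gN, Fin.ext_iff]

lemma s5X_top (n : ℕ) (a : Fin n → ℤ) : s5X n a (n+1) = 0 := by
  simp [s5X, s5B]

lemma s5X_zero (n : ℕ) (a : Fin n → ℤ) : s5X n a 0 = 1 := by simp [s5X]

lemma s5qform_range (n k : ℕ) (a : Fin n → ℤ) :
    qform (gramA n k) (lA n a) (lA n a)
      = ∑ i ∈ range (n+1), ∑ j ∈ range (n+1), s5X n a i * s5gN k i j * s5X n a j := by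
  unfold qform
  rw [← Fin.sum_univ_eq_sum_range (fun i => ∑ j ∈ range (n+1), s5X n a i * s5gN k i j * s5X n a j) (n+1)]
  refine Finset.sum_congr rfl fun i _ => ?_
  rw [← Fin.sum_univ_eq_sum_range (fun j => s5X n a ↑i * s5gN k ↑i j * s5X n a j) (n+1)]
  refine Finset.sum_congr rfl fun j _ => ?_
  rw [s5X_eq, s5X_eq, s5gram_eq]

lemma s5split (k : ℕ) (hk1 : 1 ≤ k) (i j : ℕ) :
    s5gN k i j = (if i = j then (if i = 0 then (-1:ℤ) else -2) else 0)
      + (if 1 ≤ i ∧ j = i + 1 then 1 else 0)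
      + (if 1 ≤ j ∧ i = j + 1 then 1 else 0)
      + (if i = 0 ∧ j = k then 1 else 0)
      + (if j = 0 ∧ i = k then 1 else 0) := by
  unfold s5gN; split_ifs <;> omega

lemma s5S1 (n : ℕ) (X : ℕ → ℤ) (hX0 : X 0 = 1) :
    ∑ i ∈ range (n+1), ∑ j ∈ range (n+1),
        X i * (if i = j then (if i = 0 then (-1:ℤ) else -2) else 0) * X j
      = -1 - 2 * ∑ i ∈ range n, X (i+1)^2 := by
  have h1 : ∀ i ∈ range (n+1), ∑ j ∈ range (n+1),
      X i * (if i = j then (if i = 0 then (-1:ℤ) else -2) else 0) * X j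
      = (if i = 0 then (-1:ℤ) else -2) * X i ^ 2 := by
    intro i hi
    have h2 : ∀ j, X i * (if i = j then (if i = 0 then (-1:ℤ) else -2) else 0) * X j
        = if i = j then (if i = 0 then (-1:ℤ) else -2) * X j ^ 2 else 0 := by
      intro j; split_ifs with h h' <;> simp_all <;> ring
    simp only [h2]
    rw [Finset.sum_ite_eq, if_pos hi]
  rw [Finset.sum_congr rfl h1, Finset.sum_range_succ']
  have h5 : ∀ i ∈ range n, (if i + 1 = 0 then (-1:ℤ) else -2) * X (i+1) ^ 2 = -(2 * X (i+1)^2) := by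
    intro i _; rw [if_neg (Nat.succ_ne_zero i)]; ring
  rw [Finset.sum_congr rfl h5, Finset.sum_neg_distrib, if_pos rfl, hX0, Finset.mul_sum]
  ring

lemma s5S2 (n : ℕ) (X : ℕ → ℤ) (hXtop : X (n+1) = 0) :
    ∑ i ∈ range (n+1), ∑ j ∈ range (n+1),
        X i * (if 1 ≤ i ∧ j = i + 1 then (1:ℤ) else 0) * X j
      = ∑ i ∈ range n, X (i+1) * X (i+2) := by
  have h1 : ∀ i ∈ range (n+1), ∑ j ∈ range (n+1),
      X i * (if 1 ≤ i ∧ j = i + 1 then (1:ℤ) else 0) * X j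
      = if 1 ≤ i then X i * X (i+1) else 0 := by
    intro i hi
    have h2 : ∀ j, X i * (if 1 ≤ i ∧ j = i + 1 then (1:ℤ) else 0) * X j
        = if i + 1 = j then (if 1 ≤ i then X i * X j else 0) else 0 := by
      intro j
      split_ifs
      all_goals try (exfalso; omega)
      all_goals ring
    simp only [h2]
    rw [Finset.sum_ite_eq]
    simp only [Finset.mem_range] at hi ⊢
    by_cases hc : i + 1 < n + 1
    · rw [if_pos hc]
    · have : i = n := by omega
      subst this
      rw [if_neg hc, hXtop]
      simp
  rw [Finset.sum_congr rfl h1, Finset.sum_range_succ']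
  simp

lemma s5S3 (n : ℕ) (X : ℕ → ℤ) (hXtop : X (n+1) = 0) :
    ∑ i ∈ range (n+1), ∑ j ∈ range (n+1),
        X i * (if 1 ≤ j ∧ i = j + 1 then (1:ℤ) else 0) * X j
      = ∑ i ∈ range n, X (i+1) * X (i+2) := by
  have h1 : ∀ i ∈ range (n+1), ∑ j ∈ range (n+1),
      X i * (if 1 ≤ j ∧ i = j + 1 then (1:ℤ) else 0) * X j
      = if 2 ≤ i then X i * X (i-1) else 0 := by
    intro i hi
    have h2 : ∀ j, X i * (if 1 ≤ j ∧ i = j + 1 then (1:ℤ) else 0) * X j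
        = if i - 1 = j then (if 2 ≤ i then X i * X j else 0) else 0 := by
      intro j
      split_ifs
      all_goals try (exfalso; omega)
      all_goals ring
    simp only [h2]
    rw [Finset.sum_ite_eq]
    simp only [Finset.mem_range] at hi ⊢
    rw [if_pos (by omega)]
  rw [Finset.sum_congr rfl h1]
  have h3 : ∑ i ∈ range (n+2), (if 2 ≤ i then X i * X (i-1) else 0)
      = ∑ i ∈ range (n+1), (if 2 ≤ i then X i * X (i-1) else 0) := by
    rw [Finset.sum_range_succ, hXtop]
    simp
  rw [← h3, Finset.sum_range_succ']
  have h4 : ∀ i, (if 2 ≤ i + 1 then X (i+1) * X (i+1-1) else 0)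
      = if 1 ≤ i then X i * X (i+1) else 0 := by
    intro i
    rcases Nat.eq_zero_or_pos i with h | h
    · subst h; norm_num
    · rw [if_pos (by omega), if_pos (by omega)]
      simp only [Nat.add_sub_cancel]
      ring
  simp only [h4]
  rw [Finset.sum_range_succ']
  simp

lemma s5S4 (n k : ℕ) (hk1 : 1 ≤ k) (hkn : k ≤ n) (X : ℕ → ℤ) (hX0 : X 0 = 1) :
    ∑ i ∈ range (n+1), ∑ j ∈ range (n+1),
        X i * (if i = 0 ∧ j = k then (1:ℤ) else 0) * X j
      = X k := by
  have h1 : ∀ i ∈ range (n+1), ∑ j ∈ range (n+1),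
      X i * (if i = 0 ∧ j = k then (1:ℤ) else 0) * X j
      = if 0 = i then X i * X k else 0 := by
    intro i hi
    have h2 : ∀ j, X i * (if i = 0 ∧ j = k then (1:ℤ) else 0) * X j
        = if k = j then (if 0 = i then X i * X j else 0) else 0 := by
      intro j
      split_ifs
      all_goals try (exfalso; omega)
      all_goals ring
    simp only [h2]
    rw [Finset.sum_ite_eq, if_pos (by simp [Finset.mem_range]; omega)]
  rw [Finset.sum_congr rfl h1, Finset.sum_ite_eq, if_pos (by simp), hX0, one_mul]

lemma s5S5 (n k : ℕ) (hk1 : 1 ≤ k) (hkn : k ≤ n) (X : ℕ → ℤ) (hX0 : X 0 = 1) :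
    ∑ i ∈ range (n+1), ∑ j ∈ range (n+1),
        X i * (if j = 0 ∧ i = k then (1:ℤ) else 0) * X j
      = X k := by
  have h1 : ∀ i ∈ range (n+1), ∑ j ∈ range (n+1),
      X i * (if j = 0 ∧ i = k then (1:ℤ) else 0) * X j
      = if k = i then X i * X 0 else 0 := by
    intro i hi
    have h2 : ∀ j, X i * (if j = 0 ∧ i = k then (1:ℤ) else 0) * X j
        = if 0 = j then (if k = i then X i * X j else 0) else 0 := by
      intro j
      split_ifs
      all_goals try (exfalso; omega)
      all_goals ring
    simp only [h2]
    rw [Finset.sum_ite_eq, if_pos (by simp)]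
  rw [Finset.sum_congr rfl h1, Finset.sum_ite_eq,
    if_pos (by simp [Finset.mem_range]; omega), hX0, mul_one]

lemma s5main (n k : ℕ) (hk1 : 1 ≤ k) (hkn : k ≤ n) (X : ℕ → ℤ)
    (hX0 : X 0 = 1) (hXtop : X (n+1) = 0) :
    ∑ i ∈ range (n+1), ∑ j ∈ range (n+1), X i * s5gN k i j * X j
      = -1 + 2 * X k - 2 * ∑ i ∈ range n, X (i+1)^2
        + 2 * ∑ i ∈ range n, X (i+1) * X (i+2) := by
  have hexp : ∀ i ∈ range (n+1), ∀ j ∈ range (n+1),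
      X i * s5gN k i j * X j
      = X i * (if i = j then (if i = 0 then (-1:ℤ) else -2) else 0) * X j
        + X i * (if 1 ≤ i ∧ j = i + 1 then (1:ℤ) else 0) * X j
        + X i * (if 1 ≤ j ∧ i = j + 1 then (1:ℤ) else 0) * X j
        + X i * (if i = 0 ∧ j = k then (1:ℤ) else 0) * X j
        + X i * (if j = 0 ∧ i = k then (1:ℤ) else 0) * X j := by
    intro i _ j _
    rw [s5split k hk1 i j]
    ring
  calc ∑ i ∈ range (n+1), ∑ j ∈ range (n+1), X i * s5gN k i j * X j
      = ∑ i ∈ range (n+1), ∑ j ∈ range (n+1),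
          (X i * (if i = j then (if i = 0 then (-1:ℤ) else -2) else 0) * X j
          + X i * (if 1 ≤ i ∧ j = i + 1 then (1:ℤ) else 0) * X j
          + X i * (if 1 ≤ j ∧ i = j + 1 then (1:ℤ) else 0) * X j
          + X i * (if i = 0 ∧ j = k then (1:ℤ) else 0) * X j
          + X i * (if j = 0 ∧ i = k then (1:ℤ) else 0) * X j) := by
        refine Finset.sum_congr rfl fun i hi => Finset.sum_congr rfl fun j hj => ?_
        exact hexp i hi j hj
    _ = -1 + 2 * X k - 2 * ∑ i ∈ range n, X (i+1)^2
        + 2 * ∑ i ∈ range n, X (i+1) * X (i+2) := by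
        simp only [Finset.sum_add_distrib]
        rw [s5S1 n X hX0, s5S2 n X hXtop, s5S3 n X hXtop,
          s5S4 n k hk1 hkn X hX0, s5S5 n k hk1 hkn X hX0]
        ring

lemma s5sq (n : ℕ) (X : ℕ → ℤ) (B : ℕ → ℤ) (hB0 : B 0 = 0)
    (hBX : ∀ i, 1 ≤ i → B i = X i) (hXtop : X (n+1) = 0) :
    ∑ i ∈ range (n+1), (B (i+1) - B i)^2
      = 2 * ∑ i ∈ range n, X (i+1)^2 - 2 * ∑ i ∈ range n, X (i+1) * X (i+2) := by
  have e1 : ∀ i ∈ range (n+1), (B (i+1) - B i)^2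
      = (B (i+1)^2 - 2*(B i * B (i+1))) + B i^2 := fun i _ => by ring
  rw [Finset.sum_congr rfl e1, Finset.sum_add_distrib, Finset.sum_sub_distrib, ← Finset.mul_sum]
  have hBX' : ∀ i ∈ range n, B (i+1)^2 = X (i+1)^2 := fun i _ => by rw [hBX _ (by omega)]
  have hA : ∑ i ∈ range (n+1), B (i+1)^2 = ∑ i ∈ range n, X (i+1)^2 := by
    rw [Finset.sum_range_succ, Finset.sum_congr rfl hBX', hBX (n+1) (by omega), hXtop]; ring
  have hB : ∑ i ∈ range (n+1), B i^2 = ∑ i ∈ range n, X (i+1)^2 := by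
    rw [Finset.sum_range_succ', hB0, Finset.sum_congr rfl hBX']; ring
  have hC : ∑ i ∈ range (n+1), B i * B (i+1) = ∑ i ∈ range n, X (i+1) * X (i+2) := by
    rw [Finset.sum_range_succ', hB0]
    have e2 : ∀ i ∈ range n, B (i+1) * B (i+1+1) = X (i+1) * X (i+2) := fun i _ => by
      rw [hBX _ (by omega), hBX _ (by omega)]
    rw [Finset.sum_congr rfl e2]; ring
  rw [hA, hB, hC]; ring

lemma s5B_zero (n : ℕ) (a : Fin n → ℤ) : s5B n a 0 = 0 := by simp [s5B]

lemma s5B_top (n : ℕ) (a : Fin n → ℤ) : s5B n a (n+1) = 0 := by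
  unfold s5B; rw [dif_neg (by omega)]

lemma s5X_B (n : ℕ) (a : Fin n → ℤ) (i : ℕ) (hi : 1 ≤ i) : s5X n a i = s5B n a i := by
  unfold s5X; rw [if_neg (by omega)]

lemma s5qform (n k : ℕ) (hk1 : 1 ≤ k) (hkn : k ≤ n) (a : Fin n → ℤ) :
    qform (gramA n k) (lA n a) (lA n a)
      = -1 + 2 * (∑ i ∈ range k, s5d n a i) - ∑ i ∈ range (n+1), (s5d n a i)^2 := by
  rw [s5qform_range, s5main n k hk1 hkn (s5X n a) (s5X_zero n a) (s5X_top n a)]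
  have h1 : ∑ i ∈ range k, s5d n a i = s5X n a k := by
    unfold s5d
    rw [Finset.sum_range_sub (s5B n a), s5B_zero, sub_zero, s5X_B n a k hk1]
  have h2 : ∑ i ∈ range (n+1), (s5d n a i)^2
      = 2 * ∑ i ∈ range n, (s5X n a (i+1))^2
        - 2 * ∑ i ∈ range n, s5X n a (i+1) * s5X n a (i+2) := by
    have := s5sq n (s5X n a) (s5B n a) (s5B_zero n a)
      (fun i hi => (s5X_B n a i hi).symm) (s5X_top n a)
    simpa [s5d] using this
  rw [h1, h2]; ring

lemma s5t1 (t : ℤ) : 0 ≤ t^2 - t := by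
  rcases le_or_gt t 0 with h | h
  · nlinarith
  · have h1 : 1 ≤ t := h
    nlinarith

lemma s5t2 (t : ℤ) : 0 ≤ t^2 + t := by
  have := s5t1 (-t); nlinarith [this]

lemma s5t1e (t : ℤ) (h : t^2 - t = 0) : t = 0 ∨ t = 1 := by
  have h2 : t * (t - 1) = 0 := by linear_combination h
  rcases mul_eq_zero.mp h2 with h3 | h3 <;> omega

lemma s5t2e (t : ℤ) (h : t^2 + t = 0) : t = 0 ∨ t = -1 := by
  have h2 : t * (t + 1) = 0 := by linear_combination h
  rcases mul_eq_zero.mp h2 with h3 | h3 <;> omega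

lemma s5mem (n k : ℕ) (hk1 : 1 ≤ k) (hkn : k ≤ n) (a : Fin n → ℤ) :
    a ∈ IA n k ↔ (∀ i, 0 ≤ a i) ∧ (∀ i, i < k → s5d n a i = 0 ∨ s5d n a i = 1)
      ∧ (∀ i, k ≤ i → i < n + 1 → s5d n a i = 0 ∨ s5d n a i = -1) := by
  have htot : ∑ i ∈ range (n+1), s5d n a i = 0 := by
    unfold s5d; rw [Finset.sum_range_sub (s5B n a), s5B_top, s5B_zero, sub_zero]
  have hsplitd : ∑ i ∈ range k, s5d n a i + ∑ i ∈ Ico k (n+1), s5d n a i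
      = ∑ i ∈ range (n+1), s5d n a i := by
    simp only [range_eq_Ico]
    exact Finset.sum_Ico_consecutive _ (Nat.zero_le k) (by omega)
  have hsplitq : ∑ i ∈ range k, (s5d n a i)^2 + ∑ i ∈ Ico k (n+1), (s5d n a i)^2
      = ∑ i ∈ range (n+1), (s5d n a i)^2 := by
    simp only [range_eq_Ico]
    exact Finset.sum_Ico_consecutive _ (Nat.zero_le k) (by omega)
  have key : qform (gramA n k) (lA n a) (lA n a) = -1
      ↔ ∑ i ∈ range k, ((s5d n a i)^2 - s5d n a i)
        + ∑ i ∈ Ico k (n+1), ((s5d n a i)^2 + s5d n a i) = 0 := by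
    rw [s5qform n k hk1 hkn a, Finset.sum_sub_distrib, Finset.sum_add_distrib]
    constructor <;> intro h <;> linarith
  simp only [IA, Set.mem_setOf_eq]
  constructor
  · rintro ⟨hpos, hq⟩
    have hz := key.mp hq
    have hnn1 : 0 ≤ ∑ i ∈ range k, ((s5d n a i)^2 - s5d n a i) :=
      Finset.sum_nonneg fun i _ => s5t1 _
    have hnn2 : 0 ≤ ∑ i ∈ Ico k (n+1), ((s5d n a i)^2 + s5d n a i) :=
      Finset.sum_nonneg fun i _ => s5t2 _
    have h1 : ∑ i ∈ range k, ((s5d n a i)^2 - s5d n a i) = 0 := by linarith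
    have h2 : ∑ i ∈ Ico k (n+1), ((s5d n a i)^2 + s5d n a i) = 0 := by linarith
    have t1 := (Finset.sum_eq_zero_iff_of_nonneg (fun i _ => s5t1 (s5d n a i))).mp h1
    have t2 := (Finset.sum_eq_zero_iff_of_nonneg (fun i _ => s5t2 (s5d n a i))).mp h2
    refine ⟨hpos, fun i hi => s5t1e _ (t1 i (Finset.mem_range.mpr hi)),
      fun i hik hin => s5t2e _ (t2 i (Finset.mem_Ico.mpr ⟨hik, hin⟩))⟩
  · rintro ⟨hpos, hd1, hd2⟩
    refine ⟨hpos, key.mpr ?_⟩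
    have h1 : ∑ i ∈ range k, ((s5d n a i)^2 - s5d n a i) = 0 :=
      Finset.sum_eq_zero fun i hi => by
        rcases hd1 i (Finset.mem_range.mp hi) with h | h <;> rw [h] <;> ring
    have h2 : ∑ i ∈ Ico k (n+1), ((s5d n a i)^2 + s5d n a i) = 0 :=
      Finset.sum_eq_zero fun i hi => by
        rcases hd2 i (Finset.mem_Ico.mp hi).1 (Finset.mem_Ico.mp hi).2 with h | h <;>
          rw [h] <;> ring
    rw [h1, h2]; ring

def s5chi (n : ℕ) (U : Finset (Fin (n+1))) (i : ℕ) : ℤ :=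
  if h : i < n + 1 then (if (⟨i, h⟩ : Fin (n+1)) ∈ U then 1 else 0) else 0

def s5dd (n k : ℕ) (U : Finset (Fin (n+1))) (i : ℕ) : ℤ :=
  (if i < k then 1 else 0) - s5chi n U i

def s5f (n k : ℕ) (U : Finset (Fin (n+1))) : Fin n → ℤ :=
  fun j => ∑ i ∈ range (↑j + 1), s5dd n k U i

lemma s5chi_fin (n : ℕ) (U : Finset (Fin (n+1))) (x : Fin (n+1)) :
    s5chi n U ↑x = if x ∈ U then 1 else 0 := by
  unfold s5chi; rw [dif_pos x.isLt]

lemma s5chi_sum (n : ℕ) (U : Finset (Fin (n+1))) :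
    ∑ i ∈ range (n+1), s5chi n U i = (U.card : ℤ) := by
  rw [← Fin.sum_univ_eq_sum_range (fun i => s5chi n U i) (n+1)]
  rw [Finset.sum_congr rfl (fun i _ => s5chi_fin n U i)]
  rw [Finset.sum_ite_mem, Finset.univ_inter, Finset.sum_const]
  simp

lemma s5k_sum (n k : ℕ) (hkn : k ≤ n) :
    ∑ i ∈ range (n+1), (if i < k then (1:ℤ) else 0) = k := by
  simp only [range_eq_Ico]
  rw [← Finset.sum_Ico_consecutive _ (Nat.zero_le k) (by omega : k ≤ n+1)]
  have h1 : ∑ i ∈ Ico 0 k, (if i < k then (1:ℤ) else 0) = ∑ i ∈ Ico 0 k, 1 :=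
    Finset.sum_congr rfl fun i hi => if_pos (Finset.mem_Ico.mp hi).2
  have h2 : ∑ i ∈ Ico k (n+1), (if i < k then (1:ℤ) else 0) = 0 :=
    Finset.sum_eq_zero fun i hi => if_neg (by have := (Finset.mem_Ico.mp hi).1; omega)
  rw [h1, h2, Finset.sum_const, Nat.card_Ico]
  simp

lemma s5dd_sum (n k : ℕ) (hkn : k ≤ n) (U : Finset (Fin (n+1))) (hU : U.card = k) :
    ∑ i ∈ range (n+1), s5dd n k U i = 0 := by
  unfold s5dd
  rw [Finset.sum_sub_distrib, s5chi_sum, s5k_sum n k hkn, hU]; ring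

lemma s5B_f (n k : ℕ) (hkn : k ≤ n) (U : Finset (Fin (n+1))) (hU : U.card = k)
    (m : ℕ) (hm : m ≤ n + 1) : s5B n (s5f n k U) m = ∑ i ∈ range m, s5dd n k U i := by
  rcases Nat.eq_zero_or_pos m with h0 | h0
  · subst h0; rw [s5B_zero]; simp
  rcases Nat.lt_or_ge m (n+1) with h1 | h1
  · unfold s5B
    rw [dif_pos ⟨h0, by omega⟩]
    show s5f n k U ⟨m-1, by omega⟩ = _
    unfold s5f
    have : m - 1 + 1 = m := by omega
    rw [show ((⟨m-1, by omega⟩ : Fin n) : ℕ) = m - 1 from rfl, this]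
  · have h2 : m = n + 1 := by omega
    subst h2
    rw [s5B_top, s5dd_sum n k hkn U hU]

lemma s5d_f (n k : ℕ) (hkn : k ≤ n) (U : Finset (Fin (n+1))) (hU : U.card = k)
    (i : ℕ) (hi : i < n + 1) : s5d n (s5f n k U) i = s5dd n k U i := by
  unfold s5d
  rw [s5B_f n k hkn U hU (i+1) (by omega), s5B_f n k hkn U hU i (by omega),
    Finset.sum_range_succ]
  ring

lemma s5f_mem (n k : ℕ) (hk1 : 1 ≤ k) (hkn : k ≤ n) (U : Finset (Fin (n+1)))
    (hU : U.card = k) : s5f n k U ∈ IA n k := by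
  rw [s5mem n k hk1 hkn]
  refine ⟨?_, ?_, ?_⟩
  · intro j
    show 0 ≤ ∑ i ∈ range (↑j + 1), s5dd n k U i
    rcases Nat.lt_or_ge (↑j : ℕ) k with hj | hj
    · apply Finset.sum_nonneg
      intro i hi
      have hik : i < k := by have := Finset.mem_range.mp hi; omega
      unfold s5dd s5chi
      rw [if_pos hik]
      split_ifs <;> norm_num
    · have hsplit : ∑ i ∈ range ((j:ℕ)+1), s5dd n k U i
          + ∑ i ∈ Ico ((j:ℕ)+1) (n+1), s5dd n k U i = ∑ i ∈ range (n+1), s5dd n k U i := by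
        simp only [range_eq_Ico]
        exact Finset.sum_Ico_consecutive _ (Nat.zero_le _) (by have := j.isLt; omega)
      have htot := s5dd_sum n k hkn U hU
      have hle : ∑ i ∈ Ico ((j:ℕ)+1) (n+1), s5dd n k U i ≤ 0 := by
        apply Finset.sum_nonpos
        intro i hi
        have hik : ¬ i < k := by have := (Finset.mem_Ico.mp hi).1; omega
        unfold s5dd s5chi
        rw [if_neg hik]
        split_ifs <;> norm_num
      linarith
  · intro i hik
    rw [s5d_f n k hkn U hU i (by omega)]
    unfold s5dd s5chi
    rw [if_pos hik]
    split_ifs <;> norm_num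
  · intro i hik hin
    rw [s5d_f n k hkn U hU i hin]
    unfold s5dd s5chi
    rw [if_neg (by omega)]
    split_ifs <;> norm_num

lemma s5f_inj (n k : ℕ) (hkn : k ≤ n) (U V : Finset (Fin (n+1)))
    (hU : U.card = k) (hV : V.card = k) (h : s5f n k U = s5f n k V) : U = V := by
  have hdd : ∀ i, i < n + 1 → s5dd n k U i = s5dd n k V i := by
    intro i hi
    have h1 := s5B_f n k hkn U hU (i+1) (by omega)
    have h2 := s5B_f n k hkn V hV (i+1) (by omega)
    have h3 := s5B_f n k hkn U hU i (by omega)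
    have h4 := s5B_f n k hkn V hV i (by omega)
    rw [h] at h1 h3
    have e1 : ∑ x ∈ range (i+1), s5dd n k U x = ∑ x ∈ range (i+1), s5dd n k V x :=
      h1.symm.trans h2
    have e2 : ∑ x ∈ range i, s5dd n k U x = ∑ x ∈ range i, s5dd n k V x :=
      h3.symm.trans h4
    rw [Finset.sum_range_succ, Finset.sum_range_succ] at e1
    linarith
  ext x
  have hx := hdd ↑x x.isLt
  unfold s5dd at hx
  rw [s5chi_fin, s5chi_fin] at hx
  by_cases hu : x ∈ U <;> by_cases hv : x ∈ V
  · simp [hu, hv]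
  · rw [if_pos hu, if_neg hv] at hx
    exfalso; split_ifs at hx <;> omega
  · rw [if_neg hu, if_pos hv] at hx
    exfalso; split_ifs at hx <;> omega
  · simp [hu, hv]

lemma s5f_surj (n k : ℕ) (hk1 : 1 ≤ k) (hkn : k ≤ n) (a : Fin n → ℤ) (ha : a ∈ IA n k) :
    ∃ U : Finset (Fin (n+1)), U.card = k ∧ s5f n k U = a := by
  classical
  obtain ⟨hpos, hd1, hd2⟩ := (s5mem n k hk1 hkn a).mp ha
  set U : Finset (Fin (n+1)) := Finset.univ.filter
      (fun x => (if (↑x : ℕ) < k then (1:ℤ) else 0) - s5d n a ↑x = 1) with hUdef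
  have hchiU : ∀ i, i < n+1 →
      s5chi n U i = (if i < k then (1:ℤ) else 0) - s5d n a i := by
    intro i hi
    have hval : (if i < k then (1:ℤ) else 0) - s5d n a i = 0
        ∨ (if i < k then (1:ℤ) else 0) - s5d n a i = 1 := by
      by_cases hik : i < k
      · rcases hd1 i hik with h | h <;> rw [if_pos hik, h] <;> norm_num
      · rcases hd2 i (by omega) hi with h | h <;> rw [if_neg hik, h] <;> norm_num
    have hrw : s5chi n U i = if (⟨i, hi⟩ : Fin (n+1)) ∈ U then 1 else 0 := by
      unfold s5chi; rw [dif_pos hi]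
    rw [hrw, hUdef]
    simp only [Finset.mem_filter, Finset.mem_univ, true_and]
    rcases hval with h | h <;> simp only [h] <;> norm_num
  have hdd_eq : ∀ i, i < n+1 → s5dd n k U i = s5d n a i := by
    intro i hi; unfold s5dd; rw [hchiU i hi]; ring
  have htot : ∑ i ∈ range (n+1), s5d n a i = 0 := by
    unfold s5d; rw [Finset.sum_range_sub (s5B n a), s5B_top, s5B_zero, sub_zero]
  have hcard : U.card = k := by
    have h1 : (U.card : ℤ) = ∑ i ∈ range (n+1), s5chi n U i := (s5chi_sum n U).symm
    have h2 : ∑ i ∈ range (n+1), s5chi n U i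
        = ∑ i ∈ range (n+1), ((if i < k then (1:ℤ) else 0) - s5d n a i) :=
      Finset.sum_congr rfl fun i hi => hchiU i (Finset.mem_range.mp hi)
    rw [Finset.sum_sub_distrib, s5k_sum n k hkn, htot, sub_zero] at h2
    have : (U.card : ℤ) = k := by rw [h1, h2]
    exact_mod_cast this
  refine ⟨U, hcard, ?_⟩
  funext j
  show ∑ i ∈ range (↑j+1), s5dd n k U i = a j
  have hstep : ∑ i ∈ range (↑j+1), s5dd n k U i = ∑ i ∈ range (↑j+1), s5d n a i :=
    Finset.sum_congr rfl fun i hi => hdd_eq i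
      (by have := Finset.mem_range.mp hi; have := j.isLt; omega)
  rw [hstep]
  unfold s5d
  rw [Finset.sum_range_sub (s5B n a), s5B_zero, sub_zero]
  unfold s5B
  rw [dif_pos ⟨by omega, by have := j.isLt; omega⟩]
  exact congrArg a (Fin.ext (by simp))


/-- Lemma 3.7 for type `Aₙ`: in the `(Aₙ, C_k)` lattice, the set `I` has
cardinality `(n+1).choose k`, the dimension of `Λᵏ ℂⁿ⁺¹`. -/
theorem stmt5 (n k : ℕ) (hn : 1 ≤ n) (hk1 : 1 ≤ k) (hkn : k ≤ n) :
    (IA n k).ncard = Nat.choose (n + 1) k := by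
  classical
  have hset : IA n k
      = ↑((Finset.powersetCard k (Finset.univ : Finset (Fin (n+1)))).image (s5f n k)) := by
    ext a
    simp only [Finset.coe_image, Set.mem_image, Finset.mem_coe,
      Finset.mem_powersetCard_univ]
    constructor
    · intro ha
      obtain ⟨U, hU, hfa⟩ := s5f_surj n k hk1 hkn a ha
      exact ⟨U, hU, hfa⟩
    · rintro ⟨U, hU, rfl⟩
      exact s5f_mem n k hk1 hkn U hU
  rw [hset, Set.ncard_coe_finset]
  rw [Finset.card_image_of_injOn (fun U hU V hV h => s5f_inj n k hkn U V
    (Finset.mem_powersetCard_univ.mp hU) (Finset.mem_powersetCard_univ.mp hV) h)]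
  rw [Finset.card_powersetCard, Finset.card_univ, Fintype.card_fin]
end

section
/- In the (A_n, C_k) lattice, for every index i with 1 ≤ i ≤ n: ⟨l(a), C_i⟩ ∈ {−1, 0, 1} for every a ∈ I; the number of a ∈ I with ⟨l(a), C_i⟩ = 1 equals binomial(n−1, k−1), the number with ⟨l(a), C_i⟩ = −1 also equals binomial(n−1, k−1), and the number with ⟨l(a), C_i⟩ = 0 equals binomial(n−1, k) + binomial(n−1, k−2) (binomial coefficients with a negative lower index being 0). -/
namespace Stmt6

/-- extended coefficient function: `Aa n a m = a_{m}` (1-indexed), `0` outside `[1,n]`. -/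
def Aa (n : ℕ) (a : Fin n → ℤ) (m : ℕ) : ℤ :=
  if h : 1 ≤ m ∧ m ≤ n then a ⟨m - 1, by omega⟩ else 0

lemma Aa_zero (n : ℕ) (a : Fin n → ℤ) : Aa n a 0 = 0 := by simp [Aa]

lemma Aa_gt (n : ℕ) (a : Fin n → ℤ) (m : ℕ) (h : n < m) : Aa n a m = 0 := by
  simp only [Aa]; rw [dif_neg]; omega

lemma lA_apply (n : ℕ) (a : Fin n → ℤ) (p : Fin (n + 1)) :
    lA n a p = if (p : ℕ) = 0 then 1 else Aa n a p := by
  rcases Nat.eq_zero_or_pos (p : ℕ) with h0 | h1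
  · have : p = 0 := Fin.ext h0
    subst this; simp [lA]
  · have hp : p = Fin.succ ⟨(p : ℕ) - 1, by omega⟩ := by
      apply Fin.ext; simp; omega
    rw [hp]
    simp only [lA, Fin.cons_succ, Fin.val_succ]
    rw [if_neg (by omega), Aa, dif_pos (by constructor <;> omega)]
    exact congrArg a (by apply Fin.ext; simp)

lemma qform_single {m : ℕ} (g : Fin m → Fin m → ℤ) (x : Fin m → ℤ) (i : Fin m) :
    qform g x (Pi.single i 1) = ∑ p, x p * g p i := by
  unfold qform
  refine Finset.sum_congr rfl fun p _ => ?_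
  rw [Fintype.sum_eq_single i (fun j hj => by simp [Pi.single_apply, Ne.symm hj])]
  simp

/-- step function determined by a finset `S ⊆ Fin (n+1)`. -/
def dS (n k : ℕ) (S : Finset (Fin (n + 1))) (j : ℕ) : ℤ :=
  if h : j < n + 1 then
    (if j < k then (if (⟨j, h⟩ : Fin (n + 1)) ∈ S then 0 else 1)
     else (if (⟨j, h⟩ : Fin (n + 1)) ∈ S then -1 else 0))
  else 0

def Phi (n k : ℕ) (S : Finset (Fin (n + 1))) : Fin n → ℤ :=
  fun i => ∑ j ∈ Finset.range ((i : ℕ) + 1), dS n k S j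

lemma dS_eq (n k : ℕ) (S : Finset (Fin (n + 1))) (p : Fin (n + 1)) :
    dS n k S (p : ℕ) = (if (p : ℕ) < k then 1 else 0) - (if p ∈ S then 1 else 0) := by
  rw [dS, dif_pos p.isLt]
  have : (⟨(p : ℕ), p.isLt⟩ : Fin (n + 1)) = p := Fin.eta p p.isLt
  rw [this]
  by_cases h1 : (p : ℕ) < k <;> by_cases h2 : p ∈ S <;> simp [h1, h2]

lemma sum_dS (n k : ℕ) (hk : k ≤ n) (S : Finset (Fin (n + 1))) :
    ∑ j ∈ Finset.range (n + 1), dS n k S j = (k : ℤ) - S.card := by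
  rw [← Fin.sum_univ_eq_sum_range (fun j => dS n k S j) (n + 1)]
  have : ∀ p : Fin (n + 1), dS n k S (p : ℕ)
      = (if (p : ℕ) < k then 1 else 0) - (if p ∈ S then 1 else 0) := dS_eq n k S
  rw [Finset.sum_congr rfl fun p _ => this p, Finset.sum_sub_distrib]
  congr 1
  · rw [Fin.sum_univ_eq_sum_range (fun j => if j < k then (1:ℤ) else 0) (n+1)]
    rw [Finset.range_eq_Ico, ← Finset.sum_Ico_consecutive _ (Nat.zero_le k) (by omega : k ≤ n+1)]
    rw [Finset.sum_congr rfl (fun j hj => if_pos (Finset.mem_Ico.mp hj).2),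
        Finset.sum_congr (rfl : Finset.Ico k (n+1) = _) (fun j hj => if_neg (by
          have := (Finset.mem_Ico.mp hj).1; omega))]
    simp
  · simp [Finset.sum_ite_mem]

end Stmt6

namespace Stmt6
variable {n k : ℕ}

lemma gram_decomp (hk1 : 1 ≤ k) (p q : Fin (n+1)) :
    gramA n k p q
      = -(if (p:ℕ) = (q:ℕ) then 1 else 0) - (if (p:ℕ) = (q:ℕ) ∧ 1 ≤ (p:ℕ) then 1 else 0)
        + (if 1 ≤ (p:ℕ) ∧ (q:ℕ) = (p:ℕ) + 1 then 1 else 0)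
        + (if 1 ≤ (q:ℕ) ∧ (p:ℕ) = (q:ℕ) + 1 then 1 else 0)
        + (if (p:ℕ) = 0 ∧ (q:ℕ) = k then 1 else 0)
        + (if (q:ℕ) = 0 ∧ (p:ℕ) = k then 1 else 0) := by
  simp only [gramA, Fin.ext_iff]
  split_ifs <;> omega

lemma sum_ite_val (x : Fin (n+1) → ℤ) (c : Fin (n+1)) :
    ∑ p : Fin (n+1), (if (p:ℕ) = (c:ℕ) then x p else 0) = x c := by
  rw [Fintype.sum_eq_single c (fun p hp => if_neg (fun h => hp (Fin.ext h)))]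
  simp

lemma rowsum (hk1 : 1 ≤ k) (hkn : k ≤ n) (a : Fin n → ℤ) (i : Fin (n+1)) (hi : 1 ≤ (i:ℕ)) :
    ∑ p : Fin (n+1), lA n a p * gramA n k p i
      = (if (i:ℕ) = k then 1 else 0) + Aa n a ((i:ℕ)-1) + Aa n a ((i:ℕ)+1)
        - 2 * Aa n a (i:ℕ) := by
  have step : ∀ p : Fin (n+1), lA n a p * gramA n k p i
      = -(if (p:ℕ) = (i:ℕ) then lA n a p else 0)
        - (if (p:ℕ) = (i:ℕ) ∧ 1 ≤ (p:ℕ) then lA n a p else 0)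
        + (if 1 ≤ (p:ℕ) ∧ (i:ℕ) = (p:ℕ) + 1 then lA n a p else 0)
        + (if 1 ≤ (i:ℕ) ∧ (p:ℕ) = (i:ℕ) + 1 then lA n a p else 0)
        + (if (p:ℕ) = 0 ∧ (i:ℕ) = k then lA n a p else 0)
        + (if (i:ℕ) = 0 ∧ (p:ℕ) = k then lA n a p else 0) := by
    intro p
    rw [gram_decomp hk1]
    simp only [mul_add, mul_sub, mul_neg, mul_ite, mul_one, mul_zero]
  rw [Finset.sum_congr rfl fun p _ => step p]
  simp only [Finset.sum_add_distrib, Finset.sum_sub_distrib]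
  rw [Finset.sum_neg_distrib]
  have t1 : ∑ p : Fin (n+1), (if (p:ℕ) = (i:ℕ) then lA n a p else 0) = Aa n a (i:ℕ) := by
    rw [sum_ite_val, lA_apply, if_neg (by omega)]
  have t2 : ∑ p : Fin (n+1), (if (p:ℕ) = (i:ℕ) ∧ 1 ≤ (p:ℕ) then lA n a p else 0)
      = Aa n a (i:ℕ) := by
    rw [← t1]
    exact Finset.sum_congr rfl fun p _ => if_congr (by omega) rfl rfl
  have t3 : ∑ p : Fin (n+1), (if 1 ≤ (p:ℕ) ∧ (i:ℕ) = (p:ℕ) + 1 then lA n a p else 0)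
      = Aa n a ((i:ℕ) - 1) := by
    by_cases h2 : 2 ≤ (i:ℕ)
    · have hc : (i:ℕ) - 1 < n + 1 := by omega
      trans (∑ p : Fin (n+1), (if (p:ℕ) = ((⟨(i:ℕ)-1, hc⟩ : Fin (n+1)) : ℕ) then lA n a p else 0))
      · exact Finset.sum_congr rfl fun p _ => if_congr (by simp; omega) rfl rfl
      · rw [sum_ite_val, lA_apply, if_neg (by simp; omega)]
    · have hi1 : (i:ℕ) = 1 := by omega
      rw [Finset.sum_eq_zero fun p _ => if_neg (by omega), hi1, Aa_zero]
  have t4 : ∑ p : Fin (n+1), (if 1 ≤ (i:ℕ) ∧ (p:ℕ) = (i:ℕ) + 1 then lA n a p else 0)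
      = Aa n a ((i:ℕ) + 1) := by
    by_cases hin : (i:ℕ) + 1 ≤ n
    · have hc : (i:ℕ) + 1 < n + 1 := by omega
      trans (∑ p : Fin (n+1), (if (p:ℕ) = ((⟨(i:ℕ)+1, hc⟩ : Fin (n+1)) : ℕ) then lA n a p else 0))
      · exact Finset.sum_congr rfl fun p _ => if_congr (by simp; omega) rfl rfl
      · rw [sum_ite_val, lA_apply, if_neg (by simp)]
    · have hin' : (i:ℕ) = n := by have := i.isLt; omega
      rw [Finset.sum_eq_zero fun p _ => if_neg (by have := p.isLt; omega),
          Aa_gt n a _ (by omega)]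
  have t5 : ∑ p : Fin (n+1), (if (p:ℕ) = 0 ∧ (i:ℕ) = k then lA n a p else 0)
      = (if (i:ℕ) = k then 1 else 0) := by
    by_cases hik : (i:ℕ) = k
    · trans (∑ p : Fin (n+1), (if (p:ℕ) = ((0 : Fin (n+1)) : ℕ) then lA n a p else 0))
      · exact Finset.sum_congr rfl fun p _ => if_congr (by simp [hik]) rfl rfl
      · rw [sum_ite_val, lA_apply, if_pos (by simp), if_pos hik]
    · rw [Finset.sum_eq_zero fun p _ => if_neg (by tauto), if_neg hik]
  have t6 : ∑ p : Fin (n+1), (if (i:ℕ) = 0 ∧ (p:ℕ) = k then lA n a p else 0) = 0 :=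
    Finset.sum_eq_zero fun p _ => if_neg (by omega)
  rw [t1, t2, t3, t4, t5, t6]
  ring

lemma colsum0 (hk1 : 1 ≤ k) (hkn : k ≤ n) (a : Fin n → ℤ) :
    ∑ p : Fin (n+1), lA n a p * gramA n k p 0 = -1 + Aa n a k := by
  have step : ∀ p : Fin (n+1), lA n a p * gramA n k p 0
      = -(if (p:ℕ) = 0 then lA n a p else 0) + (if (p:ℕ) = k then lA n a p else 0) := by
    intro p
    rw [gram_decomp hk1]
    rw [Fin.val_zero]
    split_ifs <;> first | (exfalso; omega) | (exfalso; tauto) | ring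
  rw [Finset.sum_congr rfl fun p _ => step p]
  simp only [Finset.sum_add_distrib]
  rw [Finset.sum_neg_distrib]
  have hc : k < n + 1 := by omega
  have t1 : ∑ p : Fin (n+1), (if (p:ℕ) = 0 then lA n a p else 0) = 1 := by
    trans (∑ p : Fin (n+1), (if (p:ℕ) = ((0 : Fin (n+1)) : ℕ) then lA n a p else 0))
    · exact Finset.sum_congr rfl fun p _ => if_congr (by simp) rfl rfl
    · rw [sum_ite_val, lA_apply, if_pos (by simp)]
  have t2 : ∑ p : Fin (n+1), (if (p:ℕ) = k then lA n a p else 0) = Aa n a k := by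
    trans (∑ p : Fin (n+1), (if (p:ℕ) = ((⟨k, hc⟩ : Fin (n+1)) : ℕ) then lA n a p else 0))
    · exact Finset.sum_congr rfl fun p _ => if_congr (by simp) rfl rfl
    · rw [sum_ite_val, lA_apply, if_neg (by simp; omega)]
  rw [t1, t2]

end Stmt6
namespace Stmt6
variable {n k : ℕ}

lemma qform_self (hk1 : 1 ≤ k) (hkn : k ≤ n) (a : Fin n → ℤ) :
    qform (gramA n k) (lA n a) (lA n a)
      = -1 + 2 * Aa n a k
        - ∑ j ∈ Finset.range (n+1), (Aa n a (j+1) - Aa n a j)^2 := by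
  set f := Aa n a with hf
  have hf0 : f 0 = 0 := Aa_zero n a
  have hfn1 : f (n+1) = 0 := Aa_gt n a (n+1) (by omega)
  have hq : qform (gramA n k) (lA n a) (lA n a)
      = ∑ q : Fin (n+1), (∑ p : Fin (n+1), lA n a p * gramA n k p q) * lA n a q := by
    unfold qform
    rw [Finset.sum_comm]
    exact Finset.sum_congr rfl fun q _ => (Finset.sum_mul _ _ _).symm
  rw [hq, Fin.sum_univ_succ]
  have h00 : lA n a (0 : Fin (n+1)) = 1 := by rw [lA_apply, if_pos (by simp)]
  rw [colsum0 hk1 hkn, h00]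
  have hsucc : ∀ q : Fin n, (∑ p : Fin (n+1), lA n a p * gramA n k p q.succ) * lA n a q.succ
      = ((if (q:ℕ)+1 = k then 1 else 0) + f (q:ℕ) + f ((q:ℕ)+2) - 2 * f ((q:ℕ)+1))
          * f ((q:ℕ)+1) := by
    intro q
    have hx : lA n a q.succ = f ((q:ℕ)+1) := by
      rw [lA_apply, if_neg (by simp)]
      try rfl
    rw [rowsum hk1 hkn a q.succ (by simp), hx]
    have hv : (q.succ : ℕ) = (q:ℕ) + 1 := rfl
    rw [hv, show (q:ℕ)+1-1 = (q:ℕ) from by omega, ← hf]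
    try ring
  rw [Finset.sum_congr rfl fun q _ => hsucc q]
  rw [Fin.sum_univ_eq_sum_range
    (fun j => ((if j+1 = k then 1 else 0) + f j + f (j+2) - 2 * f (j+1)) * f (j+1)) n]
  -- now pure range algebra
  have split : ∀ j, ((if j+1 = k then (1:ℤ) else 0) + f j + f (j+2) - 2 * f (j+1)) * f (j+1)
      = (if j = k-1 then f k else 0)
        + (f j * f (j+1) + f (j+2) * f (j+1) - 2 * f (j+1)^2) := by
    intro j
    by_cases h : j + 1 = k
    · rw [if_pos h, if_pos (by omega)]
      have : f k = f (j+1) := by rw [show k = j+1 from by omega]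
      rw [this]; ring
    · rw [if_neg h, if_neg (by omega)]; ring
  rw [Finset.sum_congr rfl fun j _ => split j, Finset.sum_add_distrib]
  have hind : ∑ j ∈ Finset.range n, (if j = k-1 then f k else 0) = f k := by
    rw [Finset.sum_ite_eq' (Finset.range n) (k-1) (fun _ => f k),
        if_pos (Finset.mem_range.mpr (by omega))]
  rw [hind]
  set P := ∑ j ∈ Finset.range n, f (j+1)^2 with hP
  set Q := ∑ j ∈ Finset.range n, f (j+1) * f (j+2) with hQ
  have e1 : ∑ j ∈ Finset.range n, (f j * f (j+1) + f (j+2) * f (j+1) - 2 * f (j+1)^2)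
      = (∑ j ∈ Finset.range n, f j * f (j+1))
        + (∑ j ∈ Finset.range n, f (j+2) * f (j+1)) - 2 * P := by
    rw [Finset.sum_sub_distrib, Finset.sum_add_distrib, Finset.mul_sum]
  have e2 : ∑ j ∈ Finset.range n, f (j+2) * f (j+1) = Q :=
    Finset.sum_congr rfl fun j _ => by ring
  have A1 := Finset.sum_range_succ (fun j => f j * f (j+1)) n
  have A2 := Finset.sum_range_succ' (fun j => f j * f (j+1)) n
  have e3 : ∑ j ∈ Finset.range n, f j * f (j+1) = Q := by
    have : ∑ j ∈ Finset.range n, f (j+1) * f (j+1+1) = Q := rfl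
    simp only [hfn1, hf0, mul_zero, zero_mul, add_zero] at A1 A2
    rw [A1.symm.trans A2, this]
  have e4 : ∑ j ∈ Finset.range (n+1), (f (j+1) - f j)^2 = 2 * P - 2 * Q := by
    have expand : ∀ j, (f (j+1) - f j)^2
        = f (j+1)^2 + f j^2 - 2 * (f j * f (j+1)) := by intro j; ring
    rw [Finset.sum_congr rfl fun j _ => expand j, Finset.sum_sub_distrib,
        Finset.sum_add_distrib]
    have b1 : ∑ j ∈ Finset.range (n+1), f (j+1)^2 = P := by
      rw [Finset.sum_range_succ]; simp [hfn1]; rfl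
    have b2 : ∑ j ∈ Finset.range (n+1), f j^2 = P := by
      rw [Finset.sum_range_succ']; simp [hf0]; rfl
    have b3 : ∑ j ∈ Finset.range (n+1), f j * f (j+1) = Q := by
      rw [Finset.sum_range_succ']
      simp only [hf0, zero_mul, add_zero]
      rfl
    have b3' : ∑ j ∈ Finset.range (n+1), 2 * (f j * f (j+1)) = 2 * Q := by
      rw [← Finset.mul_sum, b3]
    rw [b1, b2, b3']
    try ring
  rw [e1, e2, e3, e4]
  ring

end Stmt6
namespace Stmt6
variable {n k : ℕ}

lemma dS_lt (S : Finset (Fin (n+1))) {j : ℕ} (hj : j < k) :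
    dS n k S j = 0 ∨ dS n k S j = 1 := by
  unfold dS
  split_ifs <;> simp
lemma dS_ge (S : Finset (Fin (n+1))) {j : ℕ} (hj : k ≤ j) :
    dS n k S j = 0 ∨ dS n k S j = -1 := by
  unfold dS
  split_ifs <;> first | (exfalso; omega) | simp

lemma Aa_Phi (S : Finset (Fin (n+1))) {m : ℕ} (hm : m ≤ n) :
    Aa n (Phi n k S) m = ∑ j ∈ Finset.range m, dS n k S j := by
  rcases Nat.eq_zero_or_pos m with h0 | h1
  · subst h0; simp [Aa_zero]
  · rw [Aa, dif_pos ⟨h1, hm⟩]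
    show ∑ j ∈ Finset.range ((m-1) + 1), dS n k S j = _
    rw [show m - 1 + 1 = m from by omega]

lemma Aa_Phi_all (hkn : k ≤ n) (S : Finset (Fin (n+1))) (hS : S.card = k)
    {m : ℕ} (hm : m ≤ n + 1) :
    Aa n (Phi n k S) m = ∑ j ∈ Finset.range m, dS n k S j := by
  rcases Nat.lt_or_ge m (n+1) with h | h
  · exact Aa_Phi S (by omega)
  · have hm' : m = n + 1 := by omega
    subst hm'
    rw [sum_dS n k hkn S, hS, Aa_gt n _ _ (by omega)]
    ring

lemma sum_dS_split (i N : ℕ) (hi : i ≤ N) (g : ℕ → ℤ) :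
    ∑ j ∈ Finset.range N, g j
      = ∑ j ∈ Finset.range i, g j + ∑ j ∈ Finset.Ico i N, g j := by
  rw [Finset.range_eq_Ico, ← Finset.sum_Ico_consecutive g (Nat.zero_le i) hi, Finset.range_eq_Ico]

lemma Phi_mem (hk1 : 1 ≤ k) (hkn : k ≤ n) (S : Finset (Fin (n+1))) (hS : S.card = k) :
    Phi n k S ∈ IA n k := by
  have htot : ∑ j ∈ Finset.range (n+1), dS n k S j = 0 := by
    rw [sum_dS n k hkn S, hS]; ring
  constructor
  · intro i
    show 0 ≤ ∑ j ∈ Finset.range ((i:ℕ)+1), dS n k S j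
    by_cases h : (i:ℕ) + 1 ≤ k
    · apply Finset.sum_nonneg
      intro j hj
      rcases dS_lt S (show j < k from by have := Finset.mem_range.mp hj; omega) with h'|h' <;> omega
    · have hsplit := sum_dS_split ((i:ℕ)+1) (n+1) (by have := i.isLt; omega) (dS n k S)
      have hneg : ∑ j ∈ Finset.Ico ((i:ℕ)+1) (n+1), dS n k S j ≤ 0 := by
        apply Finset.sum_nonpos
        intro j hj
        rcases dS_ge S (show k ≤ j from by have := (Finset.mem_Ico.mp hj).1; omega) with h'|h' <;> omega
      linarith [hsplit, hneg, htot]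
  · show qform _ _ _ = -1
    rw [qform_self hk1 hkn]
    have hd : ∀ j ∈ Finset.range (n+1),
        (Aa n (Phi n k S) (j+1) - Aa n (Phi n k S) j)^2 = (dS n k S j)^2 := by
      intro j hj
      have hj' := Finset.mem_range.mp hj
      rw [Aa_Phi_all hkn S hS (by omega : j+1 ≤ n+1), Aa_Phi_all hkn S hS (by omega : j ≤ n+1),
          Finset.sum_range_succ]
      ring_nf
    rw [Finset.sum_congr rfl hd, Aa_Phi_all hkn S hS (by omega : k ≤ n+1)]
    have hsq : ∑ j ∈ Finset.range (n+1), (dS n k S j)^2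
        = ∑ j ∈ Finset.range k, dS n k S j - ∑ j ∈ Finset.Ico k (n+1), dS n k S j := by
      rw [sum_dS_split k (n+1) (by omega) (fun j => (dS n k S j)^2)]
      congr 1
      · apply Finset.sum_congr rfl
        intro j hj
        rcases dS_lt S (Finset.mem_range.mp hj) with h'|h' <;> rw [h'] <;> ring
      · rw [← Finset.sum_neg_distrib]
        apply Finset.sum_congr rfl
        intro j hj
        rcases dS_ge S ((Finset.mem_Ico.mp hj).1) with h'|h' <;> rw [h'] <;> ring
    have hsplit := sum_dS_split k (n+1) (by omega) (dS n k S)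
    rw [hsq]
    linarith [hsplit, htot]
  
lemma IA_exists (hk1 : 1 ≤ k) (hkn : k ≤ n) (a : Fin n → ℤ) (ha : a ∈ IA n k) :
    ∃ S : Finset (Fin (n+1)), S.card = k ∧ Phi n k S = a := by
  obtain ⟨hpos, hq⟩ := ha
  set f := Aa n a with hf
  set d : ℕ → ℤ := fun j => f (j+1) - f j with hdd
  have hf0 : f 0 = 0 := Aa_zero n a
  have hfn1 : f (n+1) = 0 := Aa_gt n a (n+1) (by omega)
  have htot : ∑ j ∈ Finset.range (n+1), d j = 0 := by
    rw [Finset.sum_range_sub f (n+1), hf0, hfn1]; ring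
  have htelek : ∑ j ∈ Finset.range k, d j = f k := by
    rw [Finset.sum_range_sub f k, hf0]; ring
  rw [qform_self hk1 hkn] at hq
  have hsq : ∑ j ∈ Finset.range (n+1), (d j)^2 = 2 * f k := by
    have : ∑ j ∈ Finset.range (n+1), (f (j+1) - f j)^2
        = ∑ j ∈ Finset.range (n+1), (d j)^2 := rfl
    linarith [hq, this]
  have hsplitsq := sum_dS_split k (n+1) (by omega) (fun j => (d j)^2)
  have hsplitd := sum_dS_split k (n+1) (by omega) d
  have key : ∑ j ∈ Finset.range k, ((d j)^2 - d j)
      + ∑ j ∈ Finset.Ico k (n+1), ((d j)^2 + d j) = 0 := by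
    rw [Finset.sum_sub_distrib, Finset.sum_add_distrib]
    linarith [hsplitsq, hsplitd, hsq, htelek, htot]
  have nn1 : ∀ j : ℕ, 0 ≤ (d j)^2 - d j := by
    intro j
    rcases le_or_gt (d j) 0 with h | h
    · nlinarith [sq_nonneg (d j)]
    · have : 1 ≤ d j := h
      nlinarith
  have nn2 : ∀ j : ℕ, k ≤ j → 0 ≤ (d j)^2 + d j := by
    intro j _
    rcases le_or_gt 0 (d j) with h | h
    · nlinarith [sq_nonneg (d j)]
    · have : d j ≤ -1 := by omega
      nlinarith
  have s1nn : 0 ≤ ∑ j ∈ Finset.range k, ((d j)^2 - d j) :=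
    Finset.sum_nonneg fun j _ => nn1 j
  have s2nn : 0 ≤ ∑ j ∈ Finset.Ico k (n+1), ((d j)^2 + d j) :=
    Finset.sum_nonneg fun j hj => nn2 j (Finset.mem_Ico.mp hj).1
  have z1 : ∀ j ∈ Finset.range k, (d j)^2 - d j = 0 := by
    rw [← Finset.sum_eq_zero_iff_of_nonneg (fun j _ => nn1 j)]
    linarith [key, s2nn]
  have z2 : ∀ j ∈ Finset.Ico k (n+1), (d j)^2 + d j = 0 := by
    rw [← Finset.sum_eq_zero_iff_of_nonneg (fun j hj => nn2 j (Finset.mem_Ico.mp hj).1)]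
    linarith [key, s1nn]
  have v1 : ∀ j, j < k → d j = 0 ∨ d j = 1 := by
    intro j hj
    have h := z1 j (Finset.mem_range.mpr hj)
    have : d j * (d j - 1) = 0 := by linear_combination h
    rcases mul_eq_zero.mp this with h' | h'
    · left; exact h'
    · right; linarith
  have v2 : ∀ j, k ≤ j → j ≤ n → d j = 0 ∨ d j = -1 := by
    intro j hj hj'
    have h := z2 j (Finset.mem_Ico.mpr ⟨hj, by omega⟩)
    have : d j * (d j + 1) = 0 := by linear_combination h
    rcases mul_eq_zero.mp this with h' | h'
    · left; exact h'
    · right; linarith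
  set S : Finset (Fin (n+1)) := Finset.univ.filter (fun p : Fin (n+1) =>
      if (p:ℕ) < k then d (p:ℕ) = 0 else d (p:ℕ) = -1) with hSdef
  have hdS : ∀ j, j ≤ n → dS n k S j = d j := by
    intro j hj
    have hjlt : j < n + 1 := by omega
    have hmem : ((⟨j, hjlt⟩ : Fin (n+1)) ∈ S) ↔ (if j < k then d j = 0 else d j = -1) := by
      rw [hSdef, Finset.mem_filter]
      simp
    rw [dS, dif_pos hjlt]
    by_cases hjk : j < k
    · rw [if_pos hjk]
      rcases v1 j hjk with h' | h'
      · rw [if_pos (hmem.mpr (by rw [if_pos hjk]; exact h')), h']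
      · rw [if_neg (fun hm => by
          have h2 := hmem.mp hm
          rw [if_pos hjk] at h2
          omega), h']
    · rw [if_neg hjk]
      rcases v2 j (by omega) hj with h' | h'
      · rw [if_neg (fun hm => by
          have h2 := hmem.mp hm
          rw [if_neg hjk] at h2
          omega), h']
      · rw [if_pos (hmem.mpr (by rw [if_neg hjk]; exact h')), h']
  have hcard : S.card = k := by
    have hsum := sum_dS n k hkn S
    rw [Finset.sum_congr rfl (fun j hj => hdS j (by
      have := Finset.mem_range.mp hj; omega)), htot] at hsum
    have h2 : (S.card : ℤ) = (k : ℤ) := by linarith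
    exact_mod_cast h2
  refine ⟨S, hcard, ?_⟩
  funext i
  show ∑ j ∈ Finset.range ((i:ℕ)+1), dS n k S j = a i
  rw [Finset.sum_congr rfl (fun j hj => hdS j (by
    have := Finset.mem_range.mp hj
    have := i.isLt
    omega))]
  have hst : ∑ j ∈ Finset.range ((i:ℕ)+1), d j = f ((i:ℕ)+1) - f 0 := by
    simp only [hdd]
    exact Finset.sum_range_sub f ((i:ℕ)+1)
  rw [hst, hf0, hf, Aa, dif_pos ⟨by omega, by have := i.isLt; omega⟩]
  rw [sub_zero]
  exact congrArg a (by apply Fin.ext; simp)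

end Stmt6
namespace Stmt6
variable {n k : ℕ}

lemma f_Phi (hk1 : 1 ≤ k) (hkn : k ≤ n) (S : Finset (Fin (n+1))) (hS : S.card = k)
    (i : Fin (n+1)) (hi : 1 ≤ (i:ℕ)) :
    qform (gramA n k) (lA n (Phi n k S)) (Pi.single i 1)
      = (if (⟨(i:ℕ)-1, by omega⟩ : Fin (n+1)) ∈ S then 1 else 0)
        - (if i ∈ S then 1 else 0) := by
  have hiLt := i.isLt
  rw [qform_single, rowsum hk1 hkn _ i hi]
  rw [Aa_Phi_all hkn S hS (show (i:ℕ)-1 ≤ n+1 from by omega),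
      Aa_Phi_all hkn S hS (show (i:ℕ)+1 ≤ n+1 from by omega),
      Aa_Phi_all hkn S hS (show (i:ℕ) ≤ n+1 from by omega)]
  have h1 := Finset.sum_range_succ (dS n k S) (i:ℕ)
  have h2 := Finset.sum_range_succ (dS n k S) ((i:ℕ)-1)
  rw [show (i:ℕ)-1+1 = (i:ℕ) from by omega] at h2
  set pm : Fin (n+1) := ⟨(i:ℕ)-1, by omega⟩ with hpm
  have b1 := dS_eq n k S pm
  have b2 := dS_eq n k S i
  have hpmv : (pm : ℕ) = (i:ℕ) - 1 := rfl
  rw [hpmv] at b1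
  rcases lt_trichotomy (i:ℕ) k with h | h | h
  · rw [if_neg (by omega : ¬ (i:ℕ) = k)]
    rw [if_pos (by omega : (i:ℕ) - 1 < k)] at b1
    rw [if_pos h] at b2
    linarith [h1, h2, b1, b2]
  · rw [if_pos h]
    rw [if_pos (by omega : (i:ℕ) - 1 < k)] at b1
    rw [if_neg (by omega : ¬ (i:ℕ) < k)] at b2
    linarith [h1, h2, b1, b2]
  · rw [if_neg (by omega : ¬ (i:ℕ) = k)]
    rw [if_neg (by omega : ¬ (i:ℕ) - 1 < k)] at b1
    rw [if_neg (by omega : ¬ (i:ℕ) < k)] at b2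
    linarith [h1, h2, b1, b2]

lemma Phi_inj (hkn : k ≤ n) {S T : Finset (Fin (n+1))} (hS : S.card = k) (hT : T.card = k)
    (h : Phi n k S = Phi n k T) : S = T := by
  have hps : ∀ m, m ≤ n+1 → ∑ j ∈ Finset.range m, dS n k S j
      = ∑ j ∈ Finset.range m, dS n k T j := by
    intro m hm
    rw [← Aa_Phi_all hkn S hS hm, ← Aa_Phi_all hkn T hT hm, h]
  have hd : ∀ j, j ≤ n → dS n k S j = dS n k T j := by
    intro j hj
    have e1 := hps (j+1) (by omega)
    have e0 := hps j (by omega)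
    have f1 := Finset.sum_range_succ (dS n k S) j
    have f2 := Finset.sum_range_succ (dS n k T) j
    linarith
  ext p
  have hp := hd (p:ℕ) (by have := p.isLt; omega)
  rw [dS_eq, dS_eq] at hp
  have hind : (if p ∈ S then (1:ℤ) else 0) = (if p ∈ T then 1 else 0) := by linarith
  by_cases h1 : p ∈ S <;> by_cases h2 : p ∈ T <;>
    first | tauto | (exfalso; simp [h1, h2] at hind)

end Stmt6
namespace Stmt6
variable {n k : ℕ}

lemma card_R (p q : Fin (n+1)) (hpq : p ≠ q) :
    ((Finset.univ.erase p).erase q).card = n - 1 := by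
  rw [Finset.card_erase_of_mem (Finset.mem_erase.mpr ⟨Ne.symm hpq, Finset.mem_univ q⟩),
      Finset.card_erase_of_mem (Finset.mem_univ p), Finset.card_univ, Fintype.card_fin]
  omega

lemma count_in_out (hk1 : 1 ≤ k) (p q : Fin (n+1)) (hpq : p ≠ q) :
    ((Finset.univ.powersetCard k).filter (fun S => p ∈ S ∧ q ∉ S)).card
      = (n-1).choose (k-1) := by
  rw [← card_R p q hpq, ← Finset.card_powersetCard (k-1) ((Finset.univ.erase p).erase q)]
  refine Finset.card_bij' (fun S _ => S.erase p) (fun T _ => insert p T) ?hi ?hj ?li ?ri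
  case hi =>
    intro S hS
    rw [Finset.mem_filter, Finset.mem_powersetCard] at hS
    obtain ⟨⟨_, hcard⟩, hp, hq⟩ := hS
    rw [Finset.mem_powersetCard]
    refine ⟨?_, by rw [Finset.card_erase_of_mem hp, hcard]⟩
    intro x hx
    rw [Finset.mem_erase] at hx
    rw [Finset.mem_erase, Finset.mem_erase]
    exact ⟨fun h => hq (h ▸ hx.2), hx.1, Finset.mem_univ x⟩
  case hj =>
    intro T hT
    rw [Finset.mem_powersetCard] at hT
    obtain ⟨hsub, hcard⟩ := hT
    have hpT : p ∉ T := fun h => by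
      have := hsub h
      rw [Finset.mem_erase, Finset.mem_erase] at this
      exact this.2.1 rfl
    have hqT : q ∉ T := fun h => by
      have := hsub h
      rw [Finset.mem_erase] at this
      exact this.1 rfl
    rw [Finset.mem_filter, Finset.mem_powersetCard]
    refine ⟨⟨Finset.subset_univ _, ?_⟩, Finset.mem_insert_self p T, ?_⟩
    · rw [Finset.card_insert_of_notMem hpT, hcard]; omega
    · rw [Finset.mem_insert]
      push_neg
      exact ⟨Ne.symm hpq, hqT⟩
  case li =>
    intro S hS
    rw [Finset.mem_filter] at hS
    exact Finset.insert_erase hS.2.1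
  case ri =>
    intro T hT
    rw [Finset.mem_powersetCard] at hT
    apply Finset.erase_insert
    intro h
    have := hT.1 h
    rw [Finset.mem_erase, Finset.mem_erase] at this
    exact this.2.1 rfl

lemma count_in_in (hk2 : 2 ≤ k) (p q : Fin (n+1)) (hpq : p ≠ q) :
    ((Finset.univ.powersetCard k).filter (fun S => p ∈ S ∧ q ∈ S)).card
      = (n-1).choose (k-2) := by
  rw [← card_R p q hpq, ← Finset.card_powersetCard (k-2) ((Finset.univ.erase p).erase q)]
  refine Finset.card_bij' (fun S _ => (S.erase p).erase q) (fun T _ => insert p (insert q T)) ?hi ?hj ?li ?ri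
  case hi =>
    intro S hS
    rw [Finset.mem_filter, Finset.mem_powersetCard] at hS
    obtain ⟨⟨_, hcard⟩, hp, hq⟩ := hS
    rw [Finset.mem_powersetCard]
    constructor
    · intro x hx
      rw [Finset.mem_erase, Finset.mem_erase] at hx
      rw [Finset.mem_erase, Finset.mem_erase]
      exact ⟨hx.1, hx.2.1, Finset.mem_univ x⟩
    · rw [Finset.card_erase_of_mem (Finset.mem_erase.mpr ⟨Ne.symm hpq, hq⟩),
          Finset.card_erase_of_mem hp, hcard]
      omega
  case hj =>
    intro T hT
    rw [Finset.mem_powersetCard] at hT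
    obtain ⟨hsub, hcard⟩ := hT
    have hpT : p ∉ T := fun h => by
      have := hsub h
      rw [Finset.mem_erase, Finset.mem_erase] at this
      exact this.2.1 rfl
    have hqT : q ∉ T := fun h => by
      have := hsub h
      rw [Finset.mem_erase] at this
      exact this.1 rfl
    have hpqT : p ∉ insert q T := by
      rw [Finset.mem_insert]; push_neg; exact ⟨hpq, hpT⟩
    rw [Finset.mem_filter, Finset.mem_powersetCard]
    refine ⟨⟨Finset.subset_univ _, ?_⟩, Finset.mem_insert_self p _, ?_⟩
    · rw [Finset.card_insert_of_notMem hpqT, Finset.card_insert_of_notMem hqT, hcard]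
      omega
    · rw [Finset.mem_insert]
      right
      exact Finset.mem_insert_self q T
  case li =>
    intro S hS
    rw [Finset.mem_filter] at hS
    rw [Finset.insert_erase (Finset.mem_erase.mpr ⟨Ne.symm hpq, hS.2.2⟩),
        Finset.insert_erase hS.2.1]
  case ri =>
    intro T hT
    rw [Finset.mem_powersetCard] at hT
    have hqT : q ∉ T := fun h => by
      have := hT.1 h
      rw [Finset.mem_erase] at this
      exact this.1 rfl
    have hpqT : p ∉ insert q T := by
      rw [Finset.mem_insert]
      push_neg
      refine ⟨hpq, fun h => ?_⟩
      have := hT.1 h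
      rw [Finset.mem_erase, Finset.mem_erase] at this
      exact this.2.1 rfl
    rw [Finset.erase_insert hpqT, Finset.erase_insert hqT]

lemma count_in_in_one (hk : k = 1) (p q : Fin (n+1)) (hpq : p ≠ q) :
    ((Finset.univ.powersetCard k).filter (fun S => p ∈ S ∧ q ∈ S)).card = 0 := by
  rw [Finset.card_eq_zero, Finset.eq_empty_iff_forall_notMem]
  intro S hS
  rw [Finset.mem_filter, Finset.mem_powersetCard] at hS
  obtain ⟨⟨_, hcard⟩, hp, hq⟩ := hS
  obtain ⟨x, hx⟩ := Finset.card_eq_one.mp (hk ▸ hcard)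
  rw [hx, Finset.mem_singleton] at hp hq
  exact hpq (hp.trans hq.symm)

lemma count_out_out (p q : Fin (n+1)) (hpq : p ≠ q) :
    ((Finset.univ.powersetCard k).filter (fun S => p ∉ S ∧ q ∉ S)).card
      = (n-1).choose k := by
  rw [← card_R p q hpq, ← Finset.card_powersetCard k ((Finset.univ.erase p).erase q)]
  congr 1
  ext S
  rw [Finset.mem_filter, Finset.mem_powersetCard, Finset.mem_powersetCard]
  constructor
  · rintro ⟨⟨_, hcard⟩, hp, hq⟩
    refine ⟨fun x hx => ?_, hcard⟩
    rw [Finset.mem_erase, Finset.mem_erase]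
    exact ⟨fun h => hq (h ▸ hx), fun h => hp (h ▸ hx), Finset.mem_univ x⟩
  · rintro ⟨hsub, hcard⟩
    refine ⟨⟨Finset.subset_univ _, hcard⟩, fun h => ?_, fun h => ?_⟩
    · have := hsub h
      rw [Finset.mem_erase, Finset.mem_erase] at this
      exact this.2.1 rfl
    · have := hsub h
      rw [Finset.mem_erase] at this
      exact this.1 rfl

end Stmt6

/-- in the `(Aₙ, C_k)` lattice, for every index `i` with `1 ≤ i ≤ n`:
`⟨l(a), Cᵢ⟩ ∈ {-1,0,1}` for every `a ∈ I`; the number of `a ∈ I` with `⟨l(a), Cᵢ⟩ = 1`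
equals `(n-1).choose (k-1)`, likewise for `⟨l(a), Cᵢ⟩ = -1`, and the number with
`⟨l(a), Cᵢ⟩ = 0` equals `(n-1).choose k + (n-1).choose (k-2)`, binomial coefficients with
a negative lower index being `0`. -/
theorem stmt6 (n k : ℕ) (hn : 1 ≤ n) (hk1 : 1 ≤ k) (hkn : k ≤ n)
    (i : Fin (n + 1)) (hi : 1 ≤ (i : ℕ)) :
    (∀ a ∈ IA n k, qform (gramA n k) (lA n a) (Pi.single i 1) ∈ ({-1, 0, 1} : Set ℤ))
    ∧ {a ∈ IA n k | qform (gramA n k) (lA n a) (Pi.single i 1) = 1}.ncard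
        = Nat.choose (n - 1) (k - 1)
    ∧ {a ∈ IA n k | qform (gramA n k) (lA n a) (Pi.single i 1) = -1}.ncard
        = Nat.choose (n - 1) (k - 1)
    ∧ {a ∈ IA n k | qform (gramA n k) (lA n a) (Pi.single i 1) = 0}.ncard
        = Nat.choose (n - 1) k + (if 2 ≤ k then Nat.choose (n - 1) (k - 2) else 0) := by
  classical
  have hiLt := i.isLt
  have hpmlt : (i:ℕ) - 1 < n + 1 := by omega
  set p : Fin (n+1) := ⟨(i:ℕ)-1, hpmlt⟩ with hpdef
  have hpi : p ≠ i := by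
    intro h
    have h2 : (p:ℕ) = (i:ℕ) := congrArg Fin.val h
    have h3 : (p:ℕ) = (i:ℕ) - 1 := rfl
    omega
  have hchar : ∀ c : ℤ, {a ∈ IA n k | qform (gramA n k) (lA n a) (Pi.single i 1) = c}
      = Stmt6.Phi n k '' ↑((Finset.univ.powersetCard k).filter
          (fun S => (if p ∈ S then (1:ℤ) else 0) - (if i ∈ S then 1 else 0) = c)) := by
    intro c
    ext a
    simp only [Set.mem_setOf_eq, Set.mem_image, Finset.mem_coe, Finset.mem_filter,
      Finset.mem_powersetCard]
    constructor
    · rintro ⟨haIA, hqc⟩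
      obtain ⟨S, hSc, hPhi⟩ := Stmt6.IA_exists hk1 hkn a haIA
      refine ⟨S, ⟨⟨Finset.subset_univ _, hSc⟩, ?_⟩, hPhi⟩
      rw [← hqc, ← hPhi, Stmt6.f_Phi hk1 hkn S hSc i hi]
    · rintro ⟨S, ⟨⟨_, hSc⟩, hcond⟩, rfl⟩
      refine ⟨Stmt6.Phi_mem hk1 hkn S hSc, ?_⟩
      rw [Stmt6.f_Phi hk1 hkn S hSc i hi]
      exact hcond
  have hncard : ∀ (F : Finset (Finset (Fin (n+1)))),
      F ⊆ Finset.univ.powersetCard k → (Stmt6.Phi n k '' ↑F).ncard = F.card := by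
    intro F hF
    have hinj : Set.InjOn (Stmt6.Phi n k) ↑F := by
      intro S hS T hT h
      exact Stmt6.Phi_inj hkn
        (Finset.mem_powersetCard.mp (hF (Finset.mem_coe.mp hS))).2
        (Finset.mem_powersetCard.mp (hF (Finset.mem_coe.mp hT))).2 h
    rw [Set.ncard_image_of_injOn hinj, Set.ncard_coe_finset]
  refine ⟨?_, ?_, ?_, ?_⟩
  · intro a ha
    obtain ⟨S, hSc, hPhi⟩ := Stmt6.IA_exists hk1 hkn a ha
    rw [← hPhi, Stmt6.f_Phi hk1 hkn S hSc i hi]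
    have : (⟨(i:ℕ)-1, by omega⟩ : Fin (n+1)) = p := rfl
    rw [this]
    by_cases h1 : p ∈ S <;> by_cases h2 : i ∈ S <;>
      simp [h1, h2, Set.mem_insert_iff, Set.mem_singleton_iff]
  · rw [hchar 1, hncard _ (Finset.filter_subset _ _)]
    rw [Finset.filter_congr (fun S _ => by
      by_cases h1 : p ∈ S <;> by_cases h2 : i ∈ S <;> simp [h1, h2] :
      ∀ S ∈ Finset.univ.powersetCard k,
        ((if p ∈ S then (1:ℤ) else 0) - (if i ∈ S then 1 else 0) = 1) ↔ (p ∈ S ∧ i ∉ S))]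
    exact Stmt6.count_in_out hk1 p i hpi
  · rw [hchar (-1), hncard _ (Finset.filter_subset _ _)]
    rw [Finset.filter_congr (fun S _ => by
      by_cases h1 : p ∈ S <;> by_cases h2 : i ∈ S <;> simp [h1, h2] :
      ∀ S ∈ Finset.univ.powersetCard k,
        ((if p ∈ S then (1:ℤ) else 0) - (if i ∈ S then 1 else 0) = -1) ↔ (i ∈ S ∧ p ∉ S))]
    exact Stmt6.count_in_out hk1 i p (Ne.symm hpi)
  · rw [hchar 0, hncard _ (Finset.filter_subset _ _)]
    rw [Finset.filter_congr (fun S _ => by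
      by_cases h1 : p ∈ S <;> by_cases h2 : i ∈ S <;> simp [h1, h2] :
      ∀ S ∈ Finset.univ.powersetCard k,
        ((if p ∈ S then (1:ℤ) else 0) - (if i ∈ S then 1 else 0) = 0)
          ↔ ((p ∈ S ∧ i ∈ S) ∨ (p ∉ S ∧ i ∉ S)))]
    rw [Finset.filter_or]
    rw [Finset.card_union_of_disjoint (by
      rw [Finset.disjoint_left]
      intro S hS1 hS2
      rw [Finset.mem_filter] at hS1 hS2
      tauto)]
    have e2 := Stmt6.count_out_out (k := k) p i hpi
    by_cases hk2 : 2 ≤ k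
    · rw [Stmt6.count_in_in hk2 p i hpi, e2, if_pos hk2]
      omega
    · rw [Stmt6.count_in_in_one (by omega) p i hpi, e2, if_neg hk2]
      omega
end

section
/- For every integer n ≥ 4 and all integers a_1, …, a_n, one has a_1 + Σ_{i=1}^{n−2} a_i·a_{i+1} + a_{n−2}·a_n ≤ Σ_{i=1}^n a_i². Equivalently, in the (D_n, C_1) lattice every class of the form l(a) = C_0 + Σ_{i=1}^n a_i C_i with integer coefficients satisfies ⟨l(a), l(a)⟩ ≤ −1. -/
open Finset


/-- The Gram matrix of the `(Dₙ, C_k)` lattice: basis `C₀, C₁, …, Cₙ` (index `i : Fin (n+1)`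
corresponds to `Cᵢ`), with `⟨C₀,C₀⟩ = -1`, `⟨Cᵢ,Cᵢ⟩ = -2` for `1 ≤ i ≤ n`,
`⟨Cᵢ,Cᵢ₊₁⟩ = 1` for `1 ≤ i ≤ n-2`, `⟨C_{n-2},Cₙ⟩ = 1`, `⟨C₀,C_k⟩ = 1`, and all other
off-diagonal entries `0`. -/
def gramD (n k : ℕ) (i j : Fin (n + 1)) : ℤ :=
  if i = j then (if (i : ℕ) = 0 then -1 else -2)
  else if (1 ≤ (i : ℕ) ∧ (j : ℕ) = (i : ℕ) + 1 ∧ (j : ℕ) < n)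
      ∨ (1 ≤ (j : ℕ) ∧ (i : ℕ) = (j : ℕ) + 1 ∧ (i : ℕ) < n)
      ∨ ((i : ℕ) = n - 2 ∧ (j : ℕ) = n) ∨ ((j : ℕ) = n - 2 ∧ (i : ℕ) = n)
      ∨ ((i : ℕ) = 0 ∧ (j : ℕ) = k) ∨ ((j : ℕ) = 0 ∧ (i : ℕ) = k) then 1
  else 0

/-- The class `l(a) = C₀ + ∑ aᵢ Cᵢ`, as a coordinate vector. -/
def lD (n : ℕ) (a : Fin n → ℤ) : Fin (n + 1) → ℤ := Fin.cons 1 a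

/-- The set `I` of coefficient tuples `a ∈ ℤⁿ` with all `aᵢ ≥ 0` and `⟨l(a), l(a)⟩ = -1`. -/
def ID (n k : ℕ) : Set (Fin n → ℤ) :=
  {a | (∀ i, 0 ≤ a i) ∧ qform (gramD n k) (lD n a) (lD n a) = -1}


section Aux

lemma keyId (m : ℕ) (a : ℕ → ℤ) :
    2*(∑ i ∈ Icc 1 (m+4), a i ^ 2)
    = 2*a 1 + 2*(∑ i ∈ Icc 1 (m+2), a i * a (i+1)) + 2*(a (m+2) * a (m+4))
      + ((a 1 - 1)^2 - 1 + (∑ i ∈ Icc 2 (m+2), (a i - a (i-1))^2)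
        + (a (m+3) + a (m+4) - a (m+2))^2 + (a (m+4) - a (m+3))^2) := by
  induction m with
  | zero =>
    simp [Finset.sum_Icc_succ_top, show (1:ℕ) ≤ 2 by norm_num, show (1:ℕ) ≤ 3 by norm_num,
      show (1:ℕ) ≤ 4 by norm_num]
    ring
  | succ m ih =>
    have h1 : ∑ i ∈ Icc 1 (m+1+4), a i ^ 2
        = (∑ i ∈ Icc 1 (m+4), a i ^ 2) + a (m+5) ^ 2 := by
      rw [show m+1+4 = (m+4)+1 from rfl, Finset.sum_Icc_succ_top (by omega)]
    have h2 : ∑ i ∈ Icc 1 (m+1+2), a i * a (i+1)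
        = (∑ i ∈ Icc 1 (m+2), a i * a (i+1)) + a (m+3) * a (m+4) := by
      rw [show m+1+2 = (m+2)+1 from rfl, Finset.sum_Icc_succ_top (by omega)]
    have h3 : ∑ i ∈ Icc 2 (m+1+2), (a i - a (i-1))^2
        = (∑ i ∈ Icc 2 (m+2), (a i - a (i-1))^2) + (a (m+3) - a (m+2))^2 := by
      rw [show m+1+2 = (m+2)+1 from rfl, Finset.sum_Icc_succ_top (by omega)]
      norm_num
    rw [h1, h2, h3]
    linear_combination ih

lemma part1 (n : ℕ) (hn : 4 ≤ n) (a : ℕ → ℤ) :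
    a 1 + (∑ i ∈ Finset.Icc 1 (n - 2), a i * a (i + 1)) + a (n - 2) * a n
      ≤ ∑ i ∈ Finset.Icc 1 n, (a i) ^ 2 := by
  obtain ⟨m, rfl⟩ : ∃ m, n = m + 4 := ⟨n - 4, by omega⟩
  have hk := keyId m a
  have h2 : (m + 4) - 2 = m + 2 := by omega
  rw [h2]
  have hT : 0 ≤ ∑ i ∈ Icc 2 (m+2), (a i - a (i-1))^2 :=
    Finset.sum_nonneg fun i _ => sq_nonneg _
  nlinarith [sq_nonneg (a 1 - 1), sq_nonneg (a (m+3) + a (m+4) - a (m+2)),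
    sq_nonneg (a (m+4) - a (m+3)), hk, hT]


def PU (n i j : ℕ) : Prop :=
  (1 ≤ i ∧ j = i + 1 ∧ j < n) ∨ (i = n - 2 ∧ j = n) ∨ (i = 0 ∧ j = 1)

instance (n i j : ℕ) : Decidable (PU n i j) := by unfold PU; infer_instance

set_option maxHeartbeats 1000000 in
lemma gram_split (n : ℕ) (hn : 4 ≤ n) (i j : Fin (n+1)) :
    gramD n 1 i j
      = (if (i:ℕ) = (j:ℕ) then (if (i : ℕ) = 0 then -1 else -2) else 0)
        + (if PU n i j then 1 else 0) + (if PU n j i then 1 else 0) := by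
  unfold gramD PU
  simp only [Fin.ext_iff]
  split_ifs <;> omega

lemma ite_or3 {A B C : Prop} [Decidable A] [Decidable B] [Decidable C]
    (hAB : ¬(A ∧ B)) (hAC : ¬(A ∧ C)) (hBC : ¬(B ∧ C)) (v : ℤ) :
    (if A ∨ B ∨ C then v else 0)
      = (if A then v else 0) + (if B then v else 0) + (if C then v else 0) := by
  split_ifs <;> simp_all

lemma sum_ite_and {n : ℕ} (c : Prop) [Decidable c] (f : ℕ → ℤ) (t : ℕ)
    (ht : c → t ∈ Finset.range n) :
    ∑ j ∈ Finset.range n, (if c ∧ j = t then f j else 0) = if c then f t else 0 := by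
  by_cases hc : c
  · simp only [hc, true_and, if_true]
    rw [Finset.sum_ite_eq' (Finset.range n) t f, if_pos (ht hc)]
  · simp [hc]

/-- the coefficient vector extended to ℕ -/
def bD (n : ℕ) (a : Fin n → ℤ) (k : ℕ) : ℤ :=
  if h : k < n + 1 then lD n a ⟨k, h⟩ else 0

lemma bD_coe (n : ℕ) (a : Fin n → ℤ) (i : Fin (n+1)) : bD n a i = lD n a i := by
  simp [bD, i.isLt]

lemma bD_zero (n : ℕ) (a : Fin n → ℤ) : bD n a 0 = 1 := by
  simp [bD, lD]

lemma qform_eval_s7 (n : ℕ) (hn : 4 ≤ n) (a : Fin n → ℤ) :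
    qform (gramD n 1) (lD n a) (lD n a)
      = -1 - 2 * (∑ i ∈ Icc 1 n, bD n a i ^ 2) + 2 * bD n a 1
        + 2 * (∑ i ∈ Icc 1 (n-2), bD n a i * bD n a (i+1))
        + 2 * (bD n a (n-2) * bD n a n) := by
  set x := lD n a with hx
  set b := bD n a with hb
  have hSU : (∑ i : Fin (n+1), ∑ j : Fin (n+1), x i * (if PU n i j then (1:ℤ) else 0) * x j)
      = b 1 + (∑ i ∈ Icc 1 (n-2), b i * b (i+1)) + b (n-2) * b n := by
    have step1 : (∑ i : Fin (n+1), ∑ j : Fin (n+1), x i * (if PU n i j then (1:ℤ) else 0) * x j)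
        = ∑ i ∈ range (n+1), ∑ j ∈ range (n+1), (if PU n i j then b i * b j else 0) := by
      rw [← Fin.sum_univ_eq_sum_range (fun i => ∑ j ∈ range (n+1),
        (if PU n i j then b i * b j else 0)) (n+1)]
      refine Finset.sum_congr rfl fun i _ => ?_
      rw [← Fin.sum_univ_eq_sum_range (fun j => (if PU n (i:ℕ) j then b i * b j else 0)) (n+1)]
      refine Finset.sum_congr rfl fun j _ => ?_
      rw [hb, bD_coe, bD_coe, ← hx]
      split_ifs <;> ring
    rw [step1]
    have step2 : ∀ i ∈ range (n+1), (∑ j ∈ range (n+1), (if PU n i j then b i * b j else 0))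
        = (if 1 ≤ i ∧ i + 1 < n then b i * b (i+1) else 0)
          + (if i = n - 2 then b i * b n else 0)
          + (if i = 0 then b 0 * b 1 else 0) := by
      intro i hi
      have expand : ∀ j, (if PU n i j then b i * b j else 0)
          = (if (1 ≤ i ∧ i + 1 < n) ∧ j = i + 1 then b i * b j else 0)
            + (if i = n - 2 ∧ j = n then b i * b j else 0)
            + (if i = 0 ∧ j = 1 then b i * b j else 0) := by
        intro j
        simp only [PU]
        rw [ite_or3 (by omega) (by omega) (by omega)]
        congr 2
        exact if_congr (by omega) rfl rfl
      simp only [expand, Finset.sum_add_distrib]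
      rw [sum_ite_and _ _ _ (fun hc => by simp only [Finset.mem_range]; omega),
        sum_ite_and _ _ _ (fun hc => by simp only [Finset.mem_range]; omega),
        sum_ite_and _ _ _ (fun hc => by simp only [Finset.mem_range]; omega)]
      congr 1
      split_ifs with h
      · rw [h]
      · rfl
    rw [Finset.sum_congr rfl step2]
    simp only [Finset.sum_add_distrib]
    rw [Finset.sum_ite_eq' (range (n+1)) (n-2) (fun i => b i * b n),
      if_pos (by simp only [Finset.mem_range]; omega),
      Finset.sum_ite_eq' (range (n+1)) 0 (fun _ => b 0 * b 1),
      if_pos (by simp only [Finset.mem_range]; omega)]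
    have hfil : ∑ i ∈ range (n+1), (if 1 ≤ i ∧ i + 1 < n then b i * b (i+1) else 0)
        = ∑ i ∈ Icc 1 (n-2), b i * b (i+1) := by
      rw [← Finset.sum_filter]
      apply Finset.sum_congr _ fun _ _ => rfl
      ext i
      simp only [Finset.mem_filter, Finset.mem_range, Finset.mem_Icc]
      omega
    rw [hfil, hb, bD_zero]
    ring
  have hSD : (∑ i : Fin (n+1), ∑ j : Fin (n+1),
        x i * (if (i:ℕ) = (j:ℕ) then (if (i:ℕ) = 0 then (-1:ℤ) else -2) else 0) * x j)
      = -1 - 2 * (∑ i ∈ Icc 1 n, b i ^ 2) := by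
    have inner : ∀ i : Fin (n+1), (∑ j : Fin (n+1),
          x i * (if (i:ℕ) = (j:ℕ) then (if (i:ℕ) = 0 then (-1:ℤ) else -2) else 0) * x j)
        = x i * (if (i:ℕ) = 0 then (-1:ℤ) else -2) * x i := by
      intro i
      have : ∀ j : Fin (n+1),
          x i * (if (i:ℕ) = (j:ℕ) then (if (i:ℕ) = 0 then (-1:ℤ) else -2) else 0) * x j
          = if i = j then x i * (if (i:ℕ) = 0 then (-1:ℤ) else -2) * x j else 0 := by
        intro j
        simp only [Fin.ext_iff]
        split_ifs <;> ring
      simp only [this]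
      rw [Finset.sum_ite_eq Finset.univ i
        (fun j => x i * (if (i:ℕ) = 0 then (-1:ℤ) else -2) * x j), if_pos (Finset.mem_univ i)]
    rw [Finset.sum_congr rfl (fun i _ => inner i)]
    have hbsum : (∑ i ∈ Icc 1 n, b i ^ 2) = ∑ i : Fin n, a i ^ 2 := by
      rw [← Finset.Ico_add_one_right_eq_Icc, Finset.sum_Ico_eq_sum_range]
      simp only [show n + 1 - 1 = n from rfl]
      rw [← Fin.sum_univ_eq_sum_range (fun i => b (1 + i) ^ 2) n]
      refine Finset.sum_congr rfl fun i _ => ?_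
      have h1 : (1 + (i:ℕ)) < n + 1 := by omega
      have h2 : (⟨1 + (i:ℕ), h1⟩ : Fin (n+1)) = Fin.succ i := Fin.ext (by simp [Nat.add_comm])
      rw [hb]
      simp only [bD, dif_pos h1, h2, lD, Fin.cons_succ]
    rw [hbsum, Fin.sum_univ_succ]
    simp only [hx, lD, Fin.cons_zero, Fin.cons_succ, Fin.val_zero, Fin.val_succ]
    norm_num
    have hsq : (∑ i : Fin n, a i * 2 * a i) = 2 * ∑ i : Fin n, a i ^ 2 := by
      rw [Finset.mul_sum]
      exact Finset.sum_congr rfl fun i _ => by ring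
    linarith [hsq]
  have hswap : (∑ i : Fin (n+1), ∑ j : Fin (n+1), x i * (if PU n j i then (1:ℤ) else 0) * x j)
      = ∑ i : Fin (n+1), ∑ j : Fin (n+1), x i * (if PU n i j then (1:ℤ) else 0) * x j := by
    rw [Finset.sum_comm]
    exact Finset.sum_congr rfl fun i _ => Finset.sum_congr rfl fun j _ => by ring
  have hq : qform (gramD n 1) x x
      = (∑ i : Fin (n+1), ∑ j : Fin (n+1),
          x i * (if (i:ℕ) = (j:ℕ) then (if (i:ℕ) = 0 then (-1:ℤ) else -2) else 0) * x j)
        + (∑ i : Fin (n+1), ∑ j : Fin (n+1), x i * (if PU n i j then (1:ℤ) else 0) * x j)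
        + (∑ i : Fin (n+1), ∑ j : Fin (n+1), x i * (if PU n j i then (1:ℤ) else 0) * x j) := by
    unfold qform
    rw [← Finset.sum_add_distrib, ← Finset.sum_add_distrib]
    refine Finset.sum_congr rfl fun i _ => ?_
    rw [← Finset.sum_add_distrib, ← Finset.sum_add_distrib]
    refine Finset.sum_congr rfl fun j _ => ?_
    rw [gram_split n hn i j]
    ring
  rw [hq, hswap, hSU, hSD]
  ring

end Aux

/-- for every `n ≥ 4` and all integers `a₁, …, aₙ`,
`a₁ + ∑_{i=1}^{n-2} aᵢ·aᵢ₊₁ + a_{n-2}·aₙ ≤ ∑_{i=1}^n aᵢ²`; equivalently, in the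
`(Dₙ, C₁)` lattice every class `l(a) = C₀ + ∑ aᵢ Cᵢ` satisfies `⟨l(a), l(a)⟩ ≤ -1`. -/

theorem stmt7 (n : ℕ) (hn : 4 ≤ n) :
    (∀ a : ℕ → ℤ,
      a 1 + (∑ i ∈ Finset.Icc 1 (n - 2), a i * a (i + 1)) + a (n - 2) * a n
        ≤ ∑ i ∈ Finset.Icc 1 n, (a i) ^ 2)
    ∧ ∀ a : Fin n → ℤ, qform (gramD n 1) (lD n a) (lD n a) ≤ -1 := by
  refine ⟨part1 n hn, fun a => ?_⟩
  have h1 := qform_eval_s7 n hn a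
  have h2 := part1 n hn (bD n a)
  linarith
end

section
/- In the (D_n, C_1) lattice, set l^{(m)} := C_0 + Σ_{i=1}^m C_i for 0 ≤ m ≤ n−1 and F := 2C_0 + 2Σ_{i=1}^{n−2} C_i + C_{n−1} + C_n. Then the set I = { a ∈ ℤ^n : a_i ≥ 0 for all i and ⟨l(a), l(a)⟩ = −1 } consists exactly of the classes l^{(m)} (0 ≤ m ≤ n−1) together with the classes F − l^{(m)} (0 ≤ m ≤ n−1), identifying each class C_0 + Σ a_i C_i with its coefficient tuple a; in particular |I| = 2n. -/
/-- The coefficient tuple of `l⁽ᵐ⁾ = C₀ + ∑_{i=1}^m Cᵢ`: `m` ones followed by zeros. -/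
def aDm (n m : ℕ) : Fin n → ℤ := fun i => if (i : ℕ) < m then 1 else 0

/-- The coefficients on `C₁, …, Cₙ` of `F = 2C₀ + 2∑_{i=1}^{n-2} Cᵢ + C_{n-1} + Cₙ`
(index `i : Fin n` corresponds to `C_{i+1}`). -/
def Fcoef (n : ℕ) : Fin n → ℤ := fun i => if (i : ℕ) + 3 ≤ n then 2 else 1


open Finset

def gramN (n k : ℕ) (i j : ℕ) : ℤ :=
  if i = j then (if i = 0 then -1 else -2)
  else if (1 ≤ i ∧ j = i + 1 ∧ j < n)
      ∨ (1 ≤ j ∧ i = j + 1 ∧ i < n)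
      ∨ (i = n - 2 ∧ j = n) ∨ (j = n - 2 ∧ i = n)
      ∨ (i = 0 ∧ j = k) ∨ (j = 0 ∧ i = k) then 1
  else 0

set_option maxHeartbeats 1000000 in
lemma gram_decomp (n : ℕ) (hn : 4 ≤ n) (i j : ℕ) :
    gramN n 1 i j =
      (if i = j then (if i = 0 then (-1:ℤ) else -2) else 0)
      + (if 1 ≤ i ∧ j = i + 1 ∧ j < n then 1 else 0)
      + (if 1 ≤ j ∧ i = j + 1 ∧ i < n then 1 else 0)
      + (if i = n - 2 ∧ j = n then 1 else 0)
      + (if j = n - 2 ∧ i = n then 1 else 0)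
      + (if i = 0 ∧ j = 1 then 1 else 0)
      + (if j = 0 ∧ i = 1 then 1 else 0) := by
  unfold gramN
  by_cases hij : i = j
  · subst hij
    simp only [if_pos rfl, if_neg (show ¬(1 ≤ i ∧ i = i + 1 ∧ i < n) by omega),
      if_neg (show ¬(i = n - 2 ∧ i = n) by omega),
      if_neg (show ¬(i = 0 ∧ i = 1) by omega)]
    simp
  · rw [if_neg hij, if_neg hij]
    split_ifs <;> omega

lemma double_sum_eval (n : ℕ) (hn : 4 ≤ n) (X : ℕ → ℤ) :
    ∑ i ∈ range (n+1), ∑ j ∈ range (n+1), X i * gramN n 1 i j * X j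
    = -(X 0^2) - 2 * ∑ i ∈ range n, X (i+1)^2
      + 2 * (X 0 * X 1) + 2 * ∑ i ∈ Ico 1 (n-1), X i * X (i+1)
      + 2 * (X (n-2) * X n) := by
  have h1 : ∀ i j : ℕ, X i * (if i = j then (if i = 0 then (-1:ℤ) else -2) else 0) * X j
      = (if i = j then X i * (if i = 0 then (-1:ℤ) else -2) * X j else 0) := by
    intro i j; split_ifs <;> ring
  have h2 : ∀ i j : ℕ, X i * (if 1 ≤ i ∧ j = i + 1 ∧ j < n then (1:ℤ) else 0) * X j
      = (if j = i + 1 then (if 1 ≤ i ∧ i + 1 < n then X i * X (i+1) else 0) else 0) := by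
    intro i j
    rcases eq_or_ne j (i+1) with rfl | h
    · rw [if_pos rfl]
      by_cases hc : 1 ≤ i ∧ i + 1 < n
      · rw [if_pos hc, if_pos (show 1 ≤ i ∧ i + 1 = i + 1 ∧ i + 1 < n by omega)]; ring
      · rw [if_neg hc, if_neg (show ¬(1 ≤ i ∧ i + 1 = i + 1 ∧ i + 1 < n) by omega)]; ring
    · rw [if_neg h, if_neg (show ¬(1 ≤ i ∧ j = i + 1 ∧ j < n) by omega)]; ring
  have h3 : ∀ i j : ℕ, X i * (if 1 ≤ j ∧ i = j + 1 ∧ i < n then (1:ℤ) else 0) * X j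
      = (if i = j + 1 then (if 1 ≤ j ∧ j + 1 < n then X (j+1) * X j else 0) else 0) := by
    intro i j
    rcases eq_or_ne i (j+1) with rfl | h
    · rw [if_pos rfl]
      by_cases hc : 1 ≤ j ∧ j + 1 < n
      · rw [if_pos hc, if_pos (show 1 ≤ j ∧ j + 1 = j + 1 ∧ j + 1 < n by omega)]; ring
      · rw [if_neg hc, if_neg (show ¬(1 ≤ j ∧ j + 1 = j + 1 ∧ j + 1 < n) by omega)]; ring
    · rw [if_neg h, if_neg (show ¬(1 ≤ j ∧ i = j + 1 ∧ i < n) by omega)]; ring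
  have h4 : ∀ i j : ℕ, X i * (if i = n - 2 ∧ j = n then (1:ℤ) else 0) * X j
      = (if j = n then (if i = n - 2 then X (n-2) * X n else 0) else 0) := by
    intro i j
    by_cases hj : j = n
    · by_cases hi : i = n - 2
      · rw [if_pos hj, if_pos hi, if_pos ⟨hi, hj⟩, hi, hj]; ring
      · rw [if_pos hj, if_neg hi, if_neg (fun hc => hi hc.1)]; ring
    · rw [if_neg hj, if_neg (fun hc => hj hc.2)]; ring
  have h5 : ∀ i j : ℕ, X i * (if j = n - 2 ∧ i = n then (1:ℤ) else 0) * X j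
      = (if i = n then (if j = n - 2 then X n * X (n-2) else 0) else 0) := by
    intro i j
    by_cases hi : i = n
    · by_cases hj : j = n - 2
      · rw [if_pos hi, if_pos hj, if_pos ⟨hj, hi⟩, hi, hj]; ring
      · rw [if_pos hi, if_neg hj, if_neg (fun hc => hj hc.1)]; ring
    · rw [if_neg hi, if_neg (fun hc => hi hc.2)]; ring
  have h6 : ∀ i j : ℕ, X i * (if i = 0 ∧ j = 1 then (1:ℤ) else 0) * X j
      = (if j = 1 then (if i = 0 then X 0 * X 1 else 0) else 0) := by
    intro i j
    by_cases hj : j = 1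
    · by_cases hi : i = 0
      · rw [if_pos hj, if_pos hi, if_pos ⟨hi, hj⟩, hi, hj]; ring
      · rw [if_pos hj, if_neg hi, if_neg (fun hc => hi hc.1)]; ring
    · rw [if_neg hj, if_neg (fun hc => hj hc.2)]; ring
  have h7 : ∀ i j : ℕ, X i * (if j = 0 ∧ i = 1 then (1:ℤ) else 0) * X j
      = (if i = 1 then (if j = 0 then X 1 * X 0 else 0) else 0) := by
    intro i j
    by_cases hi : i = 1
    · by_cases hj : j = 0
      · rw [if_pos hi, if_pos hj, if_pos ⟨hj, hi⟩, hi, hj]; ring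
      · rw [if_pos hi, if_neg hj, if_neg (fun hc => hj hc.1)]; ring
    · rw [if_neg hi, if_neg (fun hc => hi hc.2)]; ring
  have expand : ∀ A B C D E F G : ℤ, ∀ i j : ℕ, X i * (A + B + C + D + E + F + G) * X j
      = X i * A * X j + X i * B * X j + X i * C * X j + X i * D * X j
        + X i * E * X j + X i * F * X j + X i * G * X j := by intros; ring
  have key : ∀ i ∈ range (n+1), ∀ j ∈ range (n+1), X i * gramN n 1 i j * X j
      = (if i = j then X i * (if i = 0 then (-1:ℤ) else -2) * X j else 0)
        + (if j = i + 1 then (if 1 ≤ i ∧ i + 1 < n then X i * X (i+1) else 0) else 0)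
        + (if i = j + 1 then (if 1 ≤ j ∧ j + 1 < n then X (j+1) * X j else 0) else 0)
        + (if j = n then (if i = n - 2 then X (n-2) * X n else 0) else 0)
        + (if i = n then (if j = n - 2 then X n * X (n-2) else 0) else 0)
        + (if j = 1 then (if i = 0 then X 0 * X 1 else 0) else 0)
        + (if i = 1 then (if j = 0 then X 1 * X 0 else 0) else 0) := by
    intro i _ j _
    rw [gram_decomp n hn i j, expand, h1, h2, h3, h4, h5, h6, h7]
  rw [sum_congr rfl (fun i hi => sum_congr rfl (fun j hj => key i hi j hj))]
  simp only [sum_add_distrib]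
  have E1 : ∑ i ∈ range (n+1), ∑ j ∈ range (n+1),
      (if i = j then X i * (if i = 0 then (-1:ℤ) else -2) * X j else 0)
      = -(X 0^2) - 2 * ∑ i ∈ range n, X (i+1)^2 := by
    have inner : ∀ i ∈ range (n+1), (∑ j ∈ range (n+1),
        (if i = j then X i * (if i = 0 then (-1:ℤ) else -2) * X j else 0))
        = X i * (if i = 0 then (-1:ℤ) else -2) * X i := by
      intro i hi
      rw [Finset.sum_ite_eq (range (n+1)) i (fun j => X i * (if i = 0 then (-1:ℤ) else -2) * X j),
        if_pos hi]
    rw [sum_congr rfl inner, Finset.sum_range_succ']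
    have : ∀ i ∈ range n, X (i+1) * (if i + 1 = 0 then (-1:ℤ) else -2) * X (i+1)
        = -2 * X (i+1)^2 := by
      intro i _; rw [if_neg (Nat.succ_ne_zero i)]; ring
    rw [sum_congr rfl this, if_pos rfl, ← Finset.mul_sum]
    ring
  have E2 : ∑ i ∈ range (n+1), ∑ j ∈ range (n+1),
      (if j = i + 1 then (if 1 ≤ i ∧ i + 1 < n then X i * X (i+1) else 0) else 0)
      = ∑ i ∈ Ico 1 (n-1), X i * X (i+1) := by
    have inner : ∀ i ∈ range (n+1), (∑ j ∈ range (n+1),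
        (if j = i + 1 then (if 1 ≤ i ∧ i + 1 < n then X i * X (i+1) else 0) else 0))
        = (if 1 ≤ i ∧ i + 1 < n then X i * X (i+1) else 0) := by
      intro i _
      rw [Finset.sum_ite_eq' (range (n+1)) (i+1)
        (fun _ => if 1 ≤ i ∧ i + 1 < n then X i * X (i+1) else 0)]
      simp only [mem_range]
      split_ifs <;> first | rfl | (exfalso; omega)
    rw [sum_congr rfl inner, ← Finset.sum_filter]
    congr 1
    ext x
    simp only [mem_filter, mem_range, mem_Ico]
    omega
  have E3 : ∑ i ∈ range (n+1), ∑ j ∈ range (n+1),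
      (if i = j + 1 then (if 1 ≤ j ∧ j + 1 < n then X (j+1) * X j else 0) else 0)
      = ∑ j ∈ Ico 1 (n-1), X (j+1) * X j := by
    rw [Finset.sum_comm]
    have inner : ∀ j ∈ range (n+1), (∑ i ∈ range (n+1),
        (if i = j + 1 then (if 1 ≤ j ∧ j + 1 < n then X (j+1) * X j else 0) else 0))
        = (if 1 ≤ j ∧ j + 1 < n then X (j+1) * X j else 0) := by
      intro j _
      rw [Finset.sum_ite_eq' (range (n+1)) (j+1)
        (fun _ => if 1 ≤ j ∧ j + 1 < n then X (j+1) * X j else 0)]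
      simp only [mem_range]
      split_ifs <;> first | rfl | (exfalso; omega)
    rw [sum_congr rfl inner, ← Finset.sum_filter]
    congr 1
    ext x
    simp only [mem_filter, mem_range, mem_Ico]
    omega
  have E4 : ∑ i ∈ range (n+1), ∑ j ∈ range (n+1),
      (if j = n then (if i = n - 2 then X (n-2) * X n else 0) else 0)
      = X (n-2) * X n := by
    have inner : ∀ i ∈ range (n+1), (∑ j ∈ range (n+1),
        (if j = n then (if i = n - 2 then X (n-2) * X n else 0) else 0))
        = (if i = n - 2 then X (n-2) * X n else 0) := by
      intro i _
      rw [Finset.sum_ite_eq' (range (n+1)) n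
        (fun _ => if i = n - 2 then X (n-2) * X n else 0), if_pos (by simp)]
    rw [sum_congr rfl inner,
      Finset.sum_ite_eq' (range (n+1)) (n-2) (fun _ => X (n-2) * X n),
      if_pos (by simp)]
  have E5 : ∑ i ∈ range (n+1), ∑ j ∈ range (n+1),
      (if i = n then (if j = n - 2 then X n * X (n-2) else 0) else 0)
      = X n * X (n-2) := by
    rw [Finset.sum_comm]
    have inner : ∀ j ∈ range (n+1), (∑ i ∈ range (n+1),
        (if i = n then (if j = n - 2 then X n * X (n-2) else 0) else 0))
        = (if j = n - 2 then X n * X (n-2) else 0) := by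
      intro j _
      rw [Finset.sum_ite_eq' (range (n+1)) n
        (fun _ => if j = n - 2 then X n * X (n-2) else 0), if_pos (by simp)]
    rw [sum_congr rfl inner,
      Finset.sum_ite_eq' (range (n+1)) (n-2) (fun _ => X n * X (n-2)),
      if_pos (by simp)]
  have E6 : ∑ i ∈ range (n+1), ∑ j ∈ range (n+1),
      (if j = 1 then (if i = 0 then X 0 * X 1 else 0) else 0)
      = X 0 * X 1 := by
    have inner : ∀ i ∈ range (n+1), (∑ j ∈ range (n+1),
        (if j = 1 then (if i = 0 then X 0 * X 1 else 0) else 0))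
        = (if i = 0 then X 0 * X 1 else 0) := by
      intro i _
      rw [Finset.sum_ite_eq' (range (n+1)) 1
        (fun _ => if i = 0 then X 0 * X 1 else 0), if_pos (by simp; omega)]
    rw [sum_congr rfl inner,
      Finset.sum_ite_eq' (range (n+1)) 0 (fun _ => X 0 * X 1),
      if_pos (by simp)]
  have E7 : ∑ i ∈ range (n+1), ∑ j ∈ range (n+1),
      (if i = 1 then (if j = 0 then X 1 * X 0 else 0) else 0)
      = X 1 * X 0 := by
    rw [Finset.sum_comm]
    have inner : ∀ j ∈ range (n+1), (∑ i ∈ range (n+1),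
        (if i = 1 then (if j = 0 then X 1 * X 0 else 0) else 0))
        = (if j = 0 then X 1 * X 0 else 0) := by
      intro j _
      rw [Finset.sum_ite_eq' (range (n+1)) 1
        (fun _ => if j = 0 then X 1 * X 0 else 0), if_pos (by simp; omega)]
    rw [sum_congr rfl inner,
      Finset.sum_ite_eq' (range (n+1)) 0 (fun _ => X 1 * X 0),
      if_pos (by simp)]
  have Ecomm : ∑ j ∈ Ico 1 (n-1), X (j+1) * X j = ∑ j ∈ Ico 1 (n-1), X j * X (j+1) :=
    sum_congr rfl (fun j _ => mul_comm _ _)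
  rw [E1, E2, E3, E4, E5, E6, E7, Ecomm]
  ring

lemma gramD_eq (n k : ℕ) (i j : Fin (n+1)) : gramD n k i j = gramN n k (i:ℕ) (j:ℕ) := by
  unfold gramD gramN
  simp only [Fin.ext_iff]

/-- extension of coefficient tuple by leading 1 -/
def extX (A : ℕ → ℤ) : ℕ → ℤ := fun i => if i = 0 then 1 else A (i - 1)

lemma extX_zero (A : ℕ → ℤ) : extX A 0 = 1 := rfl

lemma extX_succ (A : ℕ → ℤ) (i : ℕ) : extX A (i+1) = A i := by
  simp [extX]

def sosN (n : ℕ) (A : ℕ → ℤ) : ℤ :=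
  (A 0 - 1)^2 + (∑ k ∈ Ico 1 (n-2), (A k - A (k-1))^2)
    + (A (n-2) + A (n-1) - A (n-3))^2 + (A (n-1) - A (n-2))^2

lemma sos_eval (n : ℕ) (hn : 4 ≤ n) (A : ℕ → ℤ) :
    -1 - 2 * (∑ i ∈ range n, A i ^ 2) + 2 * A 0
      + 2 * (∑ i ∈ range (n-2), A i * A (i+1)) + 2 * (A (n-3) * A (n-1))
    = - sosN n A := by
  obtain ⟨p, rfl⟩ : ∃ p, n = p + 4 := ⟨n - 4, by omega⟩
  have e1 : p + 4 - 2 = p + 2 := by omega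
  have e2 : p + 4 - 3 = p + 1 := by omega
  have e3 : p + 4 - 1 = p + 3 := by omega
  unfold sosN
  rw [e1, e2, e3]
  have r1 : ∑ k ∈ Ico 1 (p+2), (A k - A (k-1))^2
      = ∑ k ∈ range (p+1), (A (k+1) - A k)^2 := by
    rw [Finset.sum_Ico_eq_sum_range]
    refine sum_congr (by norm_num) (fun k _ => ?_)
    have h1 : 1 + k = k + 1 := by omega
    rw [h1, Nat.add_sub_cancel]
  rw [r1]
  have r2 : ∑ k ∈ range (p+1), (A (k+1) - A k)^2
      = (∑ k ∈ range (p+1), A (k+1)^2) + (∑ k ∈ range (p+1), A k^2)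
        - 2 * ∑ k ∈ range (p+1), A k * A (k+1) := by
    rw [show (∑ k ∈ range (p+1), (A (k+1) - A k)^2)
        = ∑ k ∈ range (p+1), (A (k+1)^2 + A k^2 - 2*(A k * A (k+1))) from
      sum_congr rfl (fun k _ => by ring)]
    rw [Finset.sum_sub_distrib, Finset.sum_add_distrib, ← Finset.mul_sum]
  have r3 : ∑ k ∈ range (p+1), A (k+1)^2 = (∑ k ∈ range (p+2), A k^2) - A 0^2 := by
    rw [Finset.sum_range_succ' (fun k => A k^2) (p+1)]; ring
  have r4 : ∑ k ∈ range (p+1), A k^2 = (∑ k ∈ range (p+2), A k^2) - A (p+1)^2 := by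
    rw [Finset.sum_range_succ (fun k => A k^2) (p+1)]; ring
  have r5 : ∑ i ∈ range (p+4), A i^2
      = (∑ k ∈ range (p+2), A k^2) + A (p+2)^2 + A (p+3)^2 := by
    rw [show p+4 = (p+3)+1 from rfl, Finset.sum_range_succ (fun k => A k^2) (p+3),
      show p+3 = (p+2)+1 from rfl, Finset.sum_range_succ (fun k => A k^2) (p+2)]
  have r6 : ∑ i ∈ range (p+2), A i * A (i+1)
      = (∑ k ∈ range (p+1), A k * A (k+1)) + A (p+1) * A (p+2) :=
    Finset.sum_range_succ _ (p+1)
  rw [r2, r3, r4, r5, r6]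
  ring

lemma qform_eq_s8 (n : ℕ) (hn : 4 ≤ n) (a : Fin n → ℤ) :
    qform (gramD n 1) (lD n a) (lD n a)
      = - sosN n (fun i => if h : i < n then a ⟨i, h⟩ else 0) := by
  set A : ℕ → ℤ := fun i => if h : i < n then a ⟨i, h⟩ else 0 with hA
  set X : ℕ → ℤ := extX A with hX
  have hx : ∀ i : Fin (n+1), lD n a i = X (i : ℕ) := by
    intro i
    refine Fin.cases ?_ ?_ i
    · simp [lD, hX, extX]
    · intro k
      have h1 : lD n a k.succ = a k := by simp [lD]
      rw [h1]
      have h2 : ((k.succ : Fin (n+1)) : ℕ) = (k : ℕ) + 1 := rfl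
      rw [h2, hX, extX_succ, hA]
      simp [k.isLt]
  have step1 : qform (gramD n 1) (lD n a) (lD n a)
      = ∑ i ∈ range (n+1), ∑ j ∈ range (n+1), X i * gramN n 1 i j * X j := by
    rw [qform]
    have inner : ∀ i : Fin (n+1),
        (∑ j : Fin (n+1), lD n a i * gramD n 1 i j * lD n a j)
        = ∑ j ∈ range (n+1), X (i:ℕ) * gramN n 1 (i:ℕ) j * X j := by
      intro i
      rw [← Fin.sum_univ_eq_sum_range (fun j => X (i:ℕ) * gramN n 1 (i:ℕ) j * X j) (n+1)]
      exact Finset.sum_congr rfl (fun j _ => by rw [hx i, hx j, gramD_eq])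
    rw [Finset.sum_congr rfl (fun i (_ : i ∈ Finset.univ) => inner i),
      Fin.sum_univ_eq_sum_range (fun i => ∑ j ∈ range (n+1), X i * gramN n 1 i j * X j) (n+1)]
  rw [step1, double_sum_eval n hn X]
  have hX0 : X 0 = 1 := rfl
  have hXs : ∀ i, X (i+1) = A i := fun i => extX_succ A i
  have s1 : ∑ i ∈ range n, X (i+1)^2 = ∑ i ∈ range n, A i ^ 2 :=
    sum_congr rfl (fun i _ => by rw [hXs])
  have s2 : ∑ i ∈ Ico 1 (n-1), X i * X (i+1) = ∑ i ∈ range (n-2), A i * A (i+1) := by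
    rw [Finset.sum_Ico_eq_sum_range]
    have hn2 : n - 1 - 1 = n - 2 := by omega
    rw [hn2]
    refine sum_congr rfl (fun i _ => ?_)
    have h1 : 1 + i = i + 1 := by omega
    rw [h1]
    simp only [hXs]
  have s3 : X (n-2) = A (n-3) := by
    have : n - 2 = (n - 3) + 1 := by omega
    rw [this, hXs]
  have s4 : X n = A (n-1) := by
    have h : n = (n - 1) + 1 := by omega
    conv_lhs => rw [h]
    exact hXs (n-1)
  have s5 : X 1 = A 0 := hXs 0
  rw [s1, s2, s3, s4, s5, hX0, ← sos_eval n hn A]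
  ring

def aDmN (m : ℕ) : ℕ → ℤ := fun i => if i < m then 1 else 0
def FN (n : ℕ) : ℕ → ℤ := fun i => if i + 3 ≤ n then 2 else 1

lemma sosN_congr (n : ℕ) (hn : 4 ≤ n) {A B : ℕ → ℤ} (h : ∀ i < n, A i = B i) :
    sosN n A = sosN n B := by
  unfold sosN
  have hs : ∑ k ∈ Ico 1 (n-2), (A k - A (k-1))^2
      = ∑ k ∈ Ico 1 (n-2), (B k - B (k-1))^2 := by
    refine sum_congr rfl (fun k hk => ?_)
    rw [mem_Ico] at hk
    rw [h k (by omega), h (k-1) (by omega)]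
  rw [hs, h 0 (by omega), h (n-2) (by omega), h (n-1) (by omega), h (n-3) (by omega)]

lemma sos_aDm (n m : ℕ) (hn : 4 ≤ n) (hm : m ≤ n - 1) : sosN n (aDmN m) = 1 := by
  obtain ⟨p, rfl⟩ : ∃ p, n = p + 4 := ⟨n - 4, by omega⟩
  have hm' : m ≤ p + 3 := by omega
  unfold sosN aDmN
  have e1 : p + 4 - 2 = p + 2 := by omega
  have e2 : p + 4 - 3 = p + 1 := by omega
  have e3 : p + 4 - 1 = p + 3 := by omega
  rw [e1, e2, e3]
  have hT : ∑ k ∈ Ico 1 (p+2), ((if k < m then (1:ℤ) else 0) - (if k-1 < m then 1 else 0))^2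
      = if m ∈ Ico 1 (p+2) then 1 else 0 := by
    rw [show (∑ k ∈ Ico 1 (p+2), ((if k < m then (1:ℤ) else 0) - (if k-1 < m then 1 else 0))^2)
        = ∑ k ∈ Ico 1 (p+2), (if k = m then (1:ℤ) else 0) from
      sum_congr rfl (fun k hk => by
        rw [mem_Ico] at hk
        split_ifs <;> first | omega | norm_num)]
    exact Finset.sum_ite_eq' _ m (fun _ => 1)
  rw [hT]
  simp only [Finset.mem_Ico]
  split_ifs <;> first | omega | norm_num

lemma sos_Fm (n m : ℕ) (hn : 4 ≤ n) (hm : m ≤ n - 1) :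
    sosN n (fun i => FN n i - aDmN m i) = 1 := by
  obtain ⟨p, rfl⟩ : ∃ p, n = p + 4 := ⟨n - 4, by omega⟩
  have hm' : m ≤ p + 3 := by omega
  unfold sosN aDmN FN
  have e1 : p + 4 - 2 = p + 2 := by omega
  have e2 : p + 4 - 3 = p + 1 := by omega
  have e3 : p + 4 - 1 = p + 3 := by omega
  rw [e1, e2, e3]
  have hT : ∑ k ∈ Ico 1 (p+2),
      (((if k + 3 ≤ p + 4 then (2:ℤ) else 1) - (if k < m then (1:ℤ) else 0))
        - ((if k - 1 + 3 ≤ p + 4 then (2:ℤ) else 1) - (if k-1 < m then 1 else 0)))^2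
      = if m ∈ Ico 1 (p+2) then 1 else 0 := by
    rw [show (∑ k ∈ Ico 1 (p+2),
        (((if k + 3 ≤ p + 4 then (2:ℤ) else 1) - (if k < m then (1:ℤ) else 0))
        - ((if k - 1 + 3 ≤ p + 4 then (2:ℤ) else 1) - (if k-1 < m then 1 else 0)))^2)
        = ∑ k ∈ Ico 1 (p+2), (if k = m then (1:ℤ) else 0) from
      sum_congr rfl (fun k hk => by
        rw [mem_Ico] at hk
        split_ifs <;> first | omega | norm_num)]
    exact Finset.sum_ite_eq' _ m (fun _ => 1)
  rw [hT]
  simp only [Finset.mem_Ico]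
  split_ifs <;> first | omega | norm_num

lemma chain_from (A : ℕ → ℤ) (s t : ℕ) (h : ∀ k, s < k → k ≤ t → A k = A (k-1)) :
    ∀ k, s ≤ k → k ≤ t → A k = A s := by
  intro k
  induction k with
  | zero =>
    intro h1 _
    have : s = 0 := by omega
    rw [this]
  | succ k ih =>
    intro h1 h2
    rcases Nat.lt_or_ge k s with hlt | hge
    · have : s = k + 1 := by omega
      rw [this]
    · rw [h (k+1) (by omega) h2]
      simp only [Nat.add_sub_cancel]
      exact ih hge (by omega)

lemma sum_sq_one {s : Finset ℕ} {f : ℕ → ℤ} (hnn : ∀ k ∈ s, 0 ≤ f k)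
    (h : ∑ k ∈ s, f k = 1) :
    ∃ k₀ ∈ s, f k₀ = 1 ∧ ∀ k ∈ s, k ≠ k₀ → f k = 0 := by
  have hex : ∃ k₀ ∈ s, 0 < f k₀ := by
    by_contra hc
    push_neg at hc
    have hle : ∑ k ∈ s, f k ≤ 0 := Finset.sum_nonpos hc
    omega
  obtain ⟨k₀, hk₀s, hk₀⟩ := hex
  have hsplit : f k₀ + ∑ k ∈ s.erase k₀, f k = 1 := by
    rw [Finset.add_sum_erase s f hk₀s]; exact h
  have herasenn : 0 ≤ ∑ k ∈ s.erase k₀, f k :=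
    Finset.sum_nonneg fun k hk => hnn k (Finset.mem_of_mem_erase hk)
  have hf1 : f k₀ = 1 := by omega
  have hz : ∑ k ∈ s.erase k₀, f k = 0 := by omega
  have hzero := (Finset.sum_eq_zero_iff_of_nonneg
    (fun k hk => hnn k (Finset.mem_of_mem_erase hk))).mp hz
  exact ⟨k₀, hk₀s, hf1, fun k hk hne => hzero k (Finset.mem_erase.mpr ⟨hne, hk⟩)⟩

lemma sq_eq_one' (x : ℤ) (h : x^2 = 1) : x = 1 ∨ x = -1 := by
  have h' : (x - 1) * (x + 1) = 0 := by linear_combination h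
  rcases mul_eq_zero.mp h' with h2 | h2 <;> omega

lemma forward (n : ℕ) (hn : 4 ≤ n) (A : ℕ → ℤ) (hpos : ∀ i, 0 ≤ A i)
    (h : sosN n A = 1) :
    ∃ m ≤ n - 1, (∀ i < n, A i = aDmN m i) ∨ (∀ i < n, A i = FN n i - aDmN m i) := by
  obtain ⟨p, rfl⟩ : ∃ p, n = p + 4 := ⟨n - 4, by omega⟩
  unfold sosN at h
  rw [show p+4-2 = p+2 by omega, show p+4-3 = p+1 by omega, show p+4-1 = p+3 by omega] at h
  have hTnn : (0:ℤ) ≤ ∑ k ∈ Ico 1 (p+2), (A k - A (k-1))^2 :=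
    Finset.sum_nonneg fun k _ => sq_nonneg _
  have h0nn := sq_nonneg (A 0 - 1)
  have h2nn := sq_nonneg (A (p+2) + A (p+3) - A (p+1))
  have h3nn := sq_nonneg (A (p+3) - A (p+2))
  set t0 := (A 0 - 1)^2 with ht0
  set T := ∑ k ∈ Ico 1 (p+2), (A k - A (k-1))^2 with hT
  set t2 := (A (p+2) + A (p+3) - A (p+1))^2 with ht2
  set t3 := (A (p+3) - A (p+2))^2 with ht3
  have key : (t0 = 1 ∧ T = 0 ∧ t2 = 0 ∧ t3 = 0)
      ∨ (T = 1 ∧ t0 = 0 ∧ t2 = 0 ∧ t3 = 0)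
      ∨ (t2 = 1 ∧ t0 = 0 ∧ T = 0 ∧ t3 = 0)
      ∨ (t3 = 1 ∧ t0 = 0 ∧ T = 0 ∧ t2 = 0) := by omega
  have FNv1 : ∀ i, i ≤ p + 1 → FN (p+4) i = 2 := fun i hi => by
    unfold FN; rw [if_pos (by omega)]
  have FNv2 : FN (p+4) (p+2) = 1 := by unfold FN; rw [if_neg (by omega)]
  have FNv3 : FN (p+4) (p+3) = 1 := by unfold FN; rw [if_neg (by omega)]
  -- turn T = 0 into chain equalities
  have chainT : T = 0 → ∀ k ≤ p + 1, A k = A 0 := by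
    intro hT0
    have hz := (Finset.sum_eq_zero_iff_of_nonneg
      (fun k (_ : k ∈ Ico 1 (p+2)) => sq_nonneg (A k - A (k-1)))).mp (by rw [← hT]; exact hT0)
    refine fun k hk => chain_from A 0 (p+1) (fun k h1 h2 => ?_) k (by omega) hk
    have := sq_eq_zero_iff.mp (hz k (mem_Ico.mpr ⟨by omega, by omega⟩))
    omega
  rcases key with ⟨c1, cT, c2, c3⟩ | ⟨cT, c1, c2, c3⟩ | ⟨c2, c1, cT, c3⟩ | ⟨c3, c1, cT, c2⟩
  -- Case 1 : (A 0 - 1)^2 = 1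
  · rw [ht0] at c1
    rw [ht2] at c2; rw [ht3] at c3
    have hall := chainT cT
    have e2 : A (p+2) + A (p+3) = A (p+1) := by have := sq_eq_zero_iff.mp c2; omega
    have e3 : A (p+3) = A (p+2) := by have := sq_eq_zero_iff.mp c3; omega
    have hp1 : A (p+1) = A 0 := hall (p+1) le_rfl
    rcases sq_eq_one' _ c1 with hA0 | hA0
    · -- A 0 = 2 : F - l⁰
      have hA0' : A 0 = 2 := by omega
      refine ⟨0, by omega, Or.inr ?_⟩
      intro i hi
      have hz : aDmN 0 i = 0 := by unfold aDmN; rw [if_neg (by omega)]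
      rw [hz]
      have hi3 : i ≤ p+1 ∨ i = p+2 ∨ i = p+3 := by omega
      rcases hi3 with hi3 | rfl | rfl
      · rw [FNv1 i hi3, hall i hi3]; omega
      · rw [FNv2]; have := hpos (p+2); have := hpos (p+3); omega
      · rw [FNv3]; have := hpos (p+2); have := hpos (p+3); omega
    · -- A 0 = 0 : l⁰
      have hA0' : A 0 = 0 := by omega
      refine ⟨0, by omega, Or.inl ?_⟩
      intro i hi
      have hz : aDmN 0 i = 0 := by unfold aDmN; rw [if_neg (by omega)]
      rw [hz]
      have hi3 : i ≤ p+1 ∨ i = p+2 ∨ i = p+3 := by omega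
      rcases hi3 with hi3 | rfl | rfl
      · rw [hall i hi3]; omega
      · have := hpos (p+2); have := hpos (p+3); omega
      · have := hpos (p+2); have := hpos (p+3); omega
  -- Case 2 : T = 1
  · rw [ht0] at c1; rw [ht2] at c2; rw [ht3] at c3
    have hA0 : A 0 = 1 := by have := sq_eq_zero_iff.mp c1; omega
    have e2 : A (p+2) + A (p+3) = A (p+1) := by have := sq_eq_zero_iff.mp c2; omega
    have e3 : A (p+3) = A (p+2) := by have := sq_eq_zero_iff.mp c3; omega
    obtain ⟨k₀, hk₀mem, hk₀1, hk₀z⟩ := sum_sq_one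
      (fun k (_ : k ∈ Ico 1 (p+2)) => sq_nonneg (A k - A (k-1))) (by rw [← hT]; exact cT)
    rw [mem_Ico] at hk₀mem
    have hpre : ∀ k ≤ k₀ - 1, A k = A 0 := by
      refine fun k hk => chain_from A 0 (k₀ - 1) (fun k h1 h2 => ?_) k (by omega) hk
      have := sq_eq_zero_iff.mp (hk₀z k (mem_Ico.mpr ⟨by omega, by omega⟩) (by omega))
      omega
    have hsuf : ∀ k, k₀ ≤ k → k ≤ p+1 → A k = A k₀ := by
      refine chain_from A k₀ (p+1) (fun k h1 h2 => ?_)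
      have := sq_eq_zero_iff.mp (hk₀z k (mem_Ico.mpr ⟨by omega, by omega⟩) (by omega))
      omega
    have hkpred : A (k₀ - 1) = 1 := by rw [hpre (k₀ - 1) le_rfl]; exact hA0
    have hp1 : A (p+1) = A k₀ := hsuf (p+1) (by omega) le_rfl
    rcases sq_eq_one' _ hk₀1 with hd | hd
    · -- A k₀ = 2 : F - l^(k₀)
      have hk2 : A k₀ = 2 := by omega
      refine ⟨k₀, by omega, Or.inr ?_⟩
      intro i hi
      unfold aDmN
      have hi3 : i ≤ p+1 ∨ i = p+2 ∨ i = p+3 := by omega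
      rcases hi3 with hi3 | rfl | rfl
      · rw [FNv1 i hi3]
        rcases Nat.lt_or_ge i k₀ with hik | hik
        · rw [if_pos hik, hpre i (by omega)]; omega
        · rw [if_neg (by omega), hsuf i hik hi3]; omega
      · rw [FNv2, if_neg (by omega)]; omega
      · rw [FNv3, if_neg (by omega)]; omega
    · -- A k₀ = 0 : l^(k₀)
      have hk2 : A k₀ = 0 := by omega
      refine ⟨k₀, by omega, Or.inl ?_⟩
      intro i hi
      unfold aDmN
      have hi3 : i ≤ p+1 ∨ i = p+2 ∨ i = p+3 := by omega
      rcases hi3 with hi3 | rfl | rfl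
      · rcases Nat.lt_or_ge i k₀ with hik | hik
        · rw [if_pos hik, hpre i (by omega)]; omega
        · rw [if_neg (by omega), hsuf i hik hi3]; omega
      · rw [if_neg (by omega)]; have := hpos (p+2); have := hpos (p+3); omega
      · rw [if_neg (by omega)]; have := hpos (p+2); have := hpos (p+3); omega
  -- Case 3 : fork sum term = 1
  · rw [ht0] at c1; rw [ht2] at c2; rw [ht3] at c3
    have hA0 : A 0 = 1 := by have := sq_eq_zero_iff.mp c1; omega
    have hall := chainT cT
    have e3 : A (p+3) = A (p+2) := by have := sq_eq_zero_iff.mp c3; omega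
    have hp1 : A (p+1) = 1 := by rw [hall (p+1) le_rfl]; exact hA0
    rcases sq_eq_one' _ c2 with hd | hd
    · -- A(p+2) = A(p+3) = 1 : F - l^(p+2)
      refine ⟨p+2, by omega, Or.inr ?_⟩
      intro i hi
      unfold aDmN
      have hi3 : i ≤ p+1 ∨ i = p+2 ∨ i = p+3 := by omega
      rcases hi3 with hi3 | rfl | rfl
      · rw [FNv1 i hi3, if_pos (by omega), hall i hi3]; omega
      · rw [FNv2, if_neg (by omega)]; omega
      · rw [FNv3, if_neg (by omega)]; omega
    · -- A(p+2) = A(p+3) = 0 : l^(p+2)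
      refine ⟨p+2, by omega, Or.inl ?_⟩
      intro i hi
      unfold aDmN
      have hi3 : i ≤ p+1 ∨ i = p+2 ∨ i = p+3 := by omega
      rcases hi3 with hi3 | rfl | rfl
      · rw [if_pos (by omega), hall i hi3]; omega
      · rw [if_neg (by omega)]; omega
      · rw [if_neg (by omega)]; omega
  -- Case 4 : last term = 1
  · rw [ht0] at c1; rw [ht2] at c2; rw [ht3] at c3
    have hA0 : A 0 = 1 := by have := sq_eq_zero_iff.mp c1; omega
    have hall := chainT cT
    have e2 : A (p+2) + A (p+3) = A (p+1) := by have := sq_eq_zero_iff.mp c2; omega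
    have hp1 : A (p+1) = 1 := by rw [hall (p+1) le_rfl]; exact hA0
    rcases sq_eq_one' _ c3 with hd | hd
    · -- A(p+2) = 0, A(p+3) = 1 : F - l^(p+3)
      refine ⟨p+3, by omega, Or.inr ?_⟩
      intro i hi
      unfold aDmN
      have hi3 : i ≤ p+1 ∨ i = p+2 ∨ i = p+3 := by omega
      rcases hi3 with hi3 | rfl | rfl
      · rw [FNv1 i hi3, if_pos (by omega), hall i hi3]; omega
      · rw [FNv2, if_pos (by omega)]; omega
      · rw [FNv3, if_neg (by omega)]; omega
    · -- A(p+2) = 1, A(p+3) = 0 : l^(p+3)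
      refine ⟨p+3, by omega, Or.inl ?_⟩
      intro i hi
      unfold aDmN
      have hi3 : i ≤ p+1 ∨ i = p+2 ∨ i = p+3 := by omega
      rcases hi3 with hi3 | rfl | rfl
      · rw [if_pos (by omega), hall i hi3]; omega
      · rw [if_pos (by omega)]; omega
      · rw [if_neg (by omega)]; omega

lemma aDm_inj (n : ℕ) {m1 m2 : ℕ} (h1 : m1 < n) (h2 : m2 < n)
    (h : aDm n m1 = aDm n m2) : m1 = m2 := by
  by_contra hne
  rcases Nat.lt_or_ge m1 m2 with hlt | hge
  · have hc : (if m1 < m1 then (1:ℤ) else 0) = (if m1 < m2 then 1 else 0) :=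
      congrFun h ⟨m1, by omega⟩
    rw [if_neg (by omega), if_pos hlt] at hc
    omega
  · have hlt : m2 < m1 := by omega
    have hc : (if m2 < m1 then (1:ℤ) else 0) = (if m2 < m2 then 1 else 0) :=
      congrFun h ⟨m2, by omega⟩
    rw [if_pos hlt, if_neg (by omega)] at hc
    omega

/-- in the `(Dₙ, C₁)` lattice, with `l⁽ᵐ⁾ := C₀ + ∑_{i=1}^m Cᵢ` (`0 ≤ m ≤ n-1`)
and `F := 2C₀ + 2∑_{i=1}^{n-2} Cᵢ + C_{n-1} + Cₙ`, the set `I` consists exactly of the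
classes `l⁽ᵐ⁾` together with the classes `F - l⁽ᵐ⁾` (identified with their coefficient
tuples); in particular `|I| = 2n`. -/
theorem stmt8 (n : ℕ) (hn : 4 ≤ n) :
    ID n 1 = {a : Fin n → ℤ | ∃ m ≤ n - 1,
        a = aDm n m ∨ a = fun i => Fcoef n i - aDm n m i}
    ∧ (ID n 1).ncard = 2 * n := by
  have hset : ID n 1 = {a : Fin n → ℤ | ∃ m ≤ n - 1,
      a = aDm n m ∨ a = fun i => Fcoef n i - aDm n m i} := by
    ext a
    simp only [ID, Set.mem_setOf_eq]
    constructor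
    · rintro ⟨hpos, hq⟩
      have hq' : sosN n (fun i => if h : i < n then a ⟨i, h⟩ else 0) = 1 := by
        have h1 := qform_eq_s8 n hn a
        omega
      have hApos : ∀ i, 0 ≤ (fun i => if h : i < n then a ⟨i, h⟩ else 0) i := by
        intro i; dsimp only; split_ifs
        exacts [hpos _, le_refl 0]
      obtain ⟨m, hm, hc | hc⟩ := forward n hn _ hApos hq'
      · refine ⟨m, hm, Or.inl (funext fun i => ?_)⟩
        have h2 := hc i.val i.isLt
        rw [dif_pos i.isLt] at h2
        exact h2
      · refine ⟨m, hm, Or.inr (funext fun i => ?_)⟩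
        have h2 := hc i.val i.isLt
        rw [dif_pos i.isLt] at h2
        exact h2
    · rintro ⟨m, hm, rfl | rfl⟩
      · refine ⟨fun i => ?_, ?_⟩
        · dsimp [aDm]; split_ifs <;> norm_num
        · rw [qform_eq_s8 n hn]
          have hcong : sosN n (fun i => if h : i < n then aDm n m ⟨i, h⟩ else 0)
              = sosN n (aDmN m) :=
            sosN_congr n hn (fun i hi => by rw [dif_pos hi]; rfl)
          rw [hcong, sos_aDm n m hn hm]
      · refine ⟨fun i => ?_, ?_⟩
        · dsimp [Fcoef, aDm]; split_ifs <;> norm_num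
        · rw [qform_eq_s8 n hn]
          have hcong : sosN n (fun i => if h : i < n then
                Fcoef n ⟨i, h⟩ - aDm n m ⟨i, h⟩ else 0)
              = sosN n (fun i => FN n i - aDmN m i) :=
            sosN_congr n hn (fun i hi => by rw [dif_pos hi]; rfl)
          rw [hcong, sos_Fm n m hn hm]
  refine ⟨hset, ?_⟩
  rw [hset]
  have himg : {a : Fin n → ℤ | ∃ m ≤ n - 1,
      a = aDm n m ∨ a = fun i => Fcoef n i - aDm n m i}
      = ↑((Finset.range (2*n)).image
          (fun j => if j < n then aDm n j else fun i => Fcoef n i - aDm n (j - n) i)) := by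
    ext a
    simp only [Finset.coe_image, Set.mem_image, Finset.mem_coe, Finset.mem_range,
      Set.mem_setOf_eq]
    constructor
    · rintro ⟨m, hm, h | h⟩
      · exact ⟨m, by omega, by rw [if_pos (by omega)]; exact h.symm⟩
      · refine ⟨n + m, by omega, ?_⟩
        rw [if_neg (by omega), Nat.add_sub_cancel_left]
        exact h.symm
    · rintro ⟨j, hj, rfl⟩
      by_cases hcase : j < n
      · exact ⟨j, by omega, Or.inl (by rw [if_pos hcase])⟩
      · exact ⟨j - n, by omega, Or.inr (by rw [if_neg hcase])⟩
  have hinj : Set.InjOn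
      (fun j => if j < n then aDm n j else fun i => Fcoef n i - aDm n (j - n) i)
      ↑(Finset.range (2*n)) := by
    intro j1 hj1 j2 hj2 heq
    simp only [Finset.coe_range, Set.mem_Iio] at hj1 hj2
    dsimp only at heq
    by_cases h1 : j1 < n <;> by_cases h2 : j2 < n
    · rw [if_pos h1, if_pos h2] at heq
      exact aDm_inj n h1 h2 heq
    · rw [if_pos h1, if_neg h2] at heq
      exfalso
      have hc : (if (n-1 : ℕ) < j1 then (1:ℤ) else 0)
          = (if n-1+3 ≤ n then (2:ℤ) else 1) - (if n-1 < j2 - n then 1 else 0) :=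
        congrFun heq ⟨n-1, by omega⟩
      rw [if_neg (by omega), if_neg (by omega), if_neg (by omega)] at hc
      omega
    · rw [if_neg h1, if_pos h2] at heq
      exfalso
      have hc : (if n-1+3 ≤ n then (2:ℤ) else 1) - (if n-1 < j1 - n then 1 else 0)
          = (if (n-1 : ℕ) < j2 then (1:ℤ) else 0) :=
        congrFun heq ⟨n-1, by omega⟩
      rw [if_neg (by omega), if_neg (by omega), if_neg (by omega)] at hc
      omega
    · rw [if_neg h1, if_neg h2] at heq
      have heq2 : aDm n (j1 - n) = aDm n (j2 - n) := by
        funext i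
        have hc := congrFun heq i
        have hc2 : Fcoef n i - aDm n (j1 - n) i = Fcoef n i - aDm n (j2 - n) i := hc
        omega
      have := aDm_inj n (by omega) (by omega) heq2
      omega
  rw [himg, Set.ncard_coe_finset, Finset.card_image_of_injOn hinj, Finset.card_range]
end

section
/- In the (D_n, C_1) lattice with I = { a ∈ ℤ^n : a_i ≥ 0 and ⟨l(a), l(a)⟩ = −1 } and F := 2C_0 + 2Σ_{i=1}^{n−2} C_i + C_{n−1} + C_n: (i) for distinct a, a' ∈ I, ⟨l(a), l(a')⟩ ∈ {0, 1}; (ii) for each a ∈ I there is exactly one a' ∈ I with ⟨l(a), l(a')⟩ = 1, and for this a' one has l(a) + l(a') = F; (iii) ⟨F, F⟩ = 0, ⟨F, C_i⟩ = 0 for every 1 ≤ i ≤ n, and ⟨F, l(a)⟩ = 0 for every a ∈ I. -/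
/-- `F = 2C₀ + 2∑_{i=1}^{n-2} Cᵢ + C_{n-1} + Cₙ`, as a coordinate vector. -/
def Fvec (n : ℕ) : Fin (n + 1) → ℤ :=
  fun i => if (i : ℕ) = 0 then 2 else if (i : ℕ) + 2 ≤ n then 2 else 1

namespace Stmt9Aux

/-- Nat-level version of the Gram matrix. -/
def G (n i j : ℕ) : ℤ :=
  if i = j then (if i = 0 then -1 else -2)
  else if (1 ≤ i ∧ j = i + 1 ∧ j < n) ∨ (1 ≤ j ∧ i = j + 1 ∧ i < n)
      ∨ (i = n - 2 ∧ j = n) ∨ (j = n - 2 ∧ i = n)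
      ∨ (i = 0 ∧ j = 1) ∨ (j = 0 ∧ i = 1) then 1
  else 0

lemma gram_eq (n : ℕ) (i j : Fin (n+1)) : gramD n 1 i j = G n (i : ℕ) (j : ℕ) := by
  simp only [gramD, G, Fin.ext_iff]

/-- extension of a coordinate vector to ℕ. -/
def E (m : ℕ) (x : Fin (m+5) → ℤ) (i : ℕ) : ℤ := if h : i < m+5 then x ⟨i, h⟩ else 0

lemma E_val (m : ℕ) (x : Fin (m+5) → ℤ) (i : Fin (m+5)) : E m x (i : ℕ) = x i := by
  simp [E, i.isLt]

/-- The closed "rows" form of the quadratic form. -/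
def rows (m : ℕ) (X Y : ℕ → ℤ) : ℤ :=
  X 0 * (Y 1 - Y 0)
  + (∑ i ∈ Finset.range (m+1), X (i+1) * (Y i - 2*Y (i+1) + Y (i+2)))
  + X (m+2) * (Y (m+1) - 2*Y (m+2) + Y (m+3) + Y (m+4))
  + X (m+3) * (Y (m+2) - 2*Y (m+3))
  + X (m+4) * (Y (m+2) - 2*Y (m+4))

lemma sum_ite₁ (m : ℕ) (b : ℕ) (hb : b < m+5) (f : ℕ → ℤ) :
    ∑ j ∈ Finset.range (m+5), (if b = j then f j else 0) = f b := by
  rw [Finset.sum_ite_eq (Finset.range (m+5)) b f, if_pos (Finset.mem_range.2 hb)]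

lemma row0 (m : ℕ) (X Y : ℕ → ℤ) :
    ∑ j ∈ Finset.range (m+5), X 0 * G (m+4) 0 j * Y j = X 0 * (Y 1 - Y 0) := by
  have key : ∀ j ∈ Finset.range (m+5), X 0 * G (m+4) 0 j * Y j =
      (if 0 = j then (-1) * (X 0 * Y j) else 0) + (if 1 = j then X 0 * Y j else 0) := by
    intro j hj
    simp only [Finset.mem_range] at hj
    unfold G
    split_ifs <;>
      first
        | omega
        | ring1
        | (simp only [false_and, and_false, or_false, false_or] at *; omega)
        | exact (‹False›).elim
  rw [Finset.sum_congr rfl key, Finset.sum_add_distrib,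
    sum_ite₁ m 0 (by omega), sum_ite₁ m 1 (by omega)]
  ring

lemma rowmid (m : ℕ) (X Y : ℕ → ℤ) (i : ℕ) (hi : i ≤ m) :
    ∑ j ∈ Finset.range (m+5), X (i+1) * G (m+4) (i+1) j * Y j
      = X (i+1) * (Y i - 2*Y (i+1) + Y (i+2)) := by
  have key : ∀ j ∈ Finset.range (m+5), X (i+1) * G (m+4) (i+1) j * Y j =
      (if i = j then X (i+1) * Y j else 0) + (if i+1 = j then (-2) * (X (i+1) * Y j) else 0)
      + (if i+2 = j then X (i+1) * Y j else 0) := by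
    intro j hj
    simp only [Finset.mem_range] at hj
    unfold G
    split_ifs <;>
      first
        | omega
        | ring1
        | (simp only [false_and, and_false, or_false, false_or] at *; omega)
        | exact (‹False›).elim
  rw [Finset.sum_congr rfl key, Finset.sum_add_distrib, Finset.sum_add_distrib,
    sum_ite₁ m i (by omega), sum_ite₁ m (i+1) (by omega), sum_ite₁ m (i+2) (by omega)]
  ring

lemma rowA (m : ℕ) (X Y : ℕ → ℤ) :
    ∑ j ∈ Finset.range (m+5), X (m+2) * G (m+4) (m+2) j * Y j
      = X (m+2) * (Y (m+1) - 2*Y (m+2) + Y (m+3) + Y (m+4)) := by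
  have key : ∀ j ∈ Finset.range (m+5), X (m+2) * G (m+4) (m+2) j * Y j =
      (if m+1 = j then X (m+2) * Y j else 0) + (if m+2 = j then (-2) * (X (m+2) * Y j) else 0)
      + (if m+3 = j then X (m+2) * Y j else 0) + (if m+4 = j then X (m+2) * Y j else 0) := by
    intro j hj
    simp only [Finset.mem_range] at hj
    unfold G
    split_ifs <;>
      first
        | omega
        | ring1
        | (simp only [false_and, and_false, or_false, false_or] at *; omega)
        | exact (‹False›).elim
  rw [Finset.sum_congr rfl key, Finset.sum_add_distrib, Finset.sum_add_distrib,
    Finset.sum_add_distrib, sum_ite₁ m (m+1) (by omega), sum_ite₁ m (m+2) (by omega),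
    sum_ite₁ m (m+3) (by omega), sum_ite₁ m (m+4) (by omega)]
  ring

lemma rowB (m : ℕ) (X Y : ℕ → ℤ) :
    ∑ j ∈ Finset.range (m+5), X (m+3) * G (m+4) (m+3) j * Y j
      = X (m+3) * (Y (m+2) - 2*Y (m+3)) := by
  have key : ∀ j ∈ Finset.range (m+5), X (m+3) * G (m+4) (m+3) j * Y j =
      (if m+2 = j then X (m+3) * Y j else 0) + (if m+3 = j then (-2) * (X (m+3) * Y j) else 0) := by
    intro j hj
    simp only [Finset.mem_range] at hj
    unfold G
    split_ifs <;>
      first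
        | omega
        | ring1
        | (simp only [false_and, and_false, or_false, false_or] at *; omega)
        | exact (‹False›).elim
  rw [Finset.sum_congr rfl key, Finset.sum_add_distrib,
    sum_ite₁ m (m+2) (by omega), sum_ite₁ m (m+3) (by omega)]
  ring

lemma rowC (m : ℕ) (X Y : ℕ → ℤ) :
    ∑ j ∈ Finset.range (m+5), X (m+4) * G (m+4) (m+4) j * Y j
      = X (m+4) * (Y (m+2) - 2*Y (m+4)) := by
  have key : ∀ j ∈ Finset.range (m+5), X (m+4) * G (m+4) (m+4) j * Y j =
      (if m+2 = j then X (m+4) * Y j else 0) + (if m+4 = j then (-2) * (X (m+4) * Y j) else 0) := by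
    intro j hj
    simp only [Finset.mem_range] at hj
    unfold G
    split_ifs <;>
      first
        | omega
        | ring1
        | (simp only [false_and, and_false, or_false, false_or] at *; omega)
        | exact (‹False›).elim
  rw [Finset.sum_congr rfl key, Finset.sum_add_distrib,
    sum_ite₁ m (m+2) (by omega), sum_ite₁ m (m+4) (by omega)]
  ring

lemma rows_nat (m : ℕ) (X Y : ℕ → ℤ) :
    ∑ i ∈ Finset.range (m+5), ∑ j ∈ Finset.range (m+5), X i * G (m+4) i j * Y j
      = rows m X Y := by
  rw [Finset.sum_range_succ, Finset.sum_range_succ, Finset.sum_range_succ,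
    Finset.sum_range_succ' (fun i => ∑ j ∈ Finset.range (m+5), X i * G (m+4) i j * Y j) (m+1)]
  rw [row0, rowA, rowB, rowC,
    Finset.sum_congr rfl (fun i hi => rowmid m X Y i (by
      simp only [Finset.mem_range] at hi; omega))]
  unfold rows; ring

lemma qform_rows (m : ℕ) (x y : Fin (m+4+1) → ℤ) :
    qform (gramD (m+4) 1) x y = rows m (E m x) (E m y) := by
  rw [← rows_nat m (E m x) (E m y), qform]
  calc ∑ i : Fin (m+4+1), ∑ j : Fin (m+4+1), x i * gramD (m+4) 1 i j * y j
      = ∑ i : Fin (m+5), ∑ j ∈ Finset.range (m+5), E m x (i : ℕ) * G (m+4) (i : ℕ) j * E m y j := by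
        apply Finset.sum_congr rfl
        intro i _
        rw [← Fin.sum_univ_eq_sum_range (fun j => E m x (i : ℕ) * G (m+4) (i : ℕ) j * E m y j) (m+5)]
        apply Finset.sum_congr rfl
        intro j _
        rw [E_val, E_val, gram_eq]
    _ = ∑ i ∈ Finset.range (m+5), ∑ j ∈ Finset.range (m+5), E m x i * G (m+4) i j * E m y j :=
        Fin.sum_univ_eq_sum_range (fun i => ∑ j ∈ Finset.range (m+5), E m x i * G (m+4) i j * E m y j) (m+5)


/-- Master sum-of-squares identity. -/
lemma master (m : ℕ) (X : ℕ → ℤ) :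
    rows m X X = -X 0^2 + 2*X 0*X 1
      - (X 1^2 + (∑ j ∈ Finset.range (m+1), (X (j+2) - X (j+1))^2)
        + (X (m+3) + X (m+4) - X (m+2))^2 + (X (m+4) - X (m+3))^2) := by
  induction m with
  | zero => simp only [rows, Finset.sum_range_one, Finset.sum_range_succ]; ring
  | succ m ih =>
    simp only [rows, Finset.sum_range_succ] at ih ⊢
    linear_combination ih

lemma one_le_sq (z : ℤ) (hz : z ≠ 0) : 1 ≤ z^2 := by
  rcases lt_or_gt_of_ne hz with h | h <;> nlinarith

lemma sq_le_one_bounds (z : ℤ) (h : z^2 ≤ 1) : -1 ≤ z ∧ z ≤ 1 := by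
  constructor <;> nlinarith [sq_nonneg (z-1), sq_nonneg (z+1)]

lemma pair_zero (u v : ℤ) (h : u^2 + v^2 ≤ 1) : u = 0 ∨ v = 0 := by
  rcases eq_or_ne u 0 with h' | h'
  · exact Or.inl h'
  rcases eq_or_ne v 0 with h'' | h''
  · exact Or.inr h''
  exfalso
  have := one_le_sq u h'
  have := one_le_sq v h''
  linarith

lemma E_zero (m : ℕ) (x : Fin (m+4+1) → ℤ) : E m x 0 = x 0 := by
  simpa using E_val m x 0

lemma neg_semidef (m : ℕ) (x : Fin (m+4+1) → ℤ) (h0 : x 0 = 0) :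
    qform (gramD (m+4) 1) x x ≤ 0 := by
  rw [qform_rows, master]
  rw [E_zero m x, h0]
  have hs : 0 ≤ ∑ j ∈ Finset.range (m+1), (E m x (j+2) - E m x (j+1))^2 :=
    Finset.sum_nonneg fun j _ => sq_nonneg _
  nlinarith [sq_nonneg (E m x 1), sq_nonneg (E m x (m+3) + E m x (m+4) - E m x (m+2)),
    sq_nonneg (E m x (m+4) - E m x (m+3))]

lemma zero_of_qq_zero (m : ℕ) (x : Fin (m+4+1) → ℤ) (h0 : x 0 = 0)
    (hq : qform (gramD (m+4) 1) x x = 0) : x = 0 := by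
  rw [qform_rows, master, E_zero m x, h0] at hq
  set X := E m x with hXdef
  have hs : 0 ≤ ∑ j ∈ Finset.range (m+1), (X (j+2) - X (j+1))^2 :=
    Finset.sum_nonneg fun j _ => sq_nonneg _
  have h1 : X 1 = 0 := by
    nlinarith [sq_nonneg (X 1), sq_nonneg (X (m+3) + X (m+4) - X (m+2)),
      sq_nonneg (X (m+4) - X (m+3))]
  have hsum0 : ∑ j ∈ Finset.range (m+1), (X (j+2) - X (j+1))^2 = 0 := by
    nlinarith [sq_nonneg (X 1), sq_nonneg (X (m+3) + X (m+4) - X (m+2)),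
      sq_nonneg (X (m+4) - X (m+3))]
  have hterm : ∀ j ∈ Finset.range (m+1), (X (j+2) - X (j+1))^2 = 0 :=
    (Finset.sum_eq_zero_iff_of_nonneg fun j _ => sq_nonneg _).1 hsum0
  have hchain : ∀ t, t ≤ m+1 → X (t+1) = 0 := by
    intro t
    induction t with
    | zero => intro _; exact h1
    | succ t iht =>
      intro ht
      have hc := hterm t (Finset.mem_range.2 (by omega))
      have h2 := pow_eq_zero_iff (n := 2) (by norm_num) |>.1 hc
      have h3 := iht (by omega)
      exact (show X (t+2) = 0 by omega : X (t+1+1) = 0)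
  have hD1 : X (m+3) + X (m+4) - X (m+2) = 0 := by
    nlinarith [sq_nonneg (X 1), sq_nonneg (X (m+4) - X (m+3)),
      sq_nonneg (X (m+3) + X (m+4) - X (m+2))]
  have hD2 : X (m+4) - X (m+3) = 0 := by
    nlinarith [sq_nonneg (X 1), sq_nonneg (X (m+3) + X (m+4) - X (m+2)),
      sq_nonneg (X (m+4) - X (m+3))]
  have hX0 : X 0 = 0 := by rw [hXdef, E_zero m x, h0]
  have hall : ∀ j, j ≤ m+4 → X j = 0 := by
    intro j hj
    rcases (by omega : j = 0 ∨ (1 ≤ j ∧ j ≤ m+2) ∨ j = m+3 ∨ j = m+4) with h | ⟨h1', h2'⟩ | h | h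
    · rw [h]; exact hX0
    · have h4 := hchain (j-1) (by omega)
      have hj1 : j - 1 + 1 = j := by omega
      rwa [hj1] at h4
    · have h2 : X (m+2) = 0 := hchain (m+1) (by omega)
      rw [h]; omega
    · have h2 : X (m+2) = 0 := hchain (m+1) (by omega)
      rw [h]; omega
  funext i
  have h5 := hall (i : ℕ) (by omega)
  rw [hXdef, E_val] at h5
  simpa using h5

end Stmt9Aux

namespace Stmt9Aux

lemma qform_add_left {N : ℕ} (g : Fin N → Fin N → ℤ) (x y z : Fin N → ℤ) :
    qform g (x + y) z = qform g x z + qform g y z := by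
  simp [qform, add_mul, Finset.sum_add_distrib]

lemma qform_sub_left {N : ℕ} (g : Fin N → Fin N → ℤ) (x y z : Fin N → ℤ) :
    qform g (x - y) z = qform g x z - qform g y z := by
  simp [qform, sub_mul, Finset.sum_sub_distrib]

lemma qform_add_right {N : ℕ} (g : Fin N → Fin N → ℤ) (x y z : Fin N → ℤ) :
    qform g x (y + z) = qform g x y + qform g x z := by
  simp [qform, mul_add, Finset.sum_add_distrib]

lemma qform_sub_right {N : ℕ} (g : Fin N → Fin N → ℤ) (x y z : Fin N → ℤ) :
    qform g x (y - z) = qform g x y - qform g x z := by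
  simp [qform, mul_sub, Finset.sum_sub_distrib]

lemma gram_symm (n k : ℕ) (i j : Fin (n+1)) : gramD n k i j = gramD n k j i := by
  unfold gramD
  rcases eq_or_ne i j with h | h
  · rw [h]
  · rw [if_neg h, if_neg (Ne.symm h)]
    by_cases hc : (1 ≤ (i : ℕ) ∧ (j : ℕ) = (i : ℕ) + 1 ∧ (j : ℕ) < n)
      ∨ (1 ≤ (j : ℕ) ∧ (i : ℕ) = (j : ℕ) + 1 ∧ (i : ℕ) < n)
      ∨ ((i : ℕ) = n - 2 ∧ (j : ℕ) = n) ∨ ((j : ℕ) = n - 2 ∧ (i : ℕ) = n)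
      ∨ ((i : ℕ) = 0 ∧ (j : ℕ) = k) ∨ ((j : ℕ) = 0 ∧ (i : ℕ) = k)
    · rw [if_pos hc, if_pos (by omega)]
    · rw [if_neg hc, if_neg (by omega)]

lemma qform_comm (n k : ℕ) (x y : Fin (n+1) → ℤ) :
    qform (gramD n k) x y = qform (gramD n k) y x := by
  unfold qform
  rw [Finset.sum_comm]
  apply Finset.sum_congr rfl
  intro j _
  apply Finset.sum_congr rfl
  intro i _
  rw [gram_symm]
  ring

lemma E_Fvec (m : ℕ) (j : ℕ) (hj : j ≤ m+4) :
    E m (Fvec (m+4)) j = if j ≤ m+2 then 2 else 1 := by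
  unfold E
  rw [dif_pos (by omega : j < m+5)]
  unfold Fvec
  simp only [Fin.val_mk]
  split_ifs <;> first | rfl | omega

lemma F_right (m : ℕ) (x : Fin (m+4+1) → ℤ) :
    qform (gramD (m+4) 1) x (Fvec (m+4)) = 0 := by
  rw [qform_rows, rows]
  have hsum : ∑ i ∈ Finset.range (m+1),
      E m x (i+1) * (E m (Fvec (m+4)) i - 2*E m (Fvec (m+4)) (i+1) + E m (Fvec (m+4)) (i+2)) = 0 := by
    apply Finset.sum_eq_zero
    intro i hi
    simp only [Finset.mem_range] at hi
    rw [E_Fvec m i (by omega), E_Fvec m (i+1) (by omega), E_Fvec m (i+2) (by omega),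
      if_pos (by omega : i ≤ m+2), if_pos (by omega : i+1 ≤ m+2), if_pos (by omega : i+2 ≤ m+2)]
    ring
  rw [hsum, E_Fvec m 0 (by omega), E_Fvec m 1 (by omega), E_Fvec m (m+1) (by omega),
    E_Fvec m (m+2) (by omega), E_Fvec m (m+3) (by omega), E_Fvec m (m+4) (by omega),
    if_pos (by omega : 0 ≤ m+2), if_pos (by omega : 1 ≤ m+2), if_pos (by omega : m+1 ≤ m+2),
    if_pos (le_refl (m+2)), if_neg (by omega : ¬ m+3 ≤ m+2), if_neg (by omega : ¬ m+4 ≤ m+2)]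
  ring

lemma F_left (m : ℕ) (y : Fin (m+4+1) → ℤ) :
    qform (gramD (m+4) 1) (Fvec (m+4)) y = 0 := by
  rw [qform_comm]
  exact F_right m y

lemma lD_zero (n : ℕ) (a : Fin n → ℤ) : lD n a 0 = 1 := by
  simp [lD]

lemma lD_succ (n : ℕ) (a : Fin n → ℤ) (i : Fin n) : lD n a i.succ = a i := by
  simp [lD]

lemma Fvec_zero (m : ℕ) : Fvec (m+4) 0 = 2 := by simp [Fvec]

lemma E_lD_succ (m : ℕ) (a : Fin (m+4) → ℤ) (j : ℕ) (hj : j < m+4) :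
    E m (lD (m+4) a) (j+1) = a ⟨j, hj⟩ := by
  simp only [E, lD]
  rw [dif_pos (by omega : j+1 < m+5)]
  have h : (⟨j+1, by omega⟩ : Fin (m+5)) = Fin.succ ⟨j, hj⟩ := rfl
  rw [h, Fin.cons_succ]

lemma E_lD_zero (m : ℕ) (a : Fin (m+4) → ℤ) : E m (lD (m+4) a) 0 = 1 := by
  rw [E_zero, lD_zero]

/-- complement coefficients -/
def compl (m : ℕ) (a : Fin (m+4) → ℤ) : Fin (m+4) → ℤ :=
  fun i => (if (i : ℕ) + 3 ≤ m+4 then 2 else 1) - a i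

lemma lD_compl (m : ℕ) (a : Fin (m+4) → ℤ) :
    lD (m+4) (compl m a) = Fvec (m+4) - lD (m+4) a := by
  funext i
  refine Fin.cases ?_ ?_ i
  · simp [lD, Fvec, compl]
  · intro j
    simp only [Pi.sub_apply, lD, Fin.cons_succ, compl, Fvec, Fin.val_succ]
    rw [if_neg (by omega : ¬ ((j : ℕ) + 1 = 0))]

lemma key_ineq (m : ℕ) (a : Fin (m+4) → ℤ)
    (hq : qform (gramD (m+4) 1) (lD (m+4) a) (lD (m+4) a) = -1) :
    ∀ t, t ≤ m+1 →
      (E m (lD (m+4) a) (t+1) - E m (lD (m+4) a) 1)^2 + (E m (lD (m+4) a) 1 - 1)^2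
      + (∑ j ∈ Finset.Ico t (m+1), (E m (lD (m+4) a) (j+2) - E m (lD (m+4) a) (j+1))^2)
      + (E m (lD (m+4) a) (m+3) + E m (lD (m+4) a) (m+4) - E m (lD (m+4) a) (m+2))^2
      + (E m (lD (m+4) a) (m+4) - E m (lD (m+4) a) (m+3))^2 ≤ 1 := by
  rw [qform_rows, master, E_lD_zero] at hq
  set X := E m (lD (m+4) a) with hXdef
  have base : (X 1 - 1)^2 + (∑ j ∈ Finset.range (m+1), (X (j+2) - X (j+1))^2)
      + (X (m+3) + X (m+4) - X (m+2))^2 + (X (m+4) - X (m+3))^2 = 1 := by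
    linear_combination (-1 : ℤ) * hq
  intro t
  induction t with
  | zero =>
    intro _
    rw [← Finset.range_eq_Ico]
    have e0 : (X (0+1) - X 1)^2 = 0 := by norm_num
    rw [e0]
    linarith [base]
  | succ t iht =>
    intro ht
    have h1 := iht (by omega)
    rw [Finset.sum_eq_sum_Ico_succ_bot (by omega : t < m+1)] at h1
    have hR : 0 ≤ ∑ j ∈ Finset.Ico (t+1) (m+1), (X (j+2) - X (j+1))^2 :=
      Finset.sum_nonneg fun j _ => sq_nonneg _
    have hf := sq_nonneg (X 1 - 1)
    have hD1 := sq_nonneg (X (m+3) + X (m+4) - X (m+2))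
    have hD2 := sq_nonneg (X (m+4) - X (m+3))
    have hAC : (X (t+1) - X 1) * (X (t+2) - X (t+1)) = 0 := by
      rcases pair_zero (X (t+1) - X 1) (X (t+2) - X (t+1)) (by linarith) with h | h <;>
        rw [h] <;> ring
    have hsq : (X (t+2) - X 1)^2 = (X (t+1) - X 1)^2 + (X (t+2) - X (t+1))^2 := by
      linear_combination 2 * hAC
    show (X (t+1+1) - X 1)^2 + (X 1 - 1)^2
      + (∑ j ∈ Finset.Ico (t+1) (m+1), (X (j+2) - X (j+1))^2)
      + (X (m+3) + X (m+4) - X (m+2))^2 + (X (m+4) - X (m+3))^2 ≤ 1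
    have hidx : (X (t+1+1) - X 1)^2 = (X (t+2) - X 1)^2 := rfl
    rw [hidx, hsq]
    linarith [h1]

lemma bounds (m : ℕ) (a : Fin (m+4) → ℤ)
    (hq : qform (gramD (m+4) 1) (lD (m+4) a) (lD (m+4) a) = -1) :
    ∀ i : Fin (m+4), a i ≤ (if (i : ℕ) + 3 ≤ m+4 then 2 else 1) := by
  intro i
  set X := E m (lD (m+4) a) with hXdef
  have hai : a i = X ((i : ℕ) + 1) := by
    rw [hXdef, E_lD_succ m a (i : ℕ) i.isLt]
  by_cases hcase : (i : ℕ) + 3 ≤ m+4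
  · rw [if_pos hcase]
    have hk := key_ineq m a hq (i : ℕ) (by omega)
    have hR : 0 ≤ ∑ j ∈ Finset.Ico (i : ℕ) (m+1), (X (j+2) - X (j+1))^2 :=
      Finset.sum_nonneg fun j _ => sq_nonneg _
    have hD1 := sq_nonneg (X (m+3) + X (m+4) - X (m+2))
    have hD2 := sq_nonneg (X (m+4) - X (m+3))
    have h1 : (X ((i : ℕ)+1) - X 1)^2 + (X 1 - 1)^2 ≤ 1 := by linarith
    have hb1 := sq_le_one_bounds (X ((i : ℕ)+1) - X 1) (by nlinarith [sq_nonneg (X 1 - 1)])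
    have hb2 := sq_le_one_bounds (X 1 - 1) (by nlinarith [sq_nonneg (X ((i : ℕ)+1) - X 1)])
    have hp := pair_zero _ _ h1
    omega
  · rw [if_neg hcase]
    have hk := key_ineq m a hq (m+1) (le_refl (m+1))
    rw [Finset.Ico_self, Finset.sum_empty] at hk
    have e2 : (X (m+1+1) - X 1)^2 = (X (m+2) - X 1)^2 := rfl
    rw [e2] at hk
    have s1 := sq_nonneg (X (m+2) - X 1)
    have s2 := sq_nonneg (X 1 - 1)
    have s3 := sq_nonneg (X (m+3) + X (m+4) - X (m+2))
    have s4 := sq_nonneg (X (m+4) - X (m+3))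
    have p12 := pair_zero (X (m+2) - X 1) (X 1 - 1) (by linarith)
    have p13 := pair_zero (X (m+2) - X 1) (X (m+3) + X (m+4) - X (m+2)) (by linarith)
    have p14 := pair_zero (X (m+2) - X 1) (X (m+4) - X (m+3)) (by linarith)
    have p23 := pair_zero (X 1 - 1) (X (m+3) + X (m+4) - X (m+2)) (by linarith)
    have p24 := pair_zero (X 1 - 1) (X (m+4) - X (m+3)) (by linarith)
    have p34 := pair_zero (X (m+3) + X (m+4) - X (m+2)) (X (m+4) - X (m+3)) (by linarith)
    have b1 := sq_le_one_bounds (X (m+2) - X 1) (by linarith)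
    have b2 := sq_le_one_bounds (X 1 - 1) (by linarith)
    have b3 := sq_le_one_bounds (X (m+3) + X (m+4) - X (m+2)) (by linarith)
    have b4 := sq_le_one_bounds (X (m+4) - X (m+3)) (by linarith)
    have hiv : (i : ℕ) + 1 = m+3 ∨ (i : ℕ) + 1 = m+4 := by
      have := i.isLt
      omega
    rcases hiv with h | h <;> rw [hai, h] <;> omega

end Stmt9Aux

/-- in the `(Dₙ, C₁)` lattice: (i) `⟨l(a), l(a')⟩ ∈ {0,1}` for distinct
`a, a' ∈ I`; (ii) each `a ∈ I` has exactly one `a' ∈ I` with `⟨l(a), l(a')⟩ = 1`, and for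
this `a'` one has `l(a) + l(a') = F`; (iii) `⟨F,F⟩ = 0`, `⟨F,Cᵢ⟩ = 0` for `1 ≤ i ≤ n`,
and `⟨F, l(a)⟩ = 0` for every `a ∈ I`. -/
theorem stmt9 (n : ℕ) (hn : 4 ≤ n) :
    (∀ a ∈ ID n 1, ∀ a' ∈ ID n 1, a ≠ a' →
      qform (gramD n 1) (lD n a) (lD n a') ∈ ({0, 1} : Set ℤ))
    ∧ (∀ a ∈ ID n 1, ∃! a' : Fin n → ℤ,
        a' ∈ ID n 1 ∧ qform (gramD n 1) (lD n a) (lD n a') = 1)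
    ∧ (∀ a ∈ ID n 1, ∀ a' ∈ ID n 1,
        qform (gramD n 1) (lD n a) (lD n a') = 1 → lD n a + lD n a' = Fvec n)
    ∧ qform (gramD n 1) (Fvec n) (Fvec n) = 0
    ∧ (∀ i : Fin (n + 1), 1 ≤ (i : ℕ) →
        qform (gramD n 1) (Fvec n) (Pi.single i 1) = 0)
    ∧ ∀ a ∈ ID n 1, qform (gramD n 1) (Fvec n) (lD n a) = 0 := by
  obtain ⟨m, rfl⟩ : ∃ m, n = m + 4 := ⟨n - 4, by omega⟩
  have hF_r : ∀ x, qform (gramD (m+4) 1) x (Fvec (m+4)) = 0 := Stmt9Aux.F_right m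
  have hF_l : ∀ y, qform (gramD (m+4) 1) (Fvec (m+4)) y = 0 := Stmt9Aux.F_left m
  have hexp_sub : ∀ x y : Fin (m+4+1) → ℤ,
      qform (gramD (m+4) 1) (x - y) (x - y)
        = qform (gramD (m+4) 1) x x - 2 * qform (gramD (m+4) 1) x y
          + qform (gramD (m+4) 1) y y := by
    intro x y
    rw [Stmt9Aux.qform_sub_left, Stmt9Aux.qform_sub_right, Stmt9Aux.qform_sub_right,
      Stmt9Aux.qform_comm (m+4) 1 y x]
    ring
  have hexp_add : ∀ x y : Fin (m+4+1) → ℤ,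
      qform (gramD (m+4) 1) (x + y) (x + y)
        = qform (gramD (m+4) 1) x x + 2 * qform (gramD (m+4) 1) x y
          + qform (gramD (m+4) 1) y y := by
    intro x y
    rw [Stmt9Aux.qform_add_left, Stmt9Aux.qform_add_right, Stmt9Aux.qform_add_right,
      Stmt9Aux.qform_comm (m+4) 1 y x]
    ring
  -- fact B : pairing 1 forces the sum to be F
  have factB : ∀ a ∈ ID (m+4) 1, ∀ a' ∈ ID (m+4) 1,
      qform (gramD (m+4) 1) (lD (m+4) a) (lD (m+4) a') = 1 →
      lD (m+4) a + lD (m+4) a' = Fvec (m+4) := by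
    intro a ha a' ha' hp
    obtain ⟨ha1, ha2⟩ := ha
    obtain ⟨ha'1, ha'2⟩ := ha'
    have hv0 : (lD (m+4) a + lD (m+4) a' - Fvec (m+4)) 0 = 0 := by
      simp [Stmt9Aux.lD_zero, Stmt9Aux.Fvec_zero]
    have hqv : qform (gramD (m+4) 1) (lD (m+4) a + lD (m+4) a' - Fvec (m+4))
        (lD (m+4) a + lD (m+4) a' - Fvec (m+4)) = 0 := by
      rw [hexp_sub, hexp_add, hF_r, hF_r, ha2, ha'2, hp]
      ring
    have hv := Stmt9Aux.zero_of_qq_zero m _ hv0 hqv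
    rwa [sub_eq_zero] at hv
  -- fact A : distinct classes pair to 0 or 1
  have factA : ∀ a ∈ ID (m+4) 1, ∀ a' ∈ ID (m+4) 1, a ≠ a' →
      qform (gramD (m+4) 1) (lD (m+4) a) (lD (m+4) a') = 0 ∨
      qform (gramD (m+4) 1) (lD (m+4) a) (lD (m+4) a') = 1 := by
    intro a ha a' ha' hne
    obtain ⟨ha1, ha2⟩ := ha
    obtain ⟨ha'1, ha'2⟩ := ha'
    have hw0 : (lD (m+4) a - lD (m+4) a') 0 = 0 := by
      simp [Stmt9Aux.lD_zero]
    have hwne : lD (m+4) a - lD (m+4) a' ≠ 0 := by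
      intro h
      apply hne
      funext i
      have h2 := congrFun h i.succ
      simp only [Pi.sub_apply, Pi.zero_apply, Stmt9Aux.lD_succ, sub_eq_zero] at h2
      exact h2
    have h1 : qform (gramD (m+4) 1) (lD (m+4) a - lD (m+4) a') (lD (m+4) a - lD (m+4) a') ≤ 0 :=
      Stmt9Aux.neg_semidef m _ hw0
    have h2 : qform (gramD (m+4) 1) (lD (m+4) a - lD (m+4) a') (lD (m+4) a - lD (m+4) a') ≠ 0 :=
      fun h => hwne (Stmt9Aux.zero_of_qq_zero m _ hw0 h)
    rw [hexp_sub, ha2, ha'2] at h1 h2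
    have hv0 : (lD (m+4) a + lD (m+4) a' - Fvec (m+4)) 0 = 0 := by
      simp [Stmt9Aux.lD_zero, Stmt9Aux.Fvec_zero]
    have h3 : qform (gramD (m+4) 1) (lD (m+4) a + lD (m+4) a' - Fvec (m+4))
        (lD (m+4) a + lD (m+4) a' - Fvec (m+4)) ≤ 0 := Stmt9Aux.neg_semidef m _ hv0
    rw [hexp_sub, hexp_add, hF_r, hF_r, ha2, ha'2] at h3
    omega
  refine ⟨?_, ?_, ?_, hF_r _, fun i _ => hF_l _, fun a _ => hF_l _⟩
  · intro a ha a' ha' hne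
    rcases factA a ha a' ha' hne with h | h <;> simp [h]
  · intro a ha
    have hb := Stmt9Aux.bounds m a ha.2
    have hmem : Stmt9Aux.compl m a ∈ ID (m+4) 1 := by
      constructor
      · intro i
        have := hb i
        simp only [Stmt9Aux.compl]
        split_ifs with hc
        · rw [if_pos hc] at this; linarith
        · rw [if_neg hc] at this; linarith
      · rw [Stmt9Aux.lD_compl, hexp_sub, hF_r, hF_l, ha.2]
        ring
    have hval : qform (gramD (m+4) 1) (lD (m+4) a) (lD (m+4) (Stmt9Aux.compl m a)) = 1 := by
      rw [Stmt9Aux.lD_compl, Stmt9Aux.qform_sub_right, hF_r, ha.2]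
      ring
    refine ⟨Stmt9Aux.compl m a, ⟨hmem, hval⟩, ?_⟩
    intro b ⟨hbmem, hbval⟩
    have hs1 := factB a ha b hbmem hbval
    have hs2 := factB a ha (Stmt9Aux.compl m a) hmem hval
    have hlb : lD (m+4) b = lD (m+4) (Stmt9Aux.compl m a) := by
      have := hs1.trans hs2.symm
      exact add_left_cancel this
    funext i
    have h2 := congrFun hlb i.succ
    simpa only [Stmt9Aux.lD_succ] using h2
  · exact factB
end
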